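/- arXiv:math/0611704 — 3 statements merged into one kernel-verified Lean document; each statement's English description precedes it below -/
import Mathlib

section
/- For τ in the upper half-plane ℍ and any z ∈ ℂ with z ∉ L_τ, writing q_z = e^{2πiz}, one has δθ(z,τ) = πi·(q_z+1)/(q_z−1) − 2πi·Σ_{n≥1} ( qⁿq_z/(1−qⁿq_z) − qⁿq_z^{−1}/(1−qⁿq_z^{−1}) ), where the series on the right converges absolutely. -/
noncomputable section
open Complex Real

/-- membership in the lattice `L_τ = ℤτ + ℤ` -/
def InLattice (τ z : ℂ) : Prop := ∃ m n : ℤ, z = m * τ + n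

/-- the theta function `θ(z,τ) = (1/i)·Σ_{n∈ℤ} (−1)^n q^{(2n+1)²/8} e^{(2n+1)πiz}`,
where `q^{(2n+1)²/8} = exp(2πiτ·(2n+1)²/8)`. -/
def theta (z τ : ℂ) : ℂ :=
  (1 / I) * ∑' n : ℤ, (-1 : ℂ) ^ n *
    Complex.exp (2 * π * I * τ * (2 * n + 1) ^ 2 / 8) *
    Complex.exp ((2 * n + 1) * π * I * z)

/-- the logarithmic derivative `δθ(z,τ) = ∂_zθ(z,τ)/θ(z,τ)` -/
def dlogTheta (z τ : ℂ) : ℂ := deriv (fun w => theta w τ) z / theta z τ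

/-- the lattice point `mτ + n` attached to `p = (m,n) ∈ ℤ²` -/
def latPt (τ : ℂ) (p : ℤ × ℤ) : ℂ := p.1 * τ + p.2

/-- the Weierstrass `℘`-function of the lattice `L_τ` -/
def wp (z τ : ℂ) : ℂ :=
  1 / z ^ 2 + ∑' p : ℤ × ℤ,
    if p = (0, 0) then 0 else (1 / (z - latPt τ p) ^ 2 - 1 / latPt τ p ^ 2)

/-- the derivative `℘'(z,τ) = −2·Σ_{ω∈L_τ} 1/(z−ω)³` -/
def wpPrime (z τ : ℂ) : ℂ := ∑' p : ℤ × ℤ, -2 / (z - latPt τ p) ^ 3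

/-- the Weierstrass zeta function of the lattice `L_τ` -/
def wZeta (z τ : ℂ) : ℂ :=
  1 / z + ∑' p : ℤ × ℤ,
    if p = (0, 0) then 0
    else (1 / (z - latPt τ p) + 1 / latPt τ p + z / latPt τ p ^ 2)


namespace DTP

open Filter Topology


variable (τ : ℂ)

def qq : ℂ := cexp (2 * π * I * τ)
def xx (z : ℂ) : ℂ := cexp (2 * π * I * z)
def xxi (z : ℂ) : ℂ := cexp (-(2 * π * I * z))
def ww (z : ℂ) : ℂ := cexp (π * I * z)
def wwi (z : ℂ) : ℂ := cexp (-(π * I * z))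

lemma xxi_eq (z : ℂ) : (xx z)⁻¹ = xxi z := by rw [xx, xxi, ← Complex.exp_neg]

lemma xx_ne (z : ℂ) : xx z ≠ 0 := Complex.exp_ne_zero _
lemma qq_ne : qq τ ≠ 0 := Complex.exp_ne_zero _

lemma xx_mul_xxi (z : ℂ) : xx z * xxi z = 1 := by
  rw [xx, xxi, ← Complex.exp_add]; simp

lemma norm_qq_lt (hτ : 0 < τ.im) : ‖qq τ‖ < 1 := by
  rw [qq, Complex.norm_exp, Real.exp_lt_one_iff]
  have : (2 * ↑π * I * τ).re = -(2 * π * τ.im) := by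
    simp [Complex.mul_re, Complex.mul_im]
  rw [this]
  nlinarith [Real.pi_pos]

def InL (z : ℂ) : Prop := ∃ m n : ℤ, z = m * τ + n

lemma cancel_2piI {a b : ℂ} (h : 2 * ↑π * I * a = 2 * ↑π * I * b) : a = b :=
  mul_left_cancel₀ Complex.two_pi_I_ne_zero h

lemma not_inL_imp_ne_one (z : ℂ) (hz : ¬ InL τ z) (n : ℕ) :
    qq τ ^ (n + 1) * xx z ≠ 1 ∧ qq τ ^ (n + 1) * xxi z ≠ 1 ∧ xx z ≠ 1 := by
  refine ⟨?_, ?_, ?_⟩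
  · intro h
    rw [qq, xx, ← Complex.exp_nat_mul, ← Complex.exp_add, Complex.exp_eq_one_iff] at h
    obtain ⟨k, hk⟩ := h
    refine hz ⟨-(n+1 : ℤ), k, ?_⟩
    have h2 : ((n:ℂ)+1) * τ + z = k := by
      apply cancel_2piI; push_cast at hk ⊢; linear_combination hk
    push_cast
    linear_combination h2
  · intro h
    rw [qq, xxi, ← Complex.exp_nat_mul, ← Complex.exp_add, Complex.exp_eq_one_iff] at h
    obtain ⟨k, hk⟩ := h
    refine hz ⟨(n+1 : ℤ), -k, ?_⟩
    have h2 : ((n:ℂ)+1) * τ - z = k := by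
      apply cancel_2piI; push_cast at hk ⊢; linear_combination hk
    push_cast
    linear_combination -h2
  · intro h
    rw [xx, Complex.exp_eq_one_iff] at h
    obtain ⟨k, hk⟩ := h
    refine hz ⟨0, k, ?_⟩
    have h2 : z = k := by apply cancel_2piI; push_cast at hk ⊢; linear_combination hk
    push_cast
    linear_combination h2

lemma lattice_norm_lb (hτ : 0 < τ.im) (m n : ℤ) (h : (m : ℂ) * τ + n ≠ 0) :
    min τ.im 1 ≤ ‖(m : ℂ) * τ + n‖ := by
  rcases eq_or_ne m 0 with hm | hm
  · subst hm
    have hn : n ≠ 0 := by simpa using h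
    have : (1 : ℝ) ≤ ‖((n : ℂ))‖ := by
      rw [Complex.norm_intCast]
      exact_mod_cast Int.one_le_abs hn
    calc min τ.im 1 ≤ 1 := min_le_right _ _
      _ ≤ ‖((0:ℤ):ℂ) * τ + n‖ := by push_cast; simpa using this
  · have him : ((m:ℂ) * τ + n).im = m * τ.im := by simp
    calc min τ.im 1 ≤ τ.im := min_le_left _ _
      _ ≤ |(m:ℝ)| * τ.im := by
          nlinarith [Int.one_le_abs hm, (by exact_mod_cast Int.one_le_abs hm : (1:ℝ) ≤ |(m:ℝ)|)]
      _ = |((m:ℂ) * τ + n).im| := by rw [him, abs_mul, abs_of_pos hτ]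
      _ ≤ ‖(m:ℂ) * τ + n‖ := Complex.abs_im_le_norm _

lemma lattice_eps_pos (hτ : 0 < τ.im) : 0 < min τ.im 1 := lt_min hτ one_pos

/-- only lattice point within `min τ.im 1` of a lattice point is itself -/
lemma lattice_discrete (hτ : 0 < τ.im) {u v : ℂ} (hu : InL τ u) (hv : InL τ v)
    (h : ‖u - v‖ < min τ.im 1) : u = v := by
  obtain ⟨m, n, rfl⟩ := hu
  obtain ⟨m', n', rfl⟩ := hv
  by_contra hne
  have hd : ((m - m' : ℤ) : ℂ) * τ + ((n - n' : ℤ) : ℂ) ≠ 0 := by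
    push_cast
    intro h0
    exact hne (by linear_combination h0)
  have := lattice_norm_lb τ hτ (m - m') (n - n') hd
  have he : ((m - m' : ℤ) : ℂ) * τ + ((n - n' : ℤ) : ℂ) = (↑m * τ + ↑n) - (↑m' * τ + ↑n') := by
    push_cast; ring
  rw [he] at this
  linarith

lemma ball_lattice_free (hτ : 0 < τ.im) {z : ℂ} (hz : ¬ InL τ z) :
    ∃ ε > 0, ∀ y ∈ Metric.ball z ε, ¬ InL τ y := by
  set ε₀ := min τ.im 1 with hε₀
  have hε₀pos := lattice_eps_pos τ hτ
  by_cases hex : ∃ w, InL τ w ∧ w ∈ Metric.ball z (ε₀ / 2)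
  · obtain ⟨w, hwL, hwb⟩ := hex
    have hδ : 0 < ‖z - w‖ := by
      rw [norm_pos_iff, sub_ne_zero]
      rintro rfl; exact hz hwL
    refine ⟨min ‖z - w‖ (ε₀ / 2), lt_min hδ (by linarith), ?_⟩
    intro y hy hyL
    have hyw : ‖y - w‖ < ε₀ := by
      have h1 : ‖y - z‖ < ε₀ / 2 :=
        lt_of_lt_of_le (by simpa [Metric.mem_ball, dist_eq_norm] using hy) (min_le_right _ _)
      have h2 : ‖z - w‖ < ε₀ / 2 := by
        rw [norm_sub_rev]; simpa [Metric.mem_ball, dist_eq_norm] using hwb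
      calc ‖y - w‖ ≤ ‖y - z‖ + ‖z - w‖ := by simpa using norm_sub_le_norm_sub_add_norm_sub y z w
        _ < ε₀ := by linarith
    have : y = w := lattice_discrete τ hτ hyL hwL hyw
    subst this
    have : ‖z - y‖ < ‖z - y‖ := by
      calc ‖z - y‖ = ‖y - z‖ := by rw [norm_sub_rev]
        _ < min ‖z - y‖ (ε₀/2) := by simpa [Metric.mem_ball, dist_eq_norm] using hy
        _ ≤ ‖z - y‖ := min_le_left _ _
    exact absurd this (lt_irrefl _)
  · refine ⟨ε₀ / 2, by linarith, ?_⟩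
    intro y hy hyL
    exact hex ⟨y, hyL, by simpa [Metric.mem_ball, dist_eq_norm, norm_sub_rev] using hy⟩

lemma ball_zero_lattice (hτ : 0 < τ.im) {y : ℂ} (hy : y ∈ Metric.ball (0:ℂ) (min τ.im 1))
    (hyL : InL τ y) : y = 0 := by
  apply lattice_discrete τ hτ hyL ⟨0, 0, by simp⟩
  simpa [Metric.mem_ball, dist_eq_norm] using hy



section Products


lemma norm_prod_one_add_sub_one_le (s : Finset ℕ) (g : ℕ → ℂ) :
    ‖(∏ i ∈ s, (1 + g i)) - 1‖ ≤ Real.exp (∑ i ∈ s, ‖g i‖) - 1 := by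
  classical
  induction s using Finset.cons_induction with
  | empty => simp
  | cons a s ha ih =>
    rw [Finset.prod_cons, Finset.sum_cons]
    have hprod : (1 + g a) * (∏ i ∈ s, (1 + g i)) - 1
        = ((∏ i ∈ s, (1 + g i)) - 1) + g a + g a * ((∏ i ∈ s, (1 + g i)) - 1) := by ring
    rw [hprod]
    set A := (∏ i ∈ s, (1 + g i)) - 1
    have h1 : ‖A + g a + g a * A‖ ≤ ‖A‖ + ‖g a‖ + ‖g a‖ * ‖A‖ := by
      calc ‖A + g a + g a * A‖ ≤ ‖A + g a‖ + ‖g a * A‖ := norm_add_le _ _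
        _ ≤ (‖A‖ + ‖g a‖) + ‖g a‖ * ‖A‖ := by
            rw [norm_mul]; gcongr; exact norm_add_le _ _
    have h2 : ‖g a‖ + 1 ≤ Real.exp ‖g a‖ := Real.add_one_le_exp _
    have h3 : (1:ℝ) ≤ Real.exp (∑ i ∈ s, ‖g i‖) :=
      Real.one_le_exp (Finset.sum_nonneg fun i _ => norm_nonneg _)
    have h4 : (0:ℝ) ≤ ‖g a‖ := norm_nonneg _
    rw [Real.exp_add]
    nlinarith [ih]

lemma norm_prod_one_add_le (s : Finset ℕ) (g : ℕ → ℂ) :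
    ‖∏ i ∈ s, (1 + g i)‖ ≤ Real.exp (∑ i ∈ s, ‖g i‖) := by
  have := norm_prod_one_add_sub_one_le s g
  have h := norm_sub_norm_le (∏ i ∈ s, (1 + g i)) 1
  simp only [norm_one] at h
  linarith

lemma sum_range_pow_le {r : ℝ} (h0 : 0 ≤ r) (h1 : r < 1) (n : ℕ) :
    ∑ i ∈ Finset.range n, r ^ i ≤ 1 / (1 - r) := by
  have h : ∑ i ∈ Finset.range n, r ^ i = (1 - r ^ n) / (1 - r) := by
    rw [geom_sum_eq (by intro h; rw [h] at h1; exact lt_irrefl _ h1 : r ≠ 1)]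
    rw [div_eq_div_iff (by intro h; nlinarith [h] : r - 1 ≠ 0) (by intro h; nlinarith [h] : 1 - r ≠ 0)]
    ring
  rw [h, div_le_div_iff₀ (by linarith) (by linarith)]
  nlinarith [pow_nonneg h0 n]

lemma sum_Ico_pow_le {r C : ℝ} (h0 : 0 ≤ r) (h1 : r < 1) (hC : 0 ≤ C) (N M : ℕ) :
    ∑ i ∈ Finset.Ico N M, C * r ^ (i + 1) ≤ C * r ^ (N + 1) / (1 - r) := by
  rw [Finset.sum_Ico_eq_sum_range]
  have : ∀ k, C * r ^ (N + k + 1) = (C * r ^ (N + 1)) * r ^ k := fun k => by ring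
  simp only [this]
  rw [← Finset.mul_sum, div_eq_mul_one_div]
  exact mul_le_mul_of_nonneg_left (sum_range_pow_le h0 h1 _) (mul_nonneg hC (pow_nonneg h0 _))

end Products

def tt (n : ℕ) (z : ℂ) : ℂ := (1 - qq τ ^ (n+1) * xx z) * (1 - qq τ ^ (n+1) * xxi z)
def PP (N : ℕ) (z : ℂ) : ℂ := ∏ n ∈ Finset.range N, tt τ n z
def VV (z : ℂ) : ℂ := limUnder atTop fun N => PP τ N z

lemma re_2piI (y : ℂ) : (2 * ↑π * I * y).re = -(2 * π * y.im) := by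
  simp [Complex.mul_re, Complex.mul_im]

def Cb (z₀ : ℂ) : ℝ := 3 * (Real.exp (2 * π * (|z₀.im| + 1))) ^ 2

lemma Cb_nonneg (z₀ : ℂ) : 0 ≤ Cb z₀ := by rw [Cb]; positivity

lemma norm_xx_le {z₀ y : ℂ} (hy : y ∈ Metric.closedBall z₀ 1) :
    ‖xx y‖ ≤ Real.exp (2 * π * (|z₀.im| + 1)) ∧ ‖xxi y‖ ≤ Real.exp (2 * π * (|z₀.im| + 1)) := by
  have him : |y.im| ≤ |z₀.im| + 1 := by
    have h1 : |y.im - z₀.im| ≤ ‖y - z₀‖ := by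
      have := Complex.abs_im_le_norm (y - z₀)
      simpa [Complex.sub_im] using this
    have h2 : ‖y - z₀‖ ≤ 1 := by simpa [Metric.mem_closedBall, dist_eq_norm] using hy
    have := abs_sub_abs_le_abs_sub y.im z₀.im
    linarith [abs_sub_comm y.im z₀.im]
  constructor
  · rw [xx, Complex.norm_exp, re_2piI]
    apply Real.exp_le_exp.2
    nlinarith [Real.pi_pos, abs_nonneg y.im, neg_abs_le y.im, le_abs_self y.im]
  · rw [xxi, Complex.norm_exp]
    have : (-(2 * ↑π * I * y)).re = 2 * π * y.im := by
      rw [Complex.neg_re, re_2piI]; ring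
    rw [this]
    apply Real.exp_le_exp.2
    nlinarith [Real.pi_pos, le_abs_self y.im]

lemma one_le_D (z₀ : ℂ) : 1 ≤ Real.exp (2 * π * (|z₀.im| + 1)) := by
  apply Real.one_le_exp; positivity

lemma norm_tt_sub_one (hq1 : ‖qq τ‖ < 1) (z₀ : ℂ) {y : ℂ} (hy : y ∈ Metric.closedBall z₀ 1)
    (n : ℕ) : ‖tt τ n y - 1‖ ≤ Cb z₀ * ‖qq τ‖ ^ (n + 1) := by
  set a := qq τ ^ (n+1) with ha
  have hid : tt τ n y - 1 = -(a * xx y) - a * xxi y + a * a := by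
    rw [tt]; linear_combination (a^2) * xx_mul_xxi y
  set D := Real.exp (2 * π * (|z₀.im| + 1))
  obtain ⟨hx, hxi⟩ := norm_xx_le hy
  have hD1 : 1 ≤ D := one_le_D z₀
  have hna : ‖a‖ = ‖qq τ‖ ^ (n+1) := norm_pow _ _
  have hna1 : ‖a‖ ≤ 1 := by rw [hna]; exact pow_le_one₀ (norm_nonneg _) hq1.le
  have h0a : 0 ≤ ‖a‖ := norm_nonneg _
  calc ‖tt τ n y - 1‖ = ‖-(a * xx y) - a * xxi y + a * a‖ := by rw [hid]
    _ ≤ ‖a‖ * ‖xx y‖ + ‖a‖ * ‖xxi y‖ + ‖a‖ * ‖a‖ := by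
        calc ‖-(a * xx y) - a * xxi y + a * a‖
            ≤ ‖-(a * xx y) - a * xxi y‖ + ‖a * a‖ := norm_add_le _ _
          _ ≤ (‖a * xx y‖ + ‖a * xxi y‖) + ‖a * a‖ := by
              gcongr; exact (norm_sub_le _ _).trans (by rw [norm_neg])
          _ = ‖a‖ * ‖xx y‖ + ‖a‖ * ‖xxi y‖ + ‖a‖ * ‖a‖ := by rw [norm_mul, norm_mul, norm_mul]
    _ ≤ ‖a‖ * D + ‖a‖ * D + ‖a‖ * 1 := by gcongr
    _ ≤ Cb z₀ * ‖qq τ‖ ^ (n+1) := by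
        rw [Cb, ← hna]
        nlinarith [mul_nonneg h0a (mul_nonneg (by linarith : (0:ℝ) ≤ 3*D+1) (by linarith : (0:ℝ) ≤ D - 1))]

lemma PP_factor {N M : ℕ} (h : N ≤ M) (z : ℂ) :
    PP τ M z = PP τ N z * ∏ i ∈ Finset.Ico N M, tt τ i z := by
  rw [PP, PP, Finset.range_eq_Ico, Finset.range_eq_Ico]
  exact (Finset.prod_Ico_consecutive (fun i => tt τ i z) (Nat.zero_le N) h).symm

lemma tt_eq_one_add (n : ℕ) (z : ℂ) : tt τ n z = 1 + (tt τ n z - 1) := by ring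

lemma PP_norm_le {z : ℂ} {C : ℝ} (hq0 : 0 ≤ ‖qq τ‖) (hq1 : ‖qq τ‖ < 1) (hC0 : 0 ≤ C)
    (hC : ∀ n, ‖tt τ n z - 1‖ ≤ C * ‖qq τ‖ ^ (n + 1)) (N : ℕ) :
    ‖PP τ N z‖ ≤ Real.exp (C * ‖qq τ‖ / (1 - ‖qq τ‖)) := by
  have h1 : ‖PP τ N z‖ ≤ Real.exp (∑ i ∈ Finset.range N, ‖tt τ i z - 1‖) := by
    have := norm_prod_one_add_le (Finset.range N) (fun i => tt τ i z - 1)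
    simpa [PP, ← tt_eq_one_add] using this
  refine h1.trans (Real.exp_le_exp.2 ?_)
  calc ∑ i ∈ Finset.range N, ‖tt τ i z - 1‖ ≤ ∑ i ∈ Finset.range N, C * ‖qq τ‖ ^ (i+1) :=
        Finset.sum_le_sum fun i _ => hC i
    _ ≤ C * ‖qq τ‖ ^ (0+1) / (1 - ‖qq τ‖) := by
        rw [Finset.range_eq_Ico]; exact sum_Ico_pow_le hq0 hq1 hC0 0 N
    _ = C * ‖qq τ‖ / (1 - ‖qq τ‖) := by norm_num

lemma PP_sub_le {z : ℂ} {C : ℝ} (hq0 : 0 ≤ ‖qq τ‖) (hq1 : ‖qq τ‖ < 1) (hC0 : 0 ≤ C)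
    (hC : ∀ n, ‖tt τ n z - 1‖ ≤ C * ‖qq τ‖ ^ (n + 1)) {N M : ℕ} (h : N ≤ M) :
    ‖PP τ M z - PP τ N z‖ ≤ ‖PP τ N z‖ * (Real.exp (C * ‖qq τ‖ ^ (N+1) / (1 - ‖qq τ‖)) - 1) := by
  rw [PP_factor τ h]
  have heq : PP τ N z * (∏ i ∈ Finset.Ico N M, tt τ i z) - PP τ N z
      = PP τ N z * ((∏ i ∈ Finset.Ico N M, (1 + (tt τ i z - 1))) - 1) := by
    simp only [← tt_eq_one_add]; ring
  rw [heq, norm_mul]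
  gcongr
  · -- need a version for Ico; norm_prod_one_add_sub_one_le is for any finset ℕ
    refine (norm_prod_one_add_sub_one_le _ _).trans ?_
    have : ∑ i ∈ Finset.Ico N M, ‖tt τ i z - 1‖ ≤ C * ‖qq τ‖ ^ (N+1) / (1 - ‖qq τ‖) :=
      (Finset.sum_le_sum fun i _ => hC i).trans (sum_Ico_pow_le hq0 hq1 hC0 N M)
    have h2 := Real.exp_le_exp.2 this
    linarith
  
def bb (C r : ℝ) (N : ℕ) : ℝ := Real.exp (C * r / (1 - r)) * (Real.exp (C * r ^ (N+1) / (1 - r)) - 1)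

lemma bb_nonneg {C r : ℝ} (h0 : 0 ≤ r) (h1 : r < 1) (hC : 0 ≤ C) (N : ℕ) : 0 ≤ bb C r N := by
  have h1' : (1:ℝ) ≤ Real.exp (C * r ^ (N+1) / (1 - r)) :=
    Real.one_le_exp (div_nonneg (mul_nonneg hC (pow_nonneg h0 _)) (by linarith))
  have h2 : (0:ℝ) < Real.exp (C * r / (1-r)) := Real.exp_pos _
  rw [bb]
  nlinarith

lemma exp_tail_mono {C r : ℝ} (h0 : 0 ≤ r) (h1 : r < 1) (hC : 0 ≤ C) {N M : ℕ} (h : N ≤ M) :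
    Real.exp (C * r ^ (M+1) / (1 - r)) - 1 ≤ Real.exp (C * r ^ (N+1) / (1 - r)) - 1 := by
  have hmono : r ^ (M+1) ≤ r ^ (N+1) := pow_le_pow_of_le_one h0 h1.le (by omega)
  have h3 : C * r ^ (M+1) / (1 - r) ≤ C * r ^ (N+1) / (1 - r) := by
    have hm := mul_le_mul_of_nonneg_left hmono hC
    rw [div_le_div_iff₀ (by linarith) (by linarith)]
    nlinarith
  linarith [Real.exp_le_exp.2 h3]

lemma bb_anti {C r : ℝ} (h0 : 0 ≤ r) (h1 : r < 1) (hC : 0 ≤ C) {N M : ℕ} (h : N ≤ M) :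
    bb C r M ≤ bb C r N := by
  unfold bb
  exact mul_le_mul_of_nonneg_left (exp_tail_mono h0 h1 hC h) (Real.exp_pos _).le

lemma bb_tendsto {C r : ℝ} (h0 : 0 ≤ r) (h1 : r < 1) : Tendsto (bb C r) atTop (𝓝 0) := by
  have hp : Tendsto (fun N : ℕ => r ^ (N + 1)) atTop (𝓝 0) := by
    have := (tendsto_pow_atTop_nhds_zero_of_lt_one h0 h1).comp (tendsto_add_atTop_nat 1)
    simpa [Function.comp_def] using this
  have hc : Continuous (fun t : ℝ => Real.exp (C * r / (1-r)) * (Real.exp (C * t / (1 - r)) - 1)) := by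
    continuity
  have := (hc.tendsto 0).comp hp
  rw [show bb C r = fun N => Real.exp (C * r / (1 - r)) * (Real.exp (C * r ^ (N+1) / (1 - r)) - 1) from rfl]
  simpa [Function.comp_def, bb] using this

lemma PP_cauchy {z : ℂ} {C : ℝ} (hq0 : 0 ≤ ‖qq τ‖) (hq1 : ‖qq τ‖ < 1) (hC0 : 0 ≤ C)
    (hC : ∀ n, ‖tt τ n z - 1‖ ≤ C * ‖qq τ‖ ^ (n + 1)) :
    CauchySeq (fun N => PP τ N z) := by
  apply cauchySeq_of_le_tendsto_0 (bb C ‖qq τ‖) _ (bb_tendsto hq0 hq1)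
  intro n m N hn hm
  have key : ∀ a b : ℕ, N ≤ a → a ≤ b → dist (PP τ b z) (PP τ a z) ≤ bb C ‖qq τ‖ N := by
    intro a b ha hab
    rw [dist_eq_norm]
    refine (PP_sub_le τ hq0 hq1 hC0 hC hab).trans ?_
    rw [bb]
    have he1 : (0:ℝ) ≤ Real.exp (C * ‖qq τ‖ ^ (a+1) / (1 - ‖qq τ‖)) - 1 := by
      have hx : (0:ℝ) ≤ C * ‖qq τ‖ ^ (a+1) / (1 - ‖qq τ‖) :=
        div_nonneg (mul_nonneg hC0 (pow_nonneg hq0 _)) (by linarith)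
      linarith [Real.one_le_exp hx]
    exact mul_le_mul (PP_norm_le τ hq0 hq1 hC0 hC a) (exp_tail_mono hq0 hq1 hC0 ha)
      he1 (Real.exp_pos _).le
  rcases le_total n m with h | h
  · rw [dist_comm]; exact key n m hn h
  · exact key m n hm h

lemma VV_tendsto {z : ℂ} {C : ℝ} (hq0 : 0 ≤ ‖qq τ‖) (hq1 : ‖qq τ‖ < 1) (hC0 : 0 ≤ C)
    (hC : ∀ n, ‖tt τ n z - 1‖ ≤ C * ‖qq τ‖ ^ (n + 1)) :
    Tendsto (fun N => PP τ N z) atTop (𝓝 (VV τ z)) :=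
  (PP_cauchy τ hq0 hq1 hC0 hC).tendsto_limUnder

lemma VV_dist {z : ℂ} {C : ℝ} (hq0 : 0 ≤ ‖qq τ‖) (hq1 : ‖qq τ‖ < 1) (hC0 : 0 ≤ C)
    (hC : ∀ n, ‖tt τ n z - 1‖ ≤ C * ‖qq τ‖ ^ (n + 1)) (N : ℕ) :
    ‖VV τ z - PP τ N z‖ ≤ ‖PP τ N z‖ * (Real.exp (C * ‖qq τ‖ ^ (N+1) / (1 - ‖qq τ‖)) - 1) := by
  have h1 : Tendsto (fun M => ‖PP τ M z - PP τ N z‖) atTop (𝓝 ‖VV τ z - PP τ N z‖) :=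
    ((VV_tendsto τ hq0 hq1 hC0 hC).sub_const _).norm
  apply le_of_tendsto h1
  filter_upwards [eventually_ge_atTop N] with M hM
  exact PP_sub_le τ hq0 hq1 hC0 hC hM

lemma VV_dist' {z : ℂ} {C : ℝ} (hq0 : 0 ≤ ‖qq τ‖) (hq1 : ‖qq τ‖ < 1) (hC0 : 0 ≤ C)
    (hC : ∀ n, ‖tt τ n z - 1‖ ≤ C * ‖qq τ‖ ^ (n + 1)) (N : ℕ) :
    ‖VV τ z - PP τ N z‖ ≤ bb C ‖qq τ‖ N := by
  refine (VV_dist τ hq0 hq1 hC0 hC N).trans ?_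
  rw [bb]
  have he1 : (0:ℝ) ≤ Real.exp (C * ‖qq τ‖ ^ (N+1) / (1 - ‖qq τ‖)) - 1 := by
    have hx : (0:ℝ) ≤ C * ‖qq τ‖ ^ (N+1) / (1 - ‖qq τ‖) :=
      div_nonneg (mul_nonneg hC0 (pow_nonneg hq0 _)) (by linarith)
    linarith [Real.one_le_exp hx]
  exact mul_le_mul_of_nonneg_right (PP_norm_le τ hq0 hq1 hC0 hC N) he1



section TLUsec

lemma hTLU (hq1 : ‖qq τ‖ < 1) :
    TendstoLocallyUniformly (fun N z => PP τ N z) (VV τ) atTop := by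
  rw [Metric.tendstoLocallyUniformly_iff]
  intro ε hε x
  refine ⟨Metric.ball x 1, Metric.ball_mem_nhds x one_pos, ?_⟩
  have hq0 : 0 ≤ ‖qq τ‖ := norm_nonneg _
  filter_upwards [(bb_tendsto (C := Cb x) hq0 hq1).eventually (gt_mem_nhds hε)] with N hN y hy
  have hy' : y ∈ Metric.closedBall x 1 := Metric.ball_subset_closedBall hy
  have hC : ∀ n, ‖tt τ n y - 1‖ ≤ Cb x * ‖qq τ‖ ^ (n+1) := fun n => norm_tt_sub_one τ hq1 x hy' n
  calc dist (VV τ y) (PP τ N y) = ‖VV τ y - PP τ N y‖ := dist_eq_norm _ _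
    _ ≤ bb (Cb x) ‖qq τ‖ N := VV_dist' τ hq0 hq1 (Cb_nonneg x) hC N
    _ < ε := hN

lemma tt_diff (n : ℕ) : Differentiable ℂ (tt τ n) := by
  have h1 : Differentiable ℂ (fun z : ℂ => cexp (2*↑π*I*z)) :=
    (differentiable_id.const_mul _).cexp
  have h2 : Differentiable ℂ (fun z : ℂ => cexp (-(2*↑π*I*z))) :=
    ((differentiable_id.const_mul _).neg).cexp
  exact (((h1.const_mul _).const_sub 1).mul ((h2.const_mul _).const_sub 1) : )

lemma PP_diff (N : ℕ) : Differentiable ℂ (fun z => PP τ N z) := by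
  induction N with
  | zero => simp only [PP, Finset.range_zero, Finset.prod_empty]; exact differentiable_const 1
  | succ N ih =>
      have : (fun z => PP τ (N+1) z) = fun z => PP τ N z * tt τ N z := by
        funext z; rw [PP, PP, Finset.prod_range_succ]
      rw [this]
      exact ih.mul (tt_diff τ N)

lemma VV_diff (hq1 : ‖qq τ‖ < 1) : Differentiable ℂ (VV τ) :=
  differentiableOn_univ.1 ((tendstoLocallyUniformlyOn_univ.2 (hTLU τ hq1)).differentiableOn
    (Eventually.of_forall fun N => (PP_diff τ N).differentiableOn) isOpen_univ)

lemma tt_ne_zero {z : ℂ} (hz : ¬ InL τ z) (n : ℕ) : tt τ n z ≠ 0 := by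
  obtain ⟨h1, h2, _⟩ := not_inL_imp_ne_one τ z hz n
  exact mul_ne_zero (sub_ne_zero.2 fun h => h1 h.symm) (sub_ne_zero.2 fun h => h2 h.symm)

lemma tt_ne_zero_zero (hq1 : ‖qq τ‖ < 1) (n : ℕ) : tt τ n 0 ≠ 0 := by
  have hxx : xx (0:ℂ) = 1 := by rw [xx]; simp
  have hxxi : xxi (0:ℂ) = 1 := by rw [xxi]; simp
  rw [tt, hxx, hxxi, mul_one]
  have : qq τ ^ (n+1) ≠ 1 := by
    intro h
    have := congrArg norm h
    rw [norm_pow, norm_one] at this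
    have hlt : ‖qq τ‖ ^ (n+1) < 1 := pow_lt_one₀ (norm_nonneg _) hq1 (Nat.succ_ne_zero n)
    rw [this] at hlt; exact lt_irrefl _ hlt
  exact mul_self_ne_zero.2 (sub_ne_zero.2 fun h => this h.symm)

lemma exp_tail_tendsto {C r : ℝ} (h0 : 0 ≤ r) (h1 : r < 1) :
    Tendsto (fun N : ℕ => Real.exp (C * r ^ (N+1) / (1 - r)) - 1) atTop (𝓝 0) := by
  have hp : Tendsto (fun N : ℕ => r ^ (N + 1)) atTop (𝓝 0) := by
    have := (tendsto_pow_atTop_nhds_zero_of_lt_one h0 h1).comp (tendsto_add_atTop_nat 1)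
    simpa [Function.comp_def] using this
  have hc : Continuous (fun t : ℝ => Real.exp (C * t / (1 - r)) - 1) := by continuity
  have := (hc.tendsto 0).comp hp
  simpa [Function.comp_def] using this

lemma VV_ne_zero (hq1 : ‖qq τ‖ < 1) {z : ℂ} (ht : ∀ n, tt τ n z ≠ 0) : VV τ z ≠ 0 := by
  have hq0 : 0 ≤ ‖qq τ‖ := norm_nonneg _
  have hC : ∀ n, ‖tt τ n z - 1‖ ≤ Cb z * ‖qq τ‖ ^ (n+1) :=
    fun n => norm_tt_sub_one τ hq1 z (Metric.mem_closedBall_self zero_le_one) n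
  obtain ⟨N, hN⟩ := ((exp_tail_tendsto (C := Cb z) hq0 hq1).eventually
    (gt_mem_nhds (by norm_num : (0:ℝ) < 1/2))).exists
  have hd := VV_dist τ hq0 hq1 (Cb_nonneg z) hC N
  have hP : 0 < ‖PP τ N z‖ := by
    rw [norm_pos_iff, PP]
    exact Finset.prod_ne_zero_iff.2 fun i _ => ht i
  intro h0
  rw [h0, zero_sub, norm_neg] at hd
  nlinarith

def gg (τ z : ℂ) (n : ℕ) : ℂ :=
  qq τ ^ (n+1) * xx z / (1 - qq τ ^ (n+1) * xx z)
    - qq τ ^ (n+1) * (xx z)⁻¹ / (1 - qq τ ^ (n+1) * (xx z)⁻¹)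

lemma xx_hasDeriv (z : ℂ) : HasDerivAt xx (2*↑π*I * xx z) z := by
  have h : HasDerivAt (fun w : ℂ => 2*↑π*I*w) (2*↑π*I) z := by
    simpa using (hasDerivAt_id z).const_mul (2*↑π*I : ℂ)
  have h2 := h.cexp
  have h3 : 2*↑π*I * xx z = cexp (2*↑π*I*z) * (2*↑π*I) := by rw [xx]; ring
  rw [h3]; exact h2

lemma xxi_hasDeriv (z : ℂ) : HasDerivAt xxi (-(2*↑π*I) * xxi z) z := by
  have h : HasDerivAt (fun w : ℂ => -(2*↑π*I*w)) (-(2*↑π*I)) z := by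
    simpa using (hasDerivAt_id z).const_mul (-(2*↑π*I) : ℂ)
  have h2 := h.cexp
  have h3 : -(2*↑π*I) * xxi z = cexp (-(2*↑π*I*z)) * (-(2*↑π*I)) := by rw [xxi]; ring
  rw [h3]; exact h2

lemma logDeriv_tt {z : ℂ} (hz : ¬ InL τ z) (n : ℕ) :
    logDeriv (tt τ n) z = -(2*↑π*I) * gg τ z n := by
  obtain ⟨h1, h2, _⟩ := not_inL_imp_ne_one τ z hz n
  have ht1 : (1 - qq τ ^ (n+1) * xx z) ≠ 0 := sub_ne_zero.2 fun h => h1 h.symm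
  have ht2 : (1 - qq τ ^ (n+1) * xxi z) ≠ 0 := sub_ne_zero.2 fun h => h2 h.symm
  have e1 : HasDerivAt (fun w => 1 - qq τ ^ (n+1) * xx w)
      (-(qq τ ^ (n+1) * (2*↑π*I * xx z))) z :=
    ((xx_hasDeriv z).const_mul (qq τ ^ (n+1))).const_sub 1
  have e2 : HasDerivAt (fun w => 1 - qq τ ^ (n+1) * xxi w)
      (-(qq τ ^ (n+1) * (-(2*↑π*I) * xxi z))) z :=
    ((xxi_hasDeriv z).const_mul (qq τ ^ (n+1))).const_sub 1
  have htt : tt τ n = fun w => (1 - qq τ ^ (n+1) * xx w) * (1 - qq τ ^ (n+1) * xxi w) := rfl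
  rw [htt, logDeriv_mul z ht1 ht2 e1.differentiableAt e2.differentiableAt,
    logDeriv_apply, logDeriv_apply, e1.deriv, e2.deriv, gg, xxi_eq]
  field_simp
  ring

lemma div_one_sub_norm_le {a : ℂ} (h : ‖a‖ ≤ 1/2) : ‖a / (1 - a)‖ ≤ 2 * ‖a‖ := by
  rw [norm_div]
  have h1 : (1:ℝ)/2 ≤ ‖1 - a‖ := by
    have := norm_sub_norm_le (1:ℂ) a
    simp only [norm_one] at this; linarith
  rw [div_le_iff₀ (by linarith)]
  nlinarith [norm_nonneg a]

lemma gg_norm_summable (hq1 : ‖qq τ‖ < 1) {z : ℂ} (hz : ¬ InL τ z) :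
    Summable (fun n => ‖gg τ z n‖) := by
  have hq0 : 0 ≤ ‖qq τ‖ := norm_nonneg _
  set r := ‖qq τ‖
  set K := 2 * (‖xx z‖ + ‖xxi z‖) with hK
  apply Summable.of_norm_bounded_eventually (g := fun n => (K * r) * r ^ n)
    (((summable_geometric_of_lt_one hq0 hq1)).mul_left _)
  rw [Nat.cofinite_eq_atTop]
  have hx1 : Tendsto (fun n : ℕ => r ^ (n+1) * ‖xx z‖) atTop (𝓝 0) := by
    have := ((tendsto_pow_atTop_nhds_zero_of_lt_one hq0 hq1).comp
      (tendsto_add_atTop_nat 1)).mul_const ‖xx z‖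
    simpa [Function.comp_def] using this
  have hx2 : Tendsto (fun n : ℕ => r ^ (n+1) * ‖xxi z‖) atTop (𝓝 0) := by
    have := ((tendsto_pow_atTop_nhds_zero_of_lt_one hq0 hq1).comp
      (tendsto_add_atTop_nat 1)).mul_const ‖xxi z‖
    simpa [Function.comp_def] using this
  filter_upwards [hx1.eventually (ge_mem_nhds (by norm_num : (0:ℝ) < 1/2)),
    hx2.eventually (ge_mem_nhds (by norm_num : (0:ℝ) < 1/2))] with n hn1 hn2
  have hA : ‖qq τ ^ (n+1) * xx z‖ ≤ 1/2 := by
    rw [norm_mul, norm_pow]; exact hn1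
  have hB : ‖qq τ ^ (n+1) * (xx z)⁻¹‖ ≤ 1/2 := by
    rw [norm_mul, norm_pow, xxi_eq]; exact hn2
  have hgg : ‖gg τ z n‖ ≤ 2 * ‖qq τ ^ (n+1) * xx z‖ + 2 * ‖qq τ ^ (n+1) * (xx z)⁻¹‖ := by
    rw [gg]
    refine (norm_sub_le _ _).trans ?_
    have := div_one_sub_norm_le hA
    have := div_one_sub_norm_le hB
    linarith
  rw [Real.norm_eq_abs, _root_.abs_of_nonneg (norm_nonneg _)]
  refine hgg.trans ?_
  rw [norm_mul, norm_pow, norm_mul, norm_pow, xxi_eq]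
  have heq : 2 * (r ^ (n+1) * ‖xx z‖) + 2 * (r ^ (n+1) * ‖xxi z‖) = (K * r) * r ^ n := by
    rw [hK]; ring
  exact le_of_eq heq

lemma gg_summable (hq1 : ‖qq τ‖ < 1) {z : ℂ} (hz : ¬ InL τ z) :
    Summable (gg τ z) := (gg_norm_summable τ hq1 hz).of_norm

lemma logDeriv_VV (hq1 : ‖qq τ‖ < 1) {z : ℂ} (hz : ¬ InL τ z) :
    logDeriv (VV τ) z = -(2*↑π*I) * ∑' n, gg τ z n := by
  have hVne : VV τ z ≠ 0 := VV_ne_zero τ hq1 (tt_ne_zero τ hz)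
  have h1 := logDeriv_tendsto (f := fun N w => PP τ N w) (g := VV τ) isOpen_univ
    (Set.mem_univ z) (tendstoLocallyUniformlyOn_univ.2 (hTLU τ hq1))
    (Eventually.of_forall fun N => (PP_diff τ N).differentiableOn) hVne
  have h2 : ∀ N, logDeriv (fun w => PP τ N w) z = ∑ n ∈ Finset.range N, logDeriv (tt τ n) z := by
    intro N
    exact logDeriv_prod (s := Finset.range N) (f := fun n w => tt τ n w) (x := z)
      (fun i _ => tt_ne_zero τ hz i) (fun i _ => (tt_diff τ i).differentiableAt)
  simp only [h2] at h1
  have hsum : Summable (fun n => logDeriv (tt τ n) z) := by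
    refine (summable_congr fun n => logDeriv_tt τ hz n).2 ?_
    exact (gg_summable τ hq1 hz).mul_left _
  have h3 := hsum.hasSum.tendsto_sum_nat
  have h4 := tendsto_nhds_unique h1 h3
  rw [h4, tsum_congr (fun n => logDeriv_tt τ hz n), tsum_mul_left]

end TLUsec

section ffsec

def ff (z : ℂ) : ℂ := (ww z - wwi z) * VV τ z
def ffP (N : ℕ) (z : ℂ) : ℂ := (ww z - wwi z) * PP τ N z

lemma ww_ne (z : ℂ) : ww z ≠ 0 := Complex.exp_ne_zero _
lemma wwi_inv (z : ℂ) : wwi z = (ww z)⁻¹ := by rw [ww, wwi, ← Complex.exp_neg]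
lemma ww_mul_ww (z : ℂ) : ww z * ww z = xx z := by rw [ww, xx, ← Complex.exp_add]; ring_nf
lemma P_ne : cexp (π*I*τ) ≠ 0 := Complex.exp_ne_zero _
lemma qq_eq_PP : qq τ = cexp (π*I*τ) * cexp (π*I*τ) := by
  rw [qq, ← Complex.exp_add]; ring_nf

lemma xx_add_one (z : ℂ) : xx (z + 1) = xx z := by
  rw [xx, xx, mul_add, Complex.exp_add, mul_one]
  simp [Complex.exp_two_pi_mul_I]

lemma xxi_add_one (z : ℂ) : xxi (z + 1) = xxi z := by
  rw [xxi, xxi, mul_add, neg_add, Complex.exp_add, mul_one]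
  have : cexp (-(2*↑π*I)) = 1 := by
    rw [Complex.exp_neg, Complex.exp_two_pi_mul_I, inv_one]
  rw [this, mul_one]

lemma tt_add_one (n : ℕ) (z : ℂ) : tt τ n (z + 1) = tt τ n z := by
  rw [tt, tt, xx_add_one, xxi_add_one]

lemma VV_add_one (z : ℂ) : VV τ (z + 1) = VV τ z := by
  rw [VV, VV]
  congr 1
  funext N
  rw [PP, PP]
  exact Finset.prod_congr rfl fun n _ => tt_add_one τ n z

lemma ww_add_one (z : ℂ) : ww (z + 1) = -ww z := by
  rw [ww, ww, mul_add, Complex.exp_add, mul_one, Complex.exp_pi_mul_I]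
  ring

lemma wwi_add_one (z : ℂ) : wwi (z + 1) = -wwi z := by
  rw [wwi, wwi, mul_add, neg_add, Complex.exp_add, mul_one]
  have : cexp (-(↑π*I)) = -1 := by
    rw [Complex.exp_neg, Complex.exp_pi_mul_I]
    norm_num
  rw [this]
  ring

lemma ff_add_one (z : ℂ) : ff τ (z + 1) = -ff τ z := by
  rw [ff, ff, ww_add_one, wwi_add_one, VV_add_one]
  ring

lemma xx_add_tau (z : ℂ) : xx (z + τ) = qq τ * xx z := by
  rw [xx, xx, qq, mul_add, Complex.exp_add]
  ring

lemma xxi_add_tau (z : ℂ) : xxi (z + τ) = (qq τ)⁻¹ * xxi z := by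
  rw [xxi, xxi, qq, mul_add, neg_add, Complex.exp_add, ← Complex.exp_neg]
  ring

lemma ww_add_tau (z : ℂ) : ww (z + τ) = ww z * cexp (π*I*τ) := by
  rw [ww, ww, mul_add, Complex.exp_add]

lemma wwi_add_tau (z : ℂ) : wwi (z + τ) = wwi z * (cexp (π*I*τ))⁻¹ := by
  rw [wwi, wwi, mul_add, neg_add, Complex.exp_add, ← Complex.exp_neg]

lemma tt_add_tau (n : ℕ) (z : ℂ) :
    tt τ n (z + τ) = (1 - qq τ ^ (n+2) * xx z) * (1 - qq τ ^ n * xxi z) := by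
  rw [tt, xx_add_tau, xxi_add_tau]
  have h1 : qq τ ^ (n+1) * (qq τ * xx z) = qq τ ^ (n+2) * xx z := by ring
  have h2 : qq τ ^ (n+1) * ((qq τ)⁻¹ * xxi z) = qq τ ^ n * xxi z := by
    field_simp [qq_ne]
    ring
  rw [h1, h2]

lemma xxi_inv_sq (z : ℂ) : xxi z = (ww z)⁻¹ * (ww z)⁻¹ := by
  rw [xxi, ww, ← Complex.exp_neg, ← Complex.exp_add]
  ring_nf

lemma ffP_key (N : ℕ) (z : ℂ) :
    ffP τ N (z + τ) * (1 - qq τ ^ N * xxi z)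
      = -(cexp (π*I*τ))⁻¹ * xxi z * (ffP τ N z * (1 - qq τ ^ (N+1) * xx z)) := by
  induction N with
  | zero =>
      simp only [ffP, PP, Finset.range_zero, Finset.prod_empty, mul_one, pow_zero, one_mul,
        pow_one]
      rw [ww_add_tau, wwi_add_tau, wwi_inv, xxi_inv_sq, qq_eq_PP, ← ww_mul_ww]
      field_simp [ww_ne, P_ne]
      ring
  | succ N ih =>
      have hP : ∀ w, ffP τ (N+1) w = ffP τ N w * tt τ N w := by
        intro w
        rw [ffP, ffP, PP, PP, Finset.prod_range_succ]
        ring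
      rw [hP, hP, tt_add_tau]
      have htt : tt τ N z = (1 - qq τ ^ (N+1) * xx z) * (1 - qq τ ^ (N+1) * xxi z) := rfl
      rw [htt]
      linear_combination ((1 - qq τ ^ (N+2) * xx z) * (1 - qq τ ^ (N+1) * xxi z)) * ih

lemma ff_tendsto (hq1 : ‖qq τ‖ < 1) (w : ℂ) :
    Tendsto (fun N => ffP τ N w) atTop (𝓝 (ff τ w)) := by
  have hC : ∀ n, ‖tt τ n w - 1‖ ≤ Cb w * ‖qq τ‖ ^ (n+1) :=
    fun n => norm_tt_sub_one τ hq1 w (Metric.mem_closedBall_self zero_le_one) n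
  exact (VV_tendsto τ (norm_nonneg _) hq1 (Cb_nonneg w) hC).const_mul _

lemma ff_add_tau (hq1 : ‖qq τ‖ < 1) (z : ℂ) :
    ff τ (z + τ) = -(cexp (π*I*τ))⁻¹ * xxi z * ff τ z := by
  have hqN : Tendsto (fun N : ℕ => qq τ ^ N) atTop (𝓝 0) :=
    tendsto_pow_atTop_nhds_zero_of_norm_lt_one hq1
  have hqN1 : Tendsto (fun N : ℕ => qq τ ^ (N+1)) atTop (𝓝 0) := by
    have := hqN.comp (tendsto_add_atTop_nat 1)
    simpa [Function.comp_def] using this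
  have h1 : Tendsto (fun N => ffP τ N (z+τ) * (1 - qq τ ^ N * xxi z)) atTop
      (𝓝 (ff τ (z+τ) * (1 - 0 * xxi z))) :=
    (ff_tendsto τ hq1 (z+τ)).mul ((hqN.mul_const (xxi z)).const_sub 1)
  have h2 : Tendsto (fun N => -(cexp (π*I*τ))⁻¹ * xxi z * (ffP τ N z * (1 - qq τ ^ (N+1) * xx z)))
      atTop (𝓝 (-(cexp (π*I*τ))⁻¹ * xxi z * (ff τ z * (1 - 0 * xx z)))) :=
    ((ff_tendsto τ hq1 z).mul ((hqN1.mul_const (xx z)).const_sub 1)).const_mul _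
  simp only [← ffP_key τ] at h2
  have h3 := tendsto_nhds_unique h1 h2
  simpa using h3

lemma ww_hasDeriv (z : ℂ) : HasDerivAt ww (↑π*I * ww z) z := by
  have h : HasDerivAt (fun w : ℂ => ↑π*I*w) (↑π*I) z := by
    simpa using (hasDerivAt_id z).const_mul (↑π*I : ℂ)
  have h2 := h.cexp
  have h3 : ↑π*I * ww z = cexp (↑π*I*z) * (↑π*I) := by rw [ww]; ring
  rw [h3]; exact h2

lemma wwi_hasDeriv (z : ℂ) : HasDerivAt wwi (-(↑π*I) * wwi z) z := by
  have h : HasDerivAt (fun w : ℂ => -(↑π*I*w)) (-(↑π*I)) z := by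
    simpa using (hasDerivAt_id z).const_mul (-(↑π*I) : ℂ)
  have h2 := h.cexp
  have h3 : -(↑π*I) * wwi z = cexp (-(↑π*I*z)) * (-(↑π*I)) := by rw [wwi]; ring
  rw [h3]; exact h2

lemma wsub_hasDeriv (z : ℂ) :
    HasDerivAt (fun w => ww w - wwi w) (↑π*I * ww z + ↑π*I * wwi z) z := by
  have := (ww_hasDeriv z).sub (wwi_hasDeriv z)
  have h3 : ↑π*I * ww z + ↑π*I * wwi z = ↑π*I * ww z - -(↑π*I) * wwi z := by ring
  rw [h3]; exact this

lemma ww_sub_wwi_ne {z : ℂ} (hz : ¬ InL τ z) : ww z - wwi z ≠ 0 := by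
  obtain ⟨_, _, h3⟩ := not_inL_imp_ne_one τ z hz 0
  intro h
  apply h3
  have h4 : ww z = wwi z := sub_eq_zero.1 h
  rw [← ww_mul_ww]
  nth_rewrite 2 [h4]
  rw [wwi_inv, mul_inv_cancel₀ (ww_ne z)]

lemma ff_diff (hq1 : ‖qq τ‖ < 1) : Differentiable ℂ (ff τ) := by
  have h1 : Differentiable ℂ ww := fun z => (ww_hasDeriv z).differentiableAt
  have h2 : Differentiable ℂ wwi := fun z => (wwi_hasDeriv z).differentiableAt
  exact ((h1.sub h2).mul (VV_diff τ hq1) : )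

lemma ff_ne_zero (hq1 : ‖qq τ‖ < 1) {z : ℂ} (hz : ¬ InL τ z) : ff τ z ≠ 0 :=
  mul_ne_zero (ww_sub_wwi_ne τ hz) (VV_ne_zero τ hq1 (tt_ne_zero τ hz))

lemma logDeriv_wsub {z : ℂ} (hz : ¬ InL τ z) :
    logDeriv (fun w => ww w - wwi w) z = ↑π*I * (xx z + 1) / (xx z - 1) := by
  obtain ⟨_, _, h3⟩ := not_inL_imp_ne_one τ z hz 0
  have hd : xx z - 1 ≠ 0 := sub_ne_zero.2 h3
  have hw : ww z - wwi z ≠ 0 := ww_sub_wwi_ne τ hz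
  rw [logDeriv_apply, (wsub_hasDeriv z).deriv, div_eq_div_iff hw hd]
  rw [wwi_inv, ← ww_mul_ww]
  linear_combination (2*↑π*I*ww z) * (mul_inv_cancel₀ (ww_ne z))

lemma logDeriv_ff (hq1 : ‖qq τ‖ < 1) {z : ℂ} (hz : ¬ InL τ z) :
    logDeriv (ff τ) z = ↑π*I * (xx z + 1) / (xx z - 1) + -(2*↑π*I) * ∑' n, gg τ z n := by
  have h1 : Differentiable ℂ (fun w => ww w - wwi w) :=
    fun w => (wsub_hasDeriv w).differentiableAt
  have hff : ff τ = fun w => (ww w - wwi w) * VV τ w := rfl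
  rw [hff, logDeriv_mul z (ww_sub_wwi_ne τ hz) (VV_ne_zero τ hq1 (tt_ne_zero τ hz))
    h1.differentiableAt (VV_diff τ hq1).differentiableAt,
    logDeriv_wsub τ hz, logDeriv_VV τ hq1 hz]

end ffsec

section thetasec

lemma theta_repr (z : ℂ) :
    theta z τ = (1/I) * cexp (↑π*I*τ/4 + ↑π*I*z) * jacobiTheta₂ (z + (τ+1)/2) τ := by
  rw [theta, jacobiTheta₂, mul_assoc (1/I), ← tsum_mul_left (a := cexp (↑π*I*τ/4 + ↑π*I*z))]
  congr 1
  apply tsum_congr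
  intro n
  rw [jacobiTheta₂_term]
  rw [show ((-1:ℂ))^n = cexp (n * (↑π * I)) from by
    rw [Complex.exp_int_mul, Complex.exp_pi_mul_I]]
  simp only [← Complex.exp_add]
  congr 1
  push_cast
  ring

lemma theta_fun_repr : (fun w => theta w τ) =
    fun w => (1/I) * cexp (↑π*I*τ/4 + ↑π*I*w) * jacobiTheta₂ (w + (τ+1)/2) τ :=
  funext fun z => theta_repr τ z

lemma theta_diff (hτ : 0 < τ.im) : Differentiable ℂ (fun w => theta w τ) := by
  rw [theta_fun_repr]
  have h1 : Differentiable ℂ (fun w : ℂ => (1/I) * cexp (↑π*I*τ/4 + ↑π*I*w)) := by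
    fun_prop
  have h2 : Differentiable ℂ (fun w : ℂ => jacobiTheta₂ (w + (τ+1)/2) τ) := fun z =>
    (differentiableAt_jacobiTheta₂_fst (z + (τ+1)/2) hτ).comp z
      (differentiableAt_id.add_const _)
  exact h1.mul h2

lemma theta_add_one (z : ℂ) : theta (z+1) τ = -theta z τ := by
  rw [theta_repr, theta_repr]
  rw [show z + 1 + (τ+1)/2 = (z + (τ+1)/2) + 1 by ring, jacobiTheta₂_add_left]
  rw [show ↑π*I*τ/4 + ↑π*I*(z+1) = (↑π*I*τ/4 + ↑π*I*z) + ↑π*I by ring, Complex.exp_add,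
    Complex.exp_pi_mul_I]
  ring

lemma theta_add_tau (z : ℂ) : theta (z+τ) τ = -(cexp (↑π*I*τ))⁻¹ * xxi z * theta z τ := by
  rw [theta_repr, theta_repr]
  rw [show z + τ + (τ+1)/2 = (z + (τ+1)/2) + τ by ring, jacobiTheta₂_add_left']
  rw [xxi, show (cexp (↑π*I*τ))⁻¹ = cexp (-(↑π*I*τ)) from by rw [Complex.exp_neg]]
  have key : cexp (↑π*I*τ/4 + ↑π*I*(z+τ)) * cexp (-↑π*I*(τ + 2*(z + (τ+1)/2)))
      = -(cexp (-(↑π*I*τ)) * (cexp (-(2*↑π*I*z)) * cexp (↑π*I*τ/4 + ↑π*I*z))) := by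
    have h1 : (↑π*I*τ/4 + ↑π*I*(z+τ)) + (-↑π*I*(τ + 2*(z + (τ+1)/2)))
        = ((-(↑π*I*τ)) + ((-(2*↑π*I*z)) + (↑π*I*τ/4 + ↑π*I*z))) + (-(↑π*I)) := by ring
    have hneg : cexp (-(↑π*I)) = -1 := by
      rw [Complex.exp_neg, Complex.exp_pi_mul_I]; norm_num
    rw [← Complex.exp_add, h1, Complex.exp_add, Complex.exp_add, Complex.exp_add, hneg]
    ring
  linear_combination ((1/I) * jacobiTheta₂ (z + (τ+1)/2) τ) * key

lemma theta_zero : theta 0 τ = 0 := by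
  have h := jacobiTheta₂_add_left' (-((τ+1)/2) + 1) τ
  rw [show -((τ+1)/2) + 1 + τ = (τ+1)/2 by ring] at h
  rw [jacobiTheta₂_add_left, jacobiTheta₂_neg_left] at h
  have harg : -↑π*I*(τ + 2*(-((τ+1)/2) + 1)) = -(↑π*I) := by ring
  rw [harg] at h
  have hneg : cexp (-(↑π*I)) = -1 := by
    rw [Complex.exp_neg, Complex.exp_pi_mul_I]; norm_num
  rw [hneg] at h
  have hzero : jacobiTheta₂ ((τ+1)/2) τ = 0 := by linear_combination h/2
  rw [theta_repr, zero_add, hzero, mul_zero]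

end thetasec

section transsec

lemma exp_neg_pi_I : cexp (-(↑π*I)) = -1 := by
  rw [Complex.exp_neg, Complex.exp_pi_mul_I]; norm_num

lemma exp_two_pi_I : cexp (2*↑π*I) = 1 := Complex.exp_two_pi_mul_I

lemma xxi_inv' (w : ℂ) : (xxi w)⁻¹ = xx w := by
  rw [xxi, xx, ← Complex.exp_neg, neg_neg]

variable {g : ℂ → ℂ}

lemma trans_n (hg1 : ∀ z, g (z+1) = -g z) (n : ℤ) (z : ℂ) :
    g (z + (n:ℂ)) = cexp ((n:ℂ)*↑π*I) * g z := by
  induction n using Int.induction_on with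
  | zero => simp
  | succ k ih =>
      push_cast at ih ⊢
      rw [show z + ((k:ℂ)+1) = (z + (k:ℂ)) + 1 by ring, hg1, ih,
        show ((k:ℂ)+1)*↑π*I = (k:ℂ)*↑π*I + ↑π*I by ring, Complex.exp_add,
        Complex.exp_pi_mul_I]
      ring
  | pred k ih =>
      push_cast at ih ⊢
      have h1 := hg1 (z + (-(k:ℂ) - 1))
      rw [show (z + (-(k:ℂ) - 1)) + 1 = z + (-(k:ℂ)) by ring] at h1
      have h2 : g (z + (-(k:ℂ) - 1)) = -g (z + (-(k:ℂ))) := by linear_combination h1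
      rw [h2, ih, show (-(k:ℂ)-1)*↑π*I = (-(k:ℂ))*↑π*I + (-(↑π*I)) by ring,
        Complex.exp_add, exp_neg_pi_I]
      ring

lemma trans_m (hgτ : ∀ z, g (z+τ) = -(cexp (↑π*I*τ))⁻¹ * xxi z * g z) (m : ℤ) :
    ∀ z : ℂ, g (z + (m:ℂ)*τ) = cexp ((m:ℂ)*↑π*I - (m:ℂ)^2*↑π*I*τ - 2*(m:ℂ)*↑π*I*z) * g z := by
  induction m using Int.induction_on with
  | zero => intro z; simp
  | succ k ih =>
      intro z
      push_cast at ih ⊢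
      rw [show z + ((k:ℂ)+1)*τ = (z+τ) + (k:ℂ)*τ by ring, ih (z+τ), hgτ z,
        show -(cexp (↑π*I*τ))⁻¹ * xxi z = -(cexp (-(↑π*I*τ)) * cexp (-(2*↑π*I*z))) from by
          rw [Complex.exp_neg, xxi]; ring]
      have key : cexp ((k:ℂ)*↑π*I - (k:ℂ)^2*↑π*I*τ - 2*(k:ℂ)*↑π*I*(z+τ))
            * (-(cexp (-(↑π*I*τ)) * cexp (-(2*↑π*I*z))))
          = cexp (((k:ℂ)+1)*↑π*I - ((k:ℂ)+1)^2*↑π*I*τ - 2*((k:ℂ)+1)*↑π*I*z) := by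
        rw [show ((k:ℂ)+1)*↑π*I - ((k:ℂ)+1)^2*↑π*I*τ - 2*((k:ℂ)+1)*↑π*I*z
            = (((k:ℂ)*↑π*I - (k:ℂ)^2*↑π*I*τ - 2*(k:ℂ)*↑π*I*(z+τ)) + (-(↑π*I*τ))
              + (-(2*↑π*I*z))) + ↑π*I by ring,
          Complex.exp_add, Complex.exp_add, Complex.exp_add, Complex.exp_pi_mul_I]
        ring
      rw [← key]
      ring
  | pred k ih =>
      intro z
      push_cast at ih ⊢
      have h1 := hgτ (z - τ)
      rw [show (z - τ) + τ = z by ring] at h1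
      have hxx : (-cexp (↑π*I*τ) * xx (z-τ)) * (-(cexp (↑π*I*τ))⁻¹ * xxi (z-τ)) = 1 := by
        have e1 : cexp (↑π*I*τ) * (cexp (↑π*I*τ))⁻¹ = 1 := mul_inv_cancel₀ (Complex.exp_ne_zero _)
        have e2 := xx_mul_xxi (z-τ)
        linear_combination (xx (z-τ) * xxi (z-τ)) * e1 + e2
      have h2 : g (z - τ) = -cexp (↑π*I*τ) * xx (z-τ) * g z := by
        calc g (z-τ) = ((-cexp (↑π*I*τ) * xx (z-τ)) * (-(cexp (↑π*I*τ))⁻¹ * xxi (z-τ)))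
              * g (z-τ) := by rw [hxx, one_mul]
          _ = (-cexp (↑π*I*τ) * xx (z-τ)) * (-(cexp (↑π*I*τ))⁻¹ * xxi (z-τ) * g (z-τ)) := by
              ring
          _ = -cexp (↑π*I*τ) * xx (z-τ) * g z := by rw [← h1]
      rw [show z + (-(k:ℂ)-1)*τ = (z-τ) + (-(k:ℂ))*τ by ring, ih (z-τ), h2]
      have key : cexp ((-(k:ℂ))*↑π*I - (-(k:ℂ))^2*↑π*I*τ - 2*(-(k:ℂ))*↑π*I*(z-τ))
            * (-cexp (↑π*I*τ) * xx (z-τ))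
          = cexp ((-(k:ℂ)-1)*↑π*I - (-(k:ℂ)-1)^2*↑π*I*τ - 2*(-(k:ℂ)-1)*↑π*I*z) := by
        rw [show (-(k:ℂ)-1)*↑π*I - (-(k:ℂ)-1)^2*↑π*I*τ - 2*(-(k:ℂ)-1)*↑π*I*z
            = ((((-(k:ℂ))*↑π*I - (-(k:ℂ))^2*↑π*I*τ - 2*(-(k:ℂ))*↑π*I*(z-τ)) + ↑π*I*τ
              + 2*↑π*I*(z-τ)) + ↑π*I) + (-(2*↑π*I)) by ring,
          Complex.exp_add, Complex.exp_add, Complex.exp_add, Complex.exp_add,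
          Complex.exp_pi_mul_I, xx]
        rw [show cexp (-(2*↑π*I)) = 1 by rw [Complex.exp_neg, exp_two_pi_I, inv_one]]
        ring
      rw [← key]
      ring

def EE (m n : ℤ) (z : ℂ) : ℂ :=
  cexp ((m:ℂ)*↑π*I + (n:ℂ)*↑π*I - (m:ℂ)^2*↑π*I*τ - 2*(m:ℂ)*↑π*I*z)

lemma EE_ne (m n : ℤ) (z : ℂ) : EE τ m n z ≠ 0 := Complex.exp_ne_zero _

lemma trans_full (hg1 : ∀ z, g (z+1) = -g z)
    (hgτ : ∀ z, g (z+τ) = -(cexp (↑π*I*τ))⁻¹ * xxi z * g z) (m n : ℤ) (z : ℂ) :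
    g (z + ((m:ℂ)*τ + (n:ℂ))) = EE τ m n z * g z := by
  rw [show z + ((m:ℂ)*τ + (n:ℂ)) = (z + (n:ℂ)) + (m:ℂ)*τ by ring,
    trans_m τ hgτ m (z + (n:ℂ)), trans_n hg1 n z, EE]
  have key : cexp ((m:ℂ)*↑π*I - (m:ℂ)^2*↑π*I*τ - 2*(m:ℂ)*↑π*I*(z + (n:ℂ)))
        * cexp ((n:ℂ)*↑π*I)
      = cexp ((m:ℂ)*↑π*I + (n:ℂ)*↑π*I - (m:ℂ)^2*↑π*I*τ - 2*(m:ℂ)*↑π*I*z) := by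
    rw [← Complex.exp_add,
      show ((m:ℂ)*↑π*I - (m:ℂ)^2*↑π*I*τ - 2*(m:ℂ)*↑π*I*(z + (n:ℂ))) + (n:ℂ)*↑π*I
        = ((m:ℂ)*↑π*I + (n:ℂ)*↑π*I - (m:ℂ)^2*↑π*I*τ - 2*(m:ℂ)*↑π*I*z)
          + ((-(m*n) : ℤ) : ℂ) * (2*↑π*I) by push_cast; ring,
      Complex.exp_add, Complex.exp_int_mul_two_pi_mul_I, mul_one]
  rw [← key]
  ring

end transsec

section liouville

lemma InL_shift (m n : ℤ) (z : ℂ) : InL τ (z + ((m:ℂ)*τ + (n:ℂ))) ↔ InL τ z := by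
  constructor
  · rintro ⟨a, b, hab⟩
    exact ⟨a - m, b - n, by push_cast; linear_combination hab⟩
  · rintro ⟨a, b, rfl⟩
    exact ⟨a + m, b + n, by push_cast; ring⟩

def thf (z : ℂ) : ℂ := theta z τ / ff τ z
def vv0 : ℂ := limUnder (𝓝[≠] (0:ℂ)) (thf τ)
open Classical in
def psi (z : ℂ) : ℂ := if InL τ z then vv0 τ else thf τ z

lemma thf_shift (hq1 : ‖qq τ‖ < 1) (m n : ℤ) (z : ℂ) :
    thf τ (z + ((m:ℂ)*τ + (n:ℂ))) = thf τ z := by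
  have h1 := trans_full τ (g := fun w => theta w τ) (fun w => theta_add_one τ w)
    (fun w => theta_add_tau τ w) m n z
  have h2 := trans_full τ (g := ff τ) (fun w => ff_add_one τ w)
    (fun w => ff_add_tau τ hq1 w) m n z
  rw [thf, thf, h1, h2, mul_div_mul_left _ _ (EE_ne τ m n z)]

lemma psi_shift (hq1 : ‖qq τ‖ < 1) (m n : ℤ) (z : ℂ) :
    psi τ (z + ((m:ℂ)*τ + (n:ℂ))) = psi τ z := by
  rw [psi, psi]
  by_cases h : InL τ z
  · rw [if_pos ((InL_shift τ m n z).2 h), if_pos h]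
  · rw [if_neg (fun hh => h ((InL_shift τ m n z).1 hh)), if_neg h, thf_shift τ hq1 m n z]

lemma ww_zero : ww 0 = 1 := by rw [ww]; simp
lemma wwi_zero : wwi 0 = 1 := by rw [wwi]; simp

lemma ff_zero : ff τ 0 = 0 := by rw [ff, ww_zero, wwi_zero]; ring

lemma ff_hasDeriv_zero (hq1 : ‖qq τ‖ < 1) :
    HasDerivAt (ff τ) (2*↑π*I * VV τ 0) 0 := by
  have h := (wsub_hasDeriv 0).mul ((VV_diff τ hq1) 0).hasDerivAt
  have he : (↑π*I * ww 0 + ↑π*I * wwi 0) * VV τ 0 + (ww 0 - wwi 0) * deriv (VV τ) 0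
      = 2*↑π*I * VV τ 0 := by
    rw [ww_zero, wwi_zero]; ring
  rw [he] at h
  exact h

lemma deriv_ff_zero_ne (hq1 : ‖qq τ‖ < 1) : deriv (ff τ) 0 ≠ 0 := by
  rw [(ff_hasDeriv_zero τ hq1).deriv]
  exact mul_ne_zero (by simp [Complex.ext_iff, Real.pi_ne_zero])
    (VV_ne_zero τ hq1 (tt_ne_zero_zero τ hq1))

lemma div_div_same_cancel (a b w : ℂ) (hw : w ≠ 0) : (a/w)/(b/w) = a/b := by
  rcases eq_or_ne b 0 with rfl | hb
  · simp
  · field_simp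

lemma thf_tendsto (hτ : 0 < τ.im) (hq1 : ‖qq τ‖ < 1) :
    Tendsto (thf τ) (𝓝[≠] (0:ℂ))
      (𝓝 (deriv (fun w => theta w τ) 0 / deriv (ff τ) 0)) := by
  have hθd : DifferentiableAt ℂ (fun w => theta w τ) 0 := (theta_diff τ hτ) 0
  have hfd : DifferentiableAt ℂ (ff τ) 0 := (ff_diff τ hq1) 0
  have h1 : Tendsto (dslope (fun w => theta w τ) 0) (𝓝 0)
      (𝓝 (deriv (fun w => theta w τ) 0)) := by
    have hc := continuousAt_dslope_same.2 hθd
    rw [ContinuousAt, dslope_same] at hc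
    exact hc
  have h2 : Tendsto (dslope (ff τ) 0) (𝓝 0) (𝓝 (deriv (ff τ) 0)) := by
    have hc := continuousAt_dslope_same.2 hfd
    rw [ContinuousAt, dslope_same] at hc
    exact hc
  have h3 : Tendsto (fun w => dslope (fun u => theta u τ) 0 w / dslope (ff τ) 0 w)
      (𝓝[≠] (0:ℂ)) (𝓝 (deriv (fun w => theta w τ) 0 / deriv (ff τ) 0)) :=
    (h1.mono_left nhdsWithin_le_nhds).div (h2.mono_left nhdsWithin_le_nhds)
      (deriv_ff_zero_ne τ hq1)
  apply h3.congr'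
  filter_upwards [self_mem_nhdsWithin] with w hw
  have hw0 : w ≠ (0:ℂ) := hw
  rw [dslope_of_ne _ hw0, dslope_of_ne _ hw0, slope_def_field, slope_def_field,
    theta_zero, ff_zero, sub_zero, sub_zero, sub_zero, thf,
    div_div_same_cancel _ _ _ hw0]

lemma upd_diffOn (hτ : 0 < τ.im) (hq1 : ‖qq τ‖ < 1) :
    ∃ ρ > 0, ρ ≤ min τ.im 1 ∧
      DifferentiableOn ℂ (Function.update (thf τ) 0 (vv0 τ)) (Metric.ball 0 ρ) := by
  set L := deriv (fun w => theta w τ) 0 / deriv (ff τ) 0 with hL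
  have hb : ∀ᶠ w in 𝓝[≠] (0:ℂ), ‖thf τ w‖ ≤ ‖L‖ + 1 :=
    (thf_tendsto τ hτ hq1).norm.eventually (eventually_le_nhds (lt_add_one ‖L‖))
  rw [eventually_nhdsWithin_iff, Metric.eventually_nhds_iff] at hb
  obtain ⟨ε, hεpos, hε⟩ := hb
  set ρ := min ε (min τ.im 1) with hρ
  have hρpos : 0 < ρ := lt_min hεpos (lattice_eps_pos τ hτ)
  refine ⟨ρ, hρpos, min_le_right _ _, ?_⟩
  have hnotL : ∀ w ∈ Metric.ball (0:ℂ) ρ, w ≠ 0 → ¬ InL τ w := by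
    intro w hwb hw0 hwL
    exact hw0 (ball_zero_lattice τ hτ (Metric.ball_subset_ball (min_le_right _ _) hwb) hwL)
  have hdiff : DifferentiableOn ℂ (thf τ) (Metric.ball (0:ℂ) ρ \ {0}) := by
    rintro w ⟨hw1, hw2⟩
    have hwL : ¬ InL τ w := hnotL w hw1 hw2
    exact (((theta_diff τ hτ) w).div ((ff_diff τ hq1) w)
      (ff_ne_zero τ hq1 hwL)).differentiableWithinAt
  have hbdd : BddAbove (norm ∘ thf τ '' (Metric.ball (0:ℂ) ρ \ {0})) := by
    refine ⟨‖L‖ + 1, ?_⟩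
    rintro y ⟨w, ⟨hw1, hw2⟩, rfl⟩
    have hdist : dist w (0:ℂ) < ε := lt_of_lt_of_le (Metric.mem_ball.1 hw1) (min_le_left _ _)
    exact hε hdist hw2
  have h := Complex.differentiableOn_update_limUnder_of_bddAbove
    (Metric.ball_mem_nhds (0:ℂ) hρpos) hdiff hbdd
  exact h

lemma psi_diff (hτ : 0 < τ.im) (hq1 : ‖qq τ‖ < 1) : Differentiable ℂ (psi τ) := by
  obtain ⟨ρ, hρpos, hρle, hdiffOn⟩ := upd_diffOn τ hτ hq1
  intro z₀
  by_cases hz : InL τ z₀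
  · obtain ⟨m, n, rfl⟩ := hz
    set c : ℂ := (m:ℂ)*τ + (n:ℂ) with hc
    have h0mem : (0:ℂ) ∈ Metric.ball (0:ℂ) ρ := Metric.mem_ball_self hρpos
    have hupd_at : DifferentiableAt ℂ (Function.update (thf τ) 0 (vv0 τ)) 0 :=
      (hdiffOn 0 h0mem).differentiableAt (Metric.isOpen_ball.mem_nhds h0mem)
    have hupd_at' : DifferentiableAt ℂ (Function.update (thf τ) 0 (vv0 τ)) (c - c) := by
      rw [sub_self]; exact hupd_at
    have hcomp : DifferentiableAt ℂ (fun ζ => Function.update (thf τ) 0 (vv0 τ) (ζ - c)) c := by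
      have hsub : DifferentiableAt ℂ (fun ζ : ℂ => ζ - c) c := differentiableAt_id.sub_const c
      have h := DifferentiableAt.comp (g := Function.update (thf τ) 0 (vv0 τ))
        (f := fun ζ : ℂ => ζ - c) c hupd_at' hsub
      simpa [Function.comp_def] using h
    apply hcomp.congr_of_eventuallyEq
    filter_upwards [Metric.isOpen_ball.mem_nhds (Metric.mem_ball_self hρpos : c ∈ Metric.ball c ρ)]
      with ζ hζ
    by_cases hcc : ζ = c
    · subst hcc
      rw [sub_self, Function.update_self, psi, if_pos ⟨m, n, rfl⟩]
    · have hζL : ¬ InL τ ζ := by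
        intro hL
        exact hcc (lattice_discrete τ hτ hL ⟨m, n, rfl⟩ (by
          have : dist ζ c < ρ := hζ
          rw [dist_eq_norm] at this
          exact lt_of_lt_of_le this hρle))
      have hsub0 : ζ - c ≠ 0 := sub_ne_zero.2 hcc
      have hζ' : ζ = (ζ - c) + ((m:ℂ)*τ + (n:ℂ)) := by rw [hc]; ring
      rw [psi, if_neg hζL, Function.update_of_ne hsub0]
      conv_lhs => rw [hζ']
      rw [thf_shift τ hq1 m n (ζ - c)]
  · obtain ⟨ε, hεpos, hεfree⟩ := ball_lattice_free τ hτ hz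
    have hd : DifferentiableAt ℂ (thf τ) z₀ :=
      ((theta_diff τ hτ) z₀).div ((ff_diff τ hq1) z₀) (ff_ne_zero τ hq1 hz)
    apply hd.congr_of_eventuallyEq
    filter_upwards [Metric.isOpen_ball.mem_nhds (Metric.mem_ball_self hεpos)] with w hw
    rw [psi, if_neg (hεfree w hw)]

lemma psi_bounded (hτ : 0 < τ.im) (hq1 : ‖qq τ‖ < 1) :
    Bornology.IsBounded (Set.range (psi τ)) := by
  set K := (fun p : ℝ × ℝ => (p.1 : ℂ) * τ + (p.2 : ℂ)) '' (Set.Icc 0 1 ×ˢ Set.Icc 0 1) with hK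
  have hcont : Continuous (fun p : ℝ × ℝ => (p.1 : ℂ) * τ + (p.2 : ℂ)) := by
    apply Continuous.add
    · exact (Complex.continuous_ofReal.comp continuous_fst).mul continuous_const
    · exact Complex.continuous_ofReal.comp continuous_snd
  have hKc : IsCompact K := (isCompact_Icc.prod isCompact_Icc).image hcont
  have hsub : Set.range (psi τ) ⊆ psi τ '' K := by
    rintro y ⟨z, rfl⟩
    set a := z.im / τ.im with ha
    set b := z.re - a * τ.re with hb
    have hz : z = (a:ℂ)*τ + (b:ℂ) := by
      apply Complex.ext
      · simp only [Complex.add_re, Complex.re_ofReal_mul, Complex.ofReal_re, hb]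
        ring
      · simp only [Complex.add_im, Complex.mul_im, Complex.ofReal_re, Complex.ofReal_im,
          zero_mul, add_zero, mul_zero]
        rw [ha]
        field_simp
    have hdecomp : z = (((Int.fract a : ℝ) : ℂ)*τ + ((Int.fract b : ℝ) : ℂ))
        + (((⌊a⌋ : ℤ):ℂ)*τ + ((⌊b⌋ : ℤ):ℂ)) := by
      rw [hz, ← Int.self_sub_floor a, ← Int.self_sub_floor b]
      push_cast
      ring
    refine ⟨((Int.fract a : ℝ) : ℂ)*τ + ((Int.fract b : ℝ) : ℂ),
      ⟨(Int.fract a, Int.fract b),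
        ⟨⟨Int.fract_nonneg a, (Int.fract_lt_one a).le⟩,
         ⟨Int.fract_nonneg b, (Int.fract_lt_one b).le⟩⟩, rfl⟩, ?_⟩
    rw [hdecomp, psi_shift τ hq1 ⌊a⌋ ⌊b⌋]
  exact ((hKc.image (psi_diff τ hτ hq1).continuous).isBounded).subset hsub

lemma theta_eq_c_mul_ff (hτ : 0 < τ.im) (hq1 : ‖qq τ‖ < 1) (z : ℂ) :
    theta z τ = vv0 τ * ff τ z := by
  have hconst : psi τ z = psi τ 0 :=
    (psi_diff τ hτ hq1).apply_eq_apply_of_bounded (psi_bounded τ hτ hq1) z 0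
  by_cases hz : InL τ z
  · obtain ⟨m, n, rfl⟩ := hz
    have h1 := trans_full τ (g := fun w => theta w τ) (fun w => theta_add_one τ w)
      (fun w => theta_add_tau τ w) m n 0
    have h2 := trans_full τ (g := ff τ) (fun w => ff_add_one τ w)
      (fun w => ff_add_tau τ hq1 w) m n 0
    rw [zero_add] at h1 h2
    rw [h1, h2, theta_zero, ff_zero]
    ring
  · have h0 : psi τ 0 = vv0 τ := by rw [psi, if_pos ⟨0, 0, by simp⟩]
    have hzz : psi τ z = thf τ z := by rw [psi, if_neg hz]
    have : thf τ z = vv0 τ := by rw [← hzz, hconst, h0]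
    rw [thf] at this
    rw [← this, div_mul_cancel₀ _ (ff_ne_zero τ hq1 hz)]

end liouville

section integralsec
open MeasureTheory

lemma jacobi_nonzero (hτ : 0 < τ.im) : ¬ (∀ x : ℝ, jacobiTheta₂ (x:ℂ) τ = 0) := by
  intro hall
  have hFcont : ∀ n : ℤ, Continuous (fun x : ℝ => jacobiTheta₂_term n (x:ℂ) τ) := by
    intro n
    unfold jacobiTheta₂_term
    fun_prop
  have hFint : ∀ n : ℤ, Integrable (fun x : ℝ => jacobiTheta₂_term n (x:ℂ) τ)
      (volume.restrict (Set.Ioc (0:ℝ) 1)) := fun n => (hFcont n).integrableOn_Ioc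
  have hnorm : ∀ (n : ℤ) (x : ℝ), ‖jacobiTheta₂_term n (x:ℂ) τ‖
      = Real.exp (-π * n^2 * τ.im) := by
    intro n x
    rw [norm_jacobiTheta₂_term]
    norm_num
  have hint : ∀ n : ℤ, (∫ x in Set.Ioc (0:ℝ) 1, ‖jacobiTheta₂_term n (x:ℂ) τ‖)
      = Real.exp (-π * n^2 * τ.im) := by
    intro n
    rw [setIntegral_congr_fun measurableSet_Ioc (fun x _ => hnorm n x),
      setIntegral_const]
    simp [Real.volume_Ioc]
  have hsum : Summable (fun n : ℤ => ∫ x in Set.Ioc (0:ℝ) 1, ‖jacobiTheta₂_term n (x:ℂ) τ‖) := by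
    have h := summable_pow_mul_jacobiTheta₂_term_bound 0 hτ 0
    simp only [pow_zero, one_mul, mul_zero, zero_mul, sub_zero] at h
    refine (summable_congr fun n => by rw [hint n]).2 (h.congr fun n => ?_)
    ring_nf
  have hkey := MeasureTheory.hasSum_integral_of_summable_integral_norm hFint hsum
  have hzero : (∫ x in Set.Ioc (0:ℝ) 1, ∑' n : ℤ, jacobiTheta₂_term n (x:ℂ) τ) = 0 := by
    have hx : ∀ x : ℝ, ∑' n : ℤ, jacobiTheta₂_term n (x:ℂ) τ = 0 := by
      intro x
      have := hall x
      rwa [jacobiTheta₂] at this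
    simp only [hx, integral_zero]
  rw [hzero] at hkey
  have heval : ∀ n : ℤ, (∫ x in Set.Ioc (0:ℝ) 1, jacobiTheta₂_term n (x:ℂ) τ)
      = if n = 0 then (1:ℂ) else 0 := by
    intro n
    rcases eq_or_ne n 0 with rfl | hn
    · rw [if_pos rfl]
      have h1 : ∀ x : ℝ, jacobiTheta₂_term (0:ℤ) (x:ℂ) τ = 1 := by
        intro x
        rw [jacobiTheta₂_term]
        push_cast
        simp
      rw [setIntegral_congr_fun measurableSet_Ioc (fun x _ => h1 x), setIntegral_const]
      simp [Real.volume_Ioc]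
    · rw [if_neg hn]
      have hterm : ∀ x : ℝ, jacobiTheta₂_term n (x:ℂ) τ
          = cexp (↑π*I*n^2*τ) * cexp ((2*↑π*I*n) * (x:ℂ)) := by
        intro x
        rw [jacobiTheta₂_term, ← Complex.exp_add]
        congr 1
        push_cast
        ring
      rw [setIntegral_congr_fun measurableSet_Ioc (fun x _ => hterm x), MeasureTheory.integral_const_mul]
      have hc : (2*↑π*I*(n:ℂ)) ≠ 0 :=
        mul_ne_zero (mul_ne_zero (mul_ne_zero two_ne_zero
          (Complex.ofReal_ne_zero.2 Real.pi_ne_zero)) Complex.I_ne_zero)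
          (Int.cast_ne_zero.2 hn)
      have h2 : (∫ x in Set.Ioc (0:ℝ) 1, cexp ((2*↑π*I*(n:ℂ)) * (x:ℂ))) = 0 := by
        rw [← intervalIntegral.integral_of_le zero_le_one, integral_exp_mul_complex hc]
        rw [Complex.ofReal_one, Complex.ofReal_zero, mul_one, mul_zero, Complex.exp_zero]
        rw [show (2*↑π*I*(n:ℂ)) = (n:ℂ)*(2*↑π*I) by ring, Complex.exp_int_mul_two_pi_mul_I]
        simp
      rw [h2, mul_zero]
  rw [show (fun n : ℤ => ∫ x in Set.Ioc (0:ℝ) 1, jacobiTheta₂_term n (x:ℂ) τ)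
      = (fun n : ℤ => if n = 0 then (1:ℂ) else 0) from funext heval] at hkey
  exact one_ne_zero ((hasSum_ite_eq (0:ℤ) (1:ℂ)).unique hkey)

lemma vv0_ne (hτ : 0 < τ.im) : vv0 τ ≠ 0 := by
  have hq1 := norm_qq_lt τ hτ
  intro h0
  apply jacobi_nonzero τ hτ
  intro x
  have hz := theta_repr τ ((x:ℂ) - (τ+1)/2)
  rw [show (x:ℂ) - (τ+1)/2 + (τ+1)/2 = (x:ℂ) by ring] at hz
  rw [theta_eq_c_mul_ff τ hτ hq1 ((x:ℂ) - (τ+1)/2), h0, zero_mul] at hz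
  rcases mul_eq_zero.1 hz.symm with h3 | h3
  · rcases mul_eq_zero.1 h3 with h4 | h4
    · refine absurd h4 ?_
      norm_num [Complex.I_ne_zero]
    · exact absurd h4 (Complex.exp_ne_zero _)
  · exact h3

end integralsec

end DTP

/-- For `τ` in the upper half-plane and `z ∉ L_τ`, with `q = e^{2πiτ}`, `q_z = e^{2πiz}`,
`δθ(z,τ) = πi·(q_z+1)/(q_z−1) − 2πi·Σ_{n≥1} (qⁿq_z/(1−qⁿq_z) − qⁿq_z⁻¹/(1−qⁿq_z⁻¹))`,
and the series converges absolutely. -/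
theorem dlogTheta_q_expansion (τ z : ℂ) (hτ : 0 < τ.im) (hz : ¬ InLattice τ z) :
    Summable (fun n : ℕ =>
      ‖Complex.exp (2 * π * I * τ) ^ (n + 1) * Complex.exp (2 * π * I * z) /
          (1 - Complex.exp (2 * π * I * τ) ^ (n + 1) * Complex.exp (2 * π * I * z)) -
        Complex.exp (2 * π * I * τ) ^ (n + 1) * (Complex.exp (2 * π * I * z))⁻¹ /
          (1 - Complex.exp (2 * π * I * τ) ^ (n + 1) * (Complex.exp (2 * π * I * z))⁻¹)‖) ∧
    dlogTheta z τ =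
      π * I * (Complex.exp (2 * π * I * z) + 1) / (Complex.exp (2 * π * I * z) - 1) -
      2 * π * I * ∑' n : ℕ,
        (Complex.exp (2 * π * I * τ) ^ (n + 1) * Complex.exp (2 * π * I * z) /
            (1 - Complex.exp (2 * π * I * τ) ^ (n + 1) * Complex.exp (2 * π * I * z)) -
          Complex.exp (2 * π * I * τ) ^ (n + 1) * (Complex.exp (2 * π * I * z))⁻¹ /
            (1 - Complex.exp (2 * π * I * τ) ^ (n + 1) * (Complex.exp (2 * π * I * z))⁻¹)) := by

  have hq1 := DTP.norm_qq_lt τ hτ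
  have hzL : ¬ DTP.InL τ z := hz
  constructor
  · exact DTP.gg_norm_summable τ hq1 hzL
  · have hc := DTP.theta_eq_c_mul_ff τ hτ hq1
    have hcne := DTP.vv0_ne τ hτ
    have hfun : (fun w => theta w τ) = fun w => DTP.vv0 τ * DTP.ff τ w := funext hc
    rw [dlogTheta, hfun, deriv_const_mul _ ((DTP.ff_diff τ hq1) z), hc z,
      mul_div_mul_left _ _ hcne]
    have hlog := DTP.logDeriv_ff τ hq1 hzL
    rw [logDeriv_apply] at hlog
    rw [hlog]
    simp only [DTP.xx, DTP.gg, DTP.qq]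
    ring
end
end

section
/- Let M be a left GL₂(ℚ)-module and let m ∈ M be fixed by every matrix in T₂(ℚ). Then there exists a GL₂(ℚ)-equivariant additive homomorphism φ : Δ₀ → M with φ(D_∞) = m if and only if m satisfies the Manin relations: m + S·m = 0 and m + R·m + R²·m = 0, where S = [[0,−1],[1,0]] and R = [[0,−1],[1,−1]]; moreover, when it exists, such φ is unique. -/
noncomputable section
open Matrix MatrixGroups

/-- the projective line `ℙ¹(ℚ)`, as the projectivization of `ℚ²` -/
abbrev ProjLine : Type := Projectivization ℚ (Fin 2 → ℚ)

lemma mulVecLin_injective (γ : GL (Fin 2) ℚ) :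
    Function.Injective ((γ : Matrix (Fin 2) (Fin 2) ℚ).mulVecLin) := by
  have h : Function.LeftInverse (((γ⁻¹ : GL (Fin 2) ℚ) : Matrix (Fin 2) (Fin 2) ℚ).mulVecLin)
      (((γ : GL (Fin 2) ℚ) : Matrix (Fin 2) (Fin 2) ℚ).mulVecLin) := by
    intro v
    have h1 : ((γ⁻¹ : GL (Fin 2) ℚ) : Matrix (Fin 2) (Fin 2) ℚ) *
        ((γ : GL (Fin 2) ℚ) : Matrix (Fin 2) (Fin 2) ℚ) = (1 : Matrix (Fin 2) (Fin 2) ℚ) := by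
      rw [← Units.val_mul, inv_mul_cancel, Units.val_one]
    have h2 := congrFun (congrArg DFunLike.coe (congrArg Matrix.mulVecLin h1)) v
    rw [Matrix.mulVecLin_mul, Matrix.mulVecLin_one] at h2
    exact h2
  exact h.injective

private lemma projMap_congr {f g : (Fin 2 → ℚ) →ₗ[ℚ] (Fin 2 → ℚ)} (h : f = g)
    (hf : Function.Injective f) (x : ProjLine) :
    Projectivization.map f hf x = Projectivization.map g (h ▸ hf) x := by
  subst h; rfl

/-- `GL₂(ℚ)` acts on `ℙ¹(ℚ)` by fractional linear transformations. -/
instance : MulAction (GL (Fin 2) ℚ) ProjLine where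
  smul γ x := Projectivization.map ((γ : Matrix (Fin 2) (Fin 2) ℚ).mulVecLin)
    (mulVecLin_injective γ) x
  one_smul x := by
    have h1 : (((1 : GL (Fin 2) ℚ) : Matrix (Fin 2) (Fin 2) ℚ)).mulVecLin
        = (LinearMap.id : (Fin 2 → ℚ) →ₗ[ℚ] (Fin 2 → ℚ)) := by
      simp [Matrix.mulVecLin_one]
    show Projectivization.map _ (mulVecLin_injective 1) x = x
    rw [projMap_congr h1]
    exact congrFun Projectivization.map_id x
  mul_smul a b x := by
    have h1 : (((a * b : GL (Fin 2) ℚ) : Matrix (Fin 2) (Fin 2) ℚ)).mulVecLin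
        = ((a : Matrix (Fin 2) (Fin 2) ℚ).mulVecLin).comp
            ((b : Matrix (Fin 2) (Fin 2) ℚ).mulVecLin) := by
      simp [Units.val_mul, Matrix.mulVecLin_mul]
    show Projectivization.map _ (mulVecLin_injective (a * b)) x = _
    rw [projMap_congr h1]
    exact congrFun (Projectivization.map_comp _ (mulVecLin_injective b) _
      (mulVecLin_injective a)) x

/-- the total degree of a divisor on `ℙ¹(ℚ)` -/
def degree : (ProjLine →₀ ℤ) →+ ℤ := Finsupp.liftAddHom fun _ => AddMonoidHom.id ℤ

/-- `Δ₀ = Div⁰(ℙ¹(ℚ))`, the group of degree-zero divisors on `ℙ¹(ℚ)` -/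
def Delta0 : AddSubgroup (ProjLine →₀ ℤ) := degree.ker

lemma degree_mapDomain (f : ProjLine → ProjLine) (D : ProjLine →₀ ℤ) :
    degree (Finsupp.mapDomain f D) = degree D := by
  simp only [degree, Finsupp.liftAddHom_apply, AddMonoidHom.id_apply]
  exact Finsupp.sum_mapDomain_index (fun _ => rfl) (fun _ _ _ => rfl)

/-- the induced action of `γ ∈ GL₂(ℚ)` on degree-zero divisors -/
def smulDiv (γ : GL (Fin 2) ℚ) (D : Delta0) : Delta0 :=
  ⟨Finsupp.mapDomain (fun x => γ • x) D.1, by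
    have hD : degree D.1 = 0 := AddMonoidHom.mem_ker.mp D.2
    show Finsupp.mapDomain _ _ ∈ degree.ker
    rw [AddMonoidHom.mem_ker, degree_mapDomain, hD]⟩

/-- the point `∞ = [1:0] ∈ ℙ¹(ℚ)` -/
def inftyPt : ProjLine := Projectivization.mk ℚ ![1, 0] (by
  intro h; simpa using congrFun h 0)

/-- the point `0 = [0:1] ∈ ℙ¹(ℚ)` -/
def zeroPt : ProjLine := Projectivization.mk ℚ ![0, 1] (by
  intro h; simpa using congrFun h 1)

/-- the divisor `D_∞ = [∞] − [0] ∈ Δ₀` -/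
def Dinf : Delta0 :=
  ⟨Finsupp.single inftyPt 1 - Finsupp.single zeroPt 1, by
    show _ ∈ degree.ker
    rw [AddMonoidHom.mem_ker, map_sub]
    simp [degree, Finsupp.liftAddHom_apply_single]⟩


/-- the matrix `S = [[0,−1],[1,0]]` as an element of `GL₂(ℚ)` -/
def Smat : GL (Fin 2) ℚ :=
  ⟨!![0, -1; 1, 0], !![0, 1; -1, 0],
    by norm_num [Matrix.mul_fin_two, Matrix.one_fin_two.symm],
    by norm_num [Matrix.mul_fin_two, Matrix.one_fin_two.symm]⟩

/-- the matrix `R = [[0,−1],[1,−1]]` as an element of `GL₂(ℚ)` -/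
def Rmat : GL (Fin 2) ℚ :=
  ⟨!![0, -1; 1, -1], !![-1, 1; -1, 0],
    by norm_num [Matrix.mul_fin_two, Matrix.one_fin_two.symm],
    by norm_num [Matrix.mul_fin_two, Matrix.one_fin_two.symm]⟩

/-! ### Basic infrastructure -/

open Projectivization in
lemma smul_mk (γ : GL (Fin 2) ℚ) (v : Fin 2 → ℚ) (hv : v ≠ 0) :
    γ • Projectivization.mk ℚ v hv =
      Projectivization.mk ℚ ((γ : Matrix (Fin 2) (Fin 2) ℚ).mulVec v)
        (by simpa using (mulVecLin_injective γ).ne_iff' (map_zero _) |>.mpr hv) := by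
  show Projectivization.map _ (mulVecLin_injective γ) _ = _
  rw [Projectivization.map_mk]
  rfl

lemma vec_eta (u : Fin 2 → ℚ) : ![u 0, u 1] = u := by
  funext i; fin_cases i <;> rfl

lemma vec_ne_zero {a b : ℚ} (h : a ≠ 0 ∨ b ≠ 0) : ![a, b] ≠ 0 := by
  intro hc
  rcases h with h | h
  · exact h (by simpa using congrFun hc 0)
  · exact h (by simpa using congrFun hc 1)

lemma mk_eq_mk_iff_det {a b c d : ℚ} (h1 : ![a, b] ≠ 0) (h2 : ![c, d] ≠ 0) :
    Projectivization.mk ℚ ![a, b] h1 = Projectivization.mk ℚ ![c, d] h2 ↔ a * d = b * c := by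
  rw [Projectivization.mk_eq_mk_iff']
  constructor
  · rintro ⟨t, ht⟩
    have h0 : t * c = a := by simpa using congrFun ht 0
    have h1' : t * d = b := by simpa using congrFun ht 1
    subst h0 h1'; ring
  · intro hdet
    rcases (by by_contra hc; push_neg at hc; exact h2 (by rw [hc.1, hc.2]; funext i; fin_cases i <;> rfl) :
        c ≠ 0 ∨ d ≠ 0) with hc | hd
    · refine ⟨a / c, ?_⟩
      funext i; fin_cases i
      · simp [div_mul_cancel₀, hc]
      · show a / c * d = b
        field_simp
        linarith [hdet]
    · refine ⟨b / d, ?_⟩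
      funext i; fin_cases i
      · show b / d * c = a
        field_simp
        linarith [hdet]
      · simp [div_mul_cancel₀, hd]
/-- `GL₂` element from four entries with nonzero determinant. -/
def glQ (a b c d : ℚ) (h : a * d - b * c ≠ 0) : GL (Fin 2) ℚ :=
  Matrix.GeneralLinearGroup.mkOfDetNeZero !![a, b; c, d] (by rwa [Matrix.det_fin_two_of])

@[simp] lemma glQ_val (a b c d : ℚ) (h : a * d - b * c ≠ 0) :
    (glQ a b c d h : Matrix (Fin 2) (Fin 2) ℚ) = !![a, b; c, d] := rfl

lemma mulVec_pair (a b c d x y : ℚ) :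
    (!![a, b; c, d]).mulVec ![x, y] = ![a * x + b * y, c * x + d * y] := by
  funext i
  fin_cases i <;>
    simp [Matrix.mulVec, dotProduct, Fin.sum_univ_two]

/-- the point of `ℙ¹(ℚ)` with homogeneous coordinates `[a : b]` -/
def ptv (a b : ℚ) (h : a ≠ 0 ∨ b ≠ 0) : ProjLine :=
  Projectivization.mk ℚ ![a, b] (vec_ne_zero h)

lemma ptv_eq_ptv_iff {a b c d : ℚ} (h1 : a ≠ 0 ∨ b ≠ 0) (h2 : c ≠ 0 ∨ d ≠ 0) :
    ptv a b h1 = ptv c d h2 ↔ a * d = b * c := mk_eq_mk_iff_det _ _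

lemma inftyPt_eq : inftyPt = ptv 1 0 (Or.inl one_ne_zero) := rfl
lemma zeroPt_eq : zeroPt = ptv 0 1 (Or.inr one_ne_zero) := rfl

lemma glQ_smul_ptv (a b c d : ℚ) (h : a * d - b * c ≠ 0) (x y : ℚ) (hxy : x ≠ 0 ∨ y ≠ 0)
    (h2 : a * x + b * y ≠ 0 ∨ c * x + d * y ≠ 0) :
    glQ a b c d h • ptv x y hxy = ptv (a * x + b * y) (c * x + d * y) h2 := by
  show _ • Projectivization.mk ℚ _ _ = _
  rw [smul_mk]
  have hv : (glQ a b c d h : Matrix (Fin 2) (Fin 2) ℚ).mulVec ![x, y]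
      = ![a * x + b * y, c * x + d * y] := by rw [glQ_val, mulVec_pair]
  exact Projectivization.mk_eq_mk_iff' ℚ _ _ _ _ |>.2 (⟨1, by rw [hv, one_smul]⟩)

lemma glQ_smul_infty (a b c d : ℚ) (h : a * d - b * c ≠ 0)
    (h2 : a ≠ 0 ∨ c ≠ 0) :
    glQ a b c d h • inftyPt = ptv a c h2 := by
  rw [inftyPt_eq, glQ_smul_ptv a b c d h 1 0 _ (by simpa using h2)]
  apply (ptv_eq_ptv_iff _ _).2; ring

lemma glQ_smul_zero (a b c d : ℚ) (h : a * d - b * c ≠ 0)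
    (h2 : b ≠ 0 ∨ d ≠ 0) :
    glQ a b c d h • zeroPt = ptv b d h2 := by
  rw [zeroPt_eq, glQ_smul_ptv a b c d h 0 1 _ (by simpa using h2)]
  apply (ptv_eq_ptv_iff _ _).2; ring
lemma Smat_eq : Smat = glQ 0 (-1) 1 0 (by norm_num) := Units.ext rfl
lemma Rmat_eq : Rmat = glQ 0 (-1) 1 (-1) (by norm_num) := Units.ext rfl

/-- the point `1 = [1:1]` -/
def onePt : ProjLine := ptv 1 1 (Or.inl one_ne_zero)

lemma ne_zero_or (v : Fin 2 → ℚ) (hv : v ≠ 0) : v 0 ≠ 0 ∨ v 1 ≠ 0 := by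
  by_contra hc; push_neg at hc
  exact hv (by funext i; fin_cases i; exacts [hc.1, hc.2])

lemma mk_eq_ptv (v : Fin 2 → ℚ) (hv : v ≠ 0) (h : v 0 ≠ 0 ∨ v 1 ≠ 0) :
    Projectivization.mk ℚ v hv = ptv (v 0) (v 1) h :=
  (Projectivization.mk_eq_mk_iff' ℚ _ _ _ _).2 ⟨1, by rw [one_smul]; exact (vec_eta v)⟩

lemma gl_image_ne (g : GL (Fin 2) ℚ) (x y : ℚ) (h : x ≠ 0 ∨ y ≠ 0) :
    (g : Matrix (Fin 2) (Fin 2) ℚ) 0 0 * x + (g : Matrix (Fin 2) (Fin 2) ℚ) 0 1 * y ≠ 0 ∨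
      (g : Matrix (Fin 2) (Fin 2) ℚ) 1 0 * x + (g : Matrix (Fin 2) (Fin 2) ℚ) 1 1 * y ≠ 0 := by
  set A := (g : Matrix (Fin 2) (Fin 2) ℚ) with hA
  have hv : ![x, y] ≠ 0 := vec_ne_zero h
  have hmv : A.mulVec ![x, y] = ![A 0 0 * x + A 0 1 * y, A 1 0 * x + A 1 1 * y] := by
    rw [Matrix.eta_fin_two A, mulVec_pair]; simp
  have hnz : A.mulVec ![x, y] ≠ 0 := by
    intro hc
    exact hv (mulVecLin_injective g (by simpa [Matrix.mulVecLin_apply] using hc))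
  have := ne_zero_or _ hnz
  rw [hmv] at this
  simpa using this

lemma gl_smul_ptv (g : GL (Fin 2) ℚ) (x y : ℚ) (h : x ≠ 0 ∨ y ≠ 0)
    (h2 : (g : Matrix (Fin 2) (Fin 2) ℚ) 0 0 * x + (g : Matrix (Fin 2) (Fin 2) ℚ) 0 1 * y ≠ 0 ∨
      (g : Matrix (Fin 2) (Fin 2) ℚ) 1 0 * x + (g : Matrix (Fin 2) (Fin 2) ℚ) 1 1 * y ≠ 0) :
    g • ptv x y h =
      ptv ((g : Matrix (Fin 2) (Fin 2) ℚ) 0 0 * x + (g : Matrix (Fin 2) (Fin 2) ℚ) 0 1 * y)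
        ((g : Matrix (Fin 2) (Fin 2) ℚ) 1 0 * x + (g : Matrix (Fin 2) (Fin 2) ℚ) 1 1 * y) h2 := by
  set A := (g : Matrix (Fin 2) (Fin 2) ℚ) with hA
  have hmv : A.mulVec ![x, y] = ![A 0 0 * x + A 0 1 * y, A 1 0 * x + A 1 1 * y] := by
    rw [Matrix.eta_fin_two A, mulVec_pair]; simp
  show g • Projectivization.mk ℚ _ _ = _
  rw [smul_mk, mk_eq_ptv _ _ (by rw [hmv]; simpa using h2)]
  apply (Projectivization.mk_eq_mk_iff' ℚ _ _ _ _).2 ⟨1, ?_⟩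
  rw [one_smul]
  funext i; fin_cases i <;> simp [hmv]

lemma Smat_smul_infty : Smat • inftyPt = zeroPt := by
  rw [inftyPt_eq, gl_smul_ptv _ _ _ _ (by rw [Smat_eq, glQ_val]; norm_num), zeroPt_eq]
  rw [ptv_eq_ptv_iff]; rw [Smat_eq, glQ_val]; norm_num
lemma Smat_smul_zero : Smat • zeroPt = inftyPt := by
  rw [zeroPt_eq, gl_smul_ptv _ _ _ _ (by rw [Smat_eq, glQ_val]; norm_num), inftyPt_eq]
  rw [ptv_eq_ptv_iff]; rw [Smat_eq, glQ_val]; norm_num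
lemma Rmat_smul_infty : Rmat • inftyPt = zeroPt := by
  rw [inftyPt_eq, gl_smul_ptv _ _ _ _ (by rw [Rmat_eq, glQ_val]; norm_num), zeroPt_eq]
  rw [ptv_eq_ptv_iff]; rw [Rmat_eq, glQ_val]; norm_num
lemma Rmat_smul_zero : Rmat • zeroPt = onePt := by
  rw [zeroPt_eq, gl_smul_ptv _ _ _ _ (by rw [Rmat_eq, glQ_val]; norm_num), onePt]
  rw [ptv_eq_ptv_iff]; rw [Rmat_eq, glQ_val]; norm_num
lemma Rmat_smul_one : Rmat • onePt = inftyPt := by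
  rw [onePt, gl_smul_ptv _ _ _ _ (by rw [Rmat_eq, glQ_val]; norm_num), inftyPt_eq]
  rw [ptv_eq_ptv_iff]; rw [Rmat_eq, glQ_val]; norm_num

lemma infty_ne_zeroPt : inftyPt ≠ zeroPt := by
  rw [inftyPt_eq, zeroPt_eq, Ne, ptv_eq_ptv_iff]; norm_num

/-- a `GL₂`-element fixing `∞` and `0` is diagonal -/
lemma diag_of_fixes (t : GL (Fin 2) ℚ) (h1 : t • inftyPt = inftyPt) (h2 : t • zeroPt = zeroPt) :
    ∃ a d : ℚ, (t : Matrix (Fin 2) (Fin 2) ℚ) = !![a, 0; 0, d] := by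
  set A := (t : Matrix (Fin 2) (Fin 2) ℚ) with hA
  rw [inftyPt_eq, gl_smul_ptv t 1 0 _ (gl_image_ne t 1 0 (Or.inl one_ne_zero)),
    ptv_eq_ptv_iff] at h1
  rw [zeroPt_eq, gl_smul_ptv t 0 1 _ (gl_image_ne t 0 1 (Or.inr one_ne_zero)),
    ptv_eq_ptv_iff] at h2
  refine ⟨A 0 0, A 1 1, ?_⟩
  have e1 : A 1 0 = 0 := by rw [← hA] at h1; linarith [h1]
  have e2 : A 0 1 = 0 := by rw [← hA] at h2; linarith [h2]
  have e3 := Matrix.eta_fin_two A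
  rw [e1, e2] at e3
  exact e3
/-! ### distinct points give independent representatives; triple transitivity -/

lemma rep_or (P : ProjLine) : P.rep 0 ≠ 0 ∨ P.rep 1 ≠ 0 :=
  ne_zero_or _ (Projectivization.rep_nonzero P)

lemma mk_rep_ptv (P : ProjLine) : ptv (P.rep 0) (P.rep 1) (rep_or P) = P := by
  rw [← mk_eq_ptv _ (Projectivization.rep_nonzero P)]
  exact Projectivization.mk_rep P

lemma det_rep_ne {x y : ProjLine} (h : x ≠ y) :
    x.rep 0 * y.rep 1 - y.rep 0 * x.rep 1 ≠ 0 := by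
  intro hc
  apply h
  rw [← mk_rep_ptv x, ← mk_rep_ptv y, ptv_eq_ptv_iff]
  linarith

lemma exists_g (x y z : ProjLine) (hxy : x ≠ y) (hyz : y ≠ z) (hzx : z ≠ x) :
    ∃ g : GL (Fin 2) ℚ, g • inftyPt = x ∧ g • zeroPt = y ∧ g • onePt = z := by
  set u0 := x.rep 0; set u1 := x.rep 1
  set v0 := y.rep 0; set v1 := y.rep 1
  set w0 := z.rep 0; set w1 := z.rep 1
  have duv : u0 * v1 - v0 * u1 ≠ 0 := det_rep_ne hxy
  have dvw : v0 * w1 - w0 * v1 ≠ 0 := det_rep_ne hyz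
  have dwu : w0 * u1 - u0 * w1 ≠ 0 := det_rep_ne hzx
  -- solve α•(u0,u1) + β•(v0,v1) = (w0,w1)
  set α : ℚ := (w0 * v1 - v0 * w1) / (u0 * v1 - v0 * u1) with hα
  set β : ℚ := (u0 * w1 - w0 * u1) / (u0 * v1 - v0 * u1) with hβ
  have hαne : α ≠ 0 := by
    rw [hα, div_ne_zero_iff]
    constructor
    · intro hc; apply dvw; linarith
    · exact duv
  have hβne : β ≠ 0 := by
    rw [hβ, div_ne_zero_iff]
    constructor
    · intro hc; apply dwu; linarith
    · exact duv
  have e0 : α * u0 + β * v0 = w0 := by rw [hα, hβ, div_mul_eq_mul_div, div_mul_eq_mul_div, ← add_div, div_eq_iff duv]; ring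
  have e1 : α * u1 + β * v1 = w1 := by rw [hα, hβ, div_mul_eq_mul_div, div_mul_eq_mul_div, ← add_div, div_eq_iff duv]; ring
  have hdet : α * u0 * (β * v1) - β * v0 * (α * u1) ≠ 0 := by
    intro hc
    exact duv (by
      have : α * β * (u0 * v1 - v0 * u1) = 0 := by linarith [hc]
      rcases mul_eq_zero.1 this with h | h
      · rcases mul_eq_zero.1 h with h' | h'
        · exact absurd h' hαne
        · exact absurd h' hβne
      · exact h)
  have ptv_eq_of : ∀ (a b : ℚ) (h : a ≠ 0 ∨ b ≠ 0) (P : ProjLine),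
      a * P.rep 1 = b * P.rep 0 → ptv a b h = P := by
    intro a b h P hd
    exact ((ptv_eq_ptv_iff h (rep_or P)).2 hd).trans (mk_rep_ptv P)
  have hw : α * u0 * 1 + β * v0 * 1 = w0 := by rw [mul_one, mul_one]; exact e0
  have hw' : α * u1 * 1 + β * v1 * 1 = w1 := by rw [mul_one, mul_one]; exact e1
  refine ⟨glQ (α * u0) (β * v0) (α * u1) (β * v1) hdet, ?_, ?_, ?_⟩
  · rw [glQ_smul_infty _ _ _ _ _ (by
      rcases rep_or x with h | h
      · exact Or.inl (mul_ne_zero hαne h)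
      · exact Or.inr (mul_ne_zero hαne h))]
    exact ptv_eq_of _ _ _ x (by show α * u0 * u1 = α * u1 * u0; ring)
  · rw [glQ_smul_zero _ _ _ _ _ (by
      rcases rep_or y with h | h
      · exact Or.inl (mul_ne_zero hβne h)
      · exact Or.inr (mul_ne_zero hβne h))]
    exact ptv_eq_of _ _ _ y (by show β * v0 * v1 = β * v1 * v0; ring)
  · rw [onePt, glQ_smul_ptv _ _ _ _ _ 1 1 (Or.inl one_ne_zero) (by
      rw [hw, hw']; exact rep_or z)]
    exact ptv_eq_of _ _ _ z (by rw [hw, hw']; show w0 * w1 = w1 * w0; ring)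
/-! ### the continued-fraction parent of a rational -/

/-- `qp x` is the representative in `[0, den)` of the inverse of `x.num` mod `x.den` -/
def qp (x : ℚ) : ℕ := (Ring.inverse ((x.num : ZMod x.den))).val

def pp (x : ℚ) : ℤ := (x.num * qp x - 1) / (x.den : ℤ)

lemma isUnit_num_zmod (x : ℚ) : IsUnit ((x.num : ZMod x.den)) := by
  have h : IsUnit ((x.num.natAbs : ZMod x.den)) := (ZMod.isUnit_iff_coprime _ _).2 x.reduced
  rcases Int.natAbs_eq x.num with he | he
  · rw [he, Int.cast_natCast]; exact h
  · rw [he, Int.cast_neg, Int.cast_natCast]; exact h.neg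

lemma den_dvd_qp (x : ℚ) : (x.den : ℤ) ∣ x.num * qp x - 1 := by
  haveI : NeZero x.den := ⟨x.den_nz⟩
  rw [← ZMod.intCast_zmod_eq_zero_iff_dvd]
  push_cast
  rw [qp, ZMod.natCast_zmod_val, Ring.mul_inverse_cancel _ (isUnit_num_zmod x), sub_self]

lemma det_pq (x : ℚ) : x.num * (qp x) - pp x * x.den = 1 := by
  have h := Int.ediv_mul_cancel (den_dvd_qp x)
  rw [pp]
  omega

lemma qp_lt (x : ℚ) : qp x < x.den := by
  haveI : NeZero x.den := ⟨x.den_nz⟩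
  exact ZMod.val_lt _

lemma qp_pos (x : ℚ) (hd : x.den ≠ 1) : 0 < qp x := by
  rcases Nat.eq_zero_or_pos (qp x) with h | h
  · exfalso
    have hd2 := det_pq x
    rw [h] at hd2
    push_cast at hd2
    have : (x.den : ℤ) ∣ 1 := ⟨-(pp x), by linarith⟩
    have h1 : (x.den : ℤ) ≤ 1 := Int.le_of_dvd one_pos this
    have h2 : (1 : ℤ) ≤ x.den := by exact_mod_cast Nat.one_le_iff_ne_zero.2 x.den_nz
    have : x.den = 1 := by omega
    exact hd this
  · exact h

lemma parent_den_lt (x : ℚ) (hd : x.den ≠ 1) : ((pp x : ℚ) / (qp x : ℚ)).den < x.den := by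
  have h1 : ((pp x : ℚ) / (qp x : ℚ)) = Rat.divInt (pp x) (qp x) := by
    rw [Rat.divInt_eq_div]; norm_cast
  have h2 : ((Rat.divInt (pp x) (qp x)).den : ℤ) ∣ (qp x : ℤ) := Rat.den_dvd _ _
  have h3 : (Rat.divInt (pp x) (qp x)).den ≤ qp x := by
    have := Int.le_of_dvd (by exact_mod_cast qp_pos x hd) h2
    exact_mod_cast this
  rw [h1]
  exact lt_of_le_of_lt h3 (qp_lt x)

lemma det_pq_Q (x : ℚ) : (x.num : ℚ) * (qp x : ℚ) - (pp x : ℚ) * (x.den : ℚ) ≠ 0 := by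
  intro hc
  have h2 : ((x.num * (qp x : ℤ) - pp x * (x.den : ℤ) : ℤ) : ℚ) = 0 := by push_cast; linarith
  rw [det_pq x] at h2
  norm_num at h2

/-- the Manin–continued-fraction function `ξ : ℚ → M` -/
def xiAux {M : Type*} [AddCommGroup M] [DistribMulAction (GL (Fin 2) ℚ) M] (m : M)
    (x : ℚ) : M :=
  if hd : x.den = 1 then
    glQ (x.num) (-1) 1 0 (by norm_num) • m
  else
    xiAux m ((pp x : ℚ) / (qp x : ℚ)) +
      glQ (x.num) (pp x) (x.den) (qp x) (det_pq_Q x) • m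
termination_by x.den
decreasing_by exact parent_den_lt x hd

lemma xiAux_one {M : Type*} [AddCommGroup M] [DistribMulAction (GL (Fin 2) ℚ) M] (m : M)
    (x : ℚ) (hd : x.den = 1) :
    xiAux m x = glQ (x.num) (-1) 1 0 (by norm_num) • m := by
  rw [xiAux, dif_pos hd]

lemma xiAux_step {M : Type*} [AddCommGroup M] [DistribMulAction (GL (Fin 2) ℚ) M] (m : M)
    (x : ℚ) (hd : x.den ≠ 1) :
    xiAux m x = xiAux m ((pp x : ℚ) / (qp x : ℚ)) +
      glQ (x.num) (pp x) (x.den) (qp x) (det_pq_Q x) • m := by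
  rw [xiAux, dif_neg hd]
/-- rational points of `ℙ¹(ℚ)` -/
def ptQ (x : ℚ) : ProjLine := ptv x 1 (Or.inr one_ne_zero)

lemma ptQ_inj {a b : ℚ} (h : ptQ a = ptQ b) : a = b := by
  rw [ptQ, ptQ, ptv_eq_ptv_iff] at h
  simpa using h

lemma ptQ_ne_infty (a : ℚ) : ptQ a ≠ inftyPt := by
  rw [ptQ, inftyPt_eq, Ne, ptv_eq_ptv_iff]
  norm_num

lemma zeroPt_eq_ptQ : zeroPt = ptQ 0 := by
  rw [zeroPt_eq, ptQ, ptv_eq_ptv_iff]; norm_num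

lemma point_cases (P : ProjLine) : P = inftyPt ∨ ∃ t : ℚ, P = ptQ t := by
  induction P using Projectivization.ind with
  | h v hv =>
    rcases eq_or_ne (v 1) 0 with h1 | h1
    · left
      rw [mk_eq_ptv v hv (ne_zero_or v hv), inftyPt_eq, ptv_eq_ptv_iff, h1]
      ring
    · right
      refine ⟨v 0 / v 1, ?_⟩
      rw [mk_eq_ptv v hv (ne_zero_or v hv), ptQ, ptv_eq_ptv_iff]
      field_simp

/-- the extension of `ξ` to `ℙ¹(ℚ)`, with `ξ(∞) = 0` -/
def Xi {M : Type*} [AddCommGroup M] [DistribMulAction (GL (Fin 2) ℚ) M] (m : M)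
    (P : ProjLine) : M :=
  if h : P.rep 1 = 0 then 0 else xiAux m (P.rep 0 / P.rep 1)

section ManinSec

variable {M : Type*} [AddCommGroup M] [DistribMulAction (GL (Fin 2) ℚ) M] (m : M)

lemma Xi_infty : Xi m inftyPt = 0 := by
  obtain ⟨c, hc⟩ := Projectivization.exists_smul_eq_mk_rep ℚ ![(1 : ℚ), 0]
    (vec_ne_zero (Or.inl one_ne_zero))
  have h1 : inftyPt.rep 1 = 0 := by
    have he : inftyPt = Projectivization.mk ℚ ![(1 : ℚ), 0]
        (vec_ne_zero (Or.inl one_ne_zero)) := rfl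
    rw [he, ← hc]
    simp
  rw [Xi, dif_pos h1]

lemma Xi_ptQ (t : ℚ) : Xi m (ptQ t) = xiAux m t := by
  obtain ⟨c, hc⟩ := Projectivization.exists_smul_eq_mk_rep ℚ ![t, 1]
    (vec_ne_zero (Or.inr one_ne_zero))
  have he : ptQ t = Projectivization.mk ℚ ![t, 1] (vec_ne_zero (Or.inr one_ne_zero)) := rfl
  have h1 : (ptQ t).rep 1 = (c : ℚ) := by
    rw [he, ← hc]; simp [Units.smul_def]
  have h0 : (ptQ t).rep 0 = (c : ℚ) * t := by
    rw [he, ← hc]; simp [Units.smul_def]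
  rw [Xi, dif_neg (by rw [h1]; exact c.ne_zero), h1, h0,
    mul_div_cancel_left₀ _ c.ne_zero]

/-- the defect of the modular-symbol property for `g` -/
def DD (g : GL (Fin 2) ℚ) : M :=
  Xi m (g • inftyPt) - Xi m (g • zeroPt) - g • m

variable (hm : ∀ γ : GL (Fin 2) ℚ,
      (∃ a d : ℚ, (γ : Matrix (Fin 2) (Fin 2) ℚ) = !![a, 0; 0, d]) → γ • m = m)
variable (hS : m + Smat • m = 0)
variable (hR : m + Rmat • m + Rmat ^ 2 • m = 0)
include hm in
lemma smul_m_congr {g g' : GL (Fin 2) ℚ} (h1 : g • inftyPt = g' • inftyPt)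
    (h2 : g • zeroPt = g' • zeroPt) : g • m = g' • m := by
  set t := g⁻¹ * g' with ht
  have f1 : t • inftyPt = inftyPt := by
    rw [ht, mul_smul, ← h1, inv_smul_smul]
  have f2 : t • zeroPt = zeroPt := by
    rw [ht, mul_smul, ← h2, inv_smul_smul]
  have hmt : t • m = m := hm t (diag_of_fixes t f1 f2)
  have hg' : g' = g * t := by rw [ht, mul_inv_cancel_left]
  rw [hg', mul_smul, hmt]

include hm in
lemma DD_congr {g g' : GL (Fin 2) ℚ} (h1 : g • inftyPt = g' • inftyPt)
    (h2 : g • zeroPt = g' • zeroPt) : DD m g = DD m g' := by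
  rw [DD, DD, h1, h2, smul_m_congr m hm h1 h2]

lemma smul_infty_ne_smul_zero (g : GL (Fin 2) ℚ) : g • inftyPt ≠ g • zeroPt := by
  intro h
  exact infty_ne_zeroPt (smul_left_cancel g h)

/-- `Cl x y` says every `g` carrying `(∞,0)` to `(x,y)` has vanishing defect -/
def Cl (x y : ProjLine) : Prop :=
  ∀ g : GL (Fin 2) ℚ, g • inftyPt = x → g • zeroPt = y → DD m g = 0

include hm in
lemma cl_of {x y : ProjLine} (g₀ : GL (Fin 2) ℚ) (h1 : g₀ • inftyPt = x)
    (h2 : g₀ • zeroPt = y) (h3 : DD m g₀ = 0) : Cl m x y := by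
  intro g hg1 hg2
  rw [DD_congr m hm (g' := g₀) (by rw [h1, hg1]) (by rw [h2, hg2])]
  exact h3

include hS in
lemma Smat_smul_m : Smat • m = -m := by
  have h := hS
  linear_combination (norm := abel_nf) h

include hS in
lemma DD_mul_S (g : GL (Fin 2) ℚ) : DD m (g * Smat) = - DD m g := by
  rw [DD, DD, mul_smul, mul_smul, Smat_smul_infty, Smat_smul_zero,
    mul_smul, Smat_smul_m m hS, smul_neg]
  abel

include hR in
lemma DD_R_cycle (g : GL (Fin 2) ℚ) :
    DD m g + DD m (g * Rmat) + DD m (g * Rmat * Rmat) = 0 := by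
  have hRR : m + Rmat • m + Rmat • Rmat • m = 0 := by
    rw [← mul_smul, ← pow_two]; exact hR
  have i1 : (g * Rmat) • inftyPt = g • zeroPt := by
    rw [mul_smul, Rmat_smul_infty]
  have i2 : (g * Rmat) • zeroPt = g • onePt := by
    rw [mul_smul, Rmat_smul_zero]
  have i3 : (g * Rmat * Rmat) • inftyPt = g • onePt := by
    rw [mul_smul, mul_smul, Rmat_smul_infty, Rmat_smul_zero]
  have i4 : (g * Rmat * Rmat) • zeroPt = g • inftyPt := by
    rw [mul_smul, mul_smul, Rmat_smul_zero, Rmat_smul_one]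
  have i5 : (g * Rmat) • m = g • (Rmat • m) := mul_smul _ _ _
  have i6 : (g * Rmat * Rmat) • m = g • (Rmat • Rmat • m) := by
    rw [mul_smul, mul_smul]
  rw [DD, DD, DD, i1, i2, i3, i4, i5, i6]
  have key : g • m + g • (Rmat • m) + g • (Rmat • Rmat • m) = 0 := by
    rw [← smul_add, ← smul_add, hRR, smul_zero]
  have expand : (Xi m (g • inftyPt) - Xi m (g • zeroPt) - g • m) +
      (Xi m (g • zeroPt) - Xi m (g • onePt) - g • (Rmat • m)) +
      (Xi m (g • onePt) - Xi m (g • inftyPt) - g • (Rmat • Rmat • m)) =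
      -(g • m + g • (Rmat • m) + g • (Rmat • Rmat • m)) := by abel
  rw [expand, key, neg_zero]

include hS in
lemma cl_symm {x y : ProjLine} (h : Cl m x y) : Cl m y x := by
  intro g hg1 hg2
  have h1 : (g * Smat) • inftyPt = x := by
    rw [mul_smul, Smat_smul_infty, hg2]
  have h2 : (g * Smat) • zeroPt = y := by
    rw [mul_smul, Smat_smul_zero, hg1]
  have h3 := h (g * Smat) h1 h2
  rw [DD_mul_S m hS, neg_eq_zero] at h3
  exact h3

include hm hR in
lemma cl_triangle {x y z : ProjLine} (hxy : x ≠ y) (hyz : y ≠ z) (hzx : z ≠ x)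
    (h1 : Cl m y z) (h2 : Cl m z x) : Cl m x y := by
  obtain ⟨g₀, e1, e2, e3⟩ := exists_g x y z hxy hyz hzx
  refine cl_of m hm g₀ e1 e2 ?_
  have d1 : DD m (g₀ * Rmat) = 0 := by
    refine h1 (g₀ * Rmat) ?_ ?_
    · rw [mul_smul, Rmat_smul_infty, e2]
    · rw [mul_smul, Rmat_smul_zero, e3]
  have d2 : DD m (g₀ * Rmat * Rmat) = 0 := by
    refine h2 (g₀ * Rmat * Rmat) ?_ ?_
    · rw [mul_smul, mul_smul, Rmat_smul_infty, Rmat_smul_zero, e3]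
    · rw [mul_smul, mul_smul, Rmat_smul_zero, Rmat_smul_one, e1]
  have d3 := DD_R_cycle m hR g₀
  rw [d1, d2] at d3
  simpa using d3
lemma glQ_mul (a b c d e f gg hh : ℚ) (h1 : a * d - b * c ≠ 0) (h2 : e * hh - f * gg ≠ 0)
    (h3 : (a * e + b * gg) * (c * f + d * hh) - (a * f + b * hh) * (c * e + d * gg) ≠ 0) :
    glQ a b c d h1 * glQ e f gg hh h2 =
      glQ (a * e + b * gg) (a * f + b * hh) (c * e + d * gg) (c * f + d * hh) h3 :=
  Units.ext (by
    show (glQ a b c d h1 : Matrix (Fin 2) (Fin 2) ℚ) * (glQ e f gg hh h2) = _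
    rw [glQ_val, glQ_val, glQ_val, Matrix.mul_fin_two])

include hm hS in
lemma clBase (x : ℚ) (hd : x.den = 1) : Cl m (ptQ x) inftyPt := by
  have hnum : (x.num : ℚ) = x := by
    conv_rhs => rw [← Rat.num_div_den x]
    rw [hd]; simp
  have hdet : (x.num : ℚ) * 0 - 1 * 1 ≠ 0 := by norm_num
  refine cl_of m hm (glQ (x.num) 1 1 0 hdet) ?_ ?_ ?_
  · rw [glQ_smul_infty _ _ _ _ _ (Or.inr one_ne_zero), ptQ, ptv_eq_ptv_iff, hnum]
    ring
  · rw [glQ_smul_zero _ _ _ _ _ (Or.inl one_ne_zero), inftyPt_eq, ptv_eq_ptv_iff]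
    ring
  · have e1 : glQ (x.num) 1 1 0 hdet • inftyPt = ptQ x := by
      rw [glQ_smul_infty _ _ _ _ _ (Or.inr one_ne_zero), ptQ, ptv_eq_ptv_iff, hnum]
      ring
    have e2 : glQ (x.num) 1 1 0 hdet • zeroPt = inftyPt := by
      rw [glQ_smul_zero _ _ _ _ _ (Or.inl one_ne_zero), inftyPt_eq, ptv_eq_ptv_iff]
      ring
    rw [DD, e1, e2, Xi_infty, Xi_ptQ, xiAux_one m x hd]
    have hfac : glQ (x.num) 1 1 0 hdet =
        glQ (x.num) (-1) 1 0 (by norm_num) * glQ 1 0 0 (-1) (by norm_num) := by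
      rw [glQ_mul _ _ _ _ _ _ _ _ _ _ (by push_cast; ring_nf; norm_num)]
      congr 1 <;> ring
    rw [hfac, mul_smul, hm (glQ 1 0 0 (-1) (by norm_num)) ⟨1, -1, by rw [glQ_val]⟩]
    abel

include hm in
lemma clA1 (x : ℚ) (hd : x.den ≠ 1) :
    Cl m (ptQ x) (ptQ ((pp x : ℚ) / (qp x : ℚ))) := by
  have hq0 : ((qp x : ℚ)) ≠ 0 := Nat.cast_ne_zero.2 (qp_pos x hd).ne'
  have hden0 : ((x.den : ℚ)) ≠ 0 := Nat.cast_ne_zero.2 x.den_nz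
  have hx : (x.num : ℚ) = x * x.den := ((div_eq_iff hden0).1 (Rat.num_div_den x))
  refine cl_of m hm (glQ (x.num) (pp x) (x.den) (qp x) (det_pq_Q x)) ?_ ?_ ?_
  · rw [glQ_smul_infty _ _ _ _ _ (Or.inr hden0), ptQ, ptv_eq_ptv_iff, mul_one, hx]
    ring
  · rw [glQ_smul_zero _ _ _ _ _ (Or.inr hq0), ptQ, ptv_eq_ptv_iff]
    field_simp
  · have e1 : glQ (x.num) (pp x) (x.den) (qp x) (det_pq_Q x) • inftyPt = ptQ x := by
      rw [glQ_smul_infty _ _ _ _ _ (Or.inr hden0), ptQ, ptv_eq_ptv_iff, mul_one, hx]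
      ring
    have e2 : glQ (x.num) (pp x) (x.den) (qp x) (det_pq_Q x) • zeroPt =
        ptQ ((pp x : ℚ) / (qp x : ℚ)) := by
      rw [glQ_smul_zero _ _ _ _ _ (Or.inr hq0), ptQ, ptv_eq_ptv_iff]
      field_simp
    rw [DD, e1, e2, Xi_ptQ, Xi_ptQ, xiAux_step m x hd]
    abel

include hm hS hR in
lemma clInfty (x : ℚ) : Cl m (ptQ x) inftyPt := by
  suffices H : ∀ n (x : ℚ), x.den = n → Cl m (ptQ x) inftyPt from H x.den x rfl
  intro n
  induction n using Nat.strong_induction_on with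
  | _ n IH =>
    intro x hxn
    by_cases hd : x.den = 1
    · exact clBase m hm hS x hd
    · have hpar : Cl m (ptQ ((pp x : ℚ) / (qp x : ℚ))) inftyPt := by
        refine IH ((pp x : ℚ) / (qp x : ℚ)).den ?_ _ rfl
        rw [← hxn]
        exact parent_den_lt x hd
      have hzx : ptQ ((pp x : ℚ) / (qp x : ℚ)) ≠ ptQ x := by
        intro hc
        have h4 := parent_den_lt x hd
        rw [ptQ_inj hc] at h4
        omega
      exact cl_triangle m hm hR (ptQ_ne_infty x) (Ne.symm (ptQ_ne_infty _)) hzx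
        (cl_symm m hS hpar) (cl_symm m hS (clA1 m hm x hd))

include hm hS hR in
lemma clAll (x y : ProjLine) (h : x ≠ y) : Cl m x y := by
  rcases point_cases x with hx | ⟨s, hs⟩ <;> rcases point_cases y with hy | ⟨t, ht⟩
  · exact absurd (hx.trans hy.symm) h
  · subst hx; subst ht
    exact cl_symm m hS (clInfty m hm hS hR t)
  · subst hs; subst hy
    exact clInfty m hm hS hR s
  · subst hs; subst ht
    exact cl_triangle m hm hR h (ptQ_ne_infty t) (Ne.symm (ptQ_ne_infty s))
      (clInfty m hm hS hR t) (cl_symm m hS (clInfty m hm hS hR s))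

include hm hS hR in
lemma DD_zero (g : GL (Fin 2) ℚ) : DD m g = 0 :=
  clAll m hm hS hR _ _ (smul_infty_ne_smul_zero g) g rfl rfl
lemma Xi_zeroPt : Xi m zeroPt = Smat • m := by
  rw [zeroPt_eq_ptQ, Xi_ptQ, xiAux_one m 0 rfl, Smat_eq]
  norm_num

/-- for each finite point there is a `g` with `g∞ = x`, `g0 = ∞`  -/
lemma exists_to_infty (x : ProjLine) (hx : x ≠ inftyPt) :
    ∃ g : GL (Fin 2) ℚ, g • inftyPt = x ∧ g • zeroPt = inftyPt := by
  rcases point_cases x with h | ⟨t, ht⟩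
  · exact absurd h hx
  · subst ht
    refine ⟨glQ t 1 1 0 (by norm_num), ?_, ?_⟩
    · rw [glQ_smul_infty _ _ _ _ _ (Or.inr one_ne_zero), ptQ]
    · rw [glQ_smul_zero _ _ _ _ _ (Or.inl one_ne_zero), inftyPt_eq]

include hm hS hR in
lemma Xi_smul (γ : GL (Fin 2) ℚ) (x : ProjLine) :
    Xi m (γ • x) = γ • Xi m x + Xi m (γ • inftyPt) := by
  rcases eq_or_ne x inftyPt with h | h
  · subst h; rw [Xi_infty, smul_zero, zero_add]
  · obtain ⟨g, e1, e2⟩ := exists_to_infty x h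
    have d1 := DD_zero m hm hS hR g
    rw [DD, e1, e2, Xi_infty] at d1
    have d2 := DD_zero m hm hS hR (γ * g)
    rw [DD, mul_smul, mul_smul, e1, e2, mul_smul] at d2
    have hXx : Xi m x = g • m := by
      have h' := sub_eq_zero.mp d1
      rwa [sub_zero] at h'
    rw [hXx]
    linear_combination (norm := abel_nf) d2

/-- `n • a` as an additive homomorphism in `n` -/
def toZHom (a : M) : ℤ →+ M := AddMonoidHom.mk' (fun n => n • a) (fun x y => add_zsmul a x y)

@[simp] lemma toZHom_apply (a : M) (n : ℤ) : toZHom a n = n • a := rfl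

/-- the underlying additive map of the modular symbol -/
def phiAux : (ProjLine →₀ ℤ) →+ M := Finsupp.liftAddHom (fun P => toZHom (Xi m P))

lemma phiAux_apply (D : ProjLine →₀ ℤ) : phiAux m D = D.sum (fun P n => n • Xi m P) := by
  rw [phiAux, Finsupp.liftAddHom_apply]
  rfl

lemma phiAux_single (P : ProjLine) (n : ℤ) : phiAux m (Finsupp.single P n) = n • Xi m P := by
  rw [phiAux, Finsupp.liftAddHom_apply_single, toZHom_apply]

/-- the modular symbol attached to `m` -/
def phi : Delta0 →+ M := (phiAux m).comp (AddSubgroup.subtype Delta0)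

include hS in
lemma phi_Dinf : phi m Dinf = m := by
  have : phi m Dinf = phiAux m (Finsupp.single inftyPt 1 - Finsupp.single zeroPt 1) := rfl
  rw [this, map_sub, phiAux_single, phiAux_single, Xi_infty, Xi_zeroPt, Smat_smul_m m hS]
  abel

lemma degree_eq_sum (D : ProjLine →₀ ℤ) : degree D = D.sum (fun _ n => n) := by
  rw [degree, Finsupp.liftAddHom_apply]
  rfl

include hm hS hR in
lemma phi_equivariant (γ : GL (Fin 2) ℚ) (D : Delta0) :
    phi m (smulDiv γ D) = γ • phi m D := by
  have hL : phi m (smulDiv γ D) = (D : ProjLine →₀ ℤ).sum (fun P n => n • Xi m (γ • P)) := by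
    show phiAux m (Finsupp.mapDomain _ _) = _
    rw [phiAux, Finsupp.liftAddHom_apply]
    exact Finsupp.sum_mapDomain_index (fun a => zero_zsmul _)
      (fun a b₁ b₂ => add_zsmul _ b₁ b₂)
  have hsplit : (D : ProjLine →₀ ℤ).sum (fun P n => n • Xi m (γ • P)) =
      (D : ProjLine →₀ ℤ).sum (fun P n => n • (γ • Xi m P)) +
      (D : ProjLine →₀ ℤ).sum (fun P n => n • Xi m (γ • inftyPt)) := by
    rw [← Finsupp.sum_add]
    apply Finsupp.sum_congr
    intro P _
    rw [Xi_smul m hm hS hR γ P, smul_add]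
  have hconst : (D : ProjLine →₀ ℤ).sum (fun P n => n • Xi m (γ • inftyPt)) = 0 := by
    have h1 : (D : ProjLine →₀ ℤ).sum (fun P n => n • Xi m (γ • inftyPt)) =
        toZHom (Xi m (γ • inftyPt)) ((D : ProjLine →₀ ℤ).sum (fun _ n => n)) := by
      rw [map_finsuppSum]
      rfl
    rw [h1, ← degree_eq_sum, AddMonoidHom.mem_ker.mp D.2, map_zero]
  have hmain : (D : ProjLine →₀ ℤ).sum (fun P n => n • (γ • Xi m P)) = γ • phi m D := by
    show _ = γ • phiAux m (D : ProjLine →₀ ℤ)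
    rw [phiAux_apply]
    have hms := map_finsuppSum (DistribMulAction.toAddMonoidHom M γ)
      (D : ProjLine →₀ ℤ) (fun P n => n • Xi m P)
    rw [DistribMulAction.toAddMonoidHom_apply] at hms
    rw [hms]
    apply Finsupp.sum_congr
    intro P _
    exact (map_zsmul (DistribMulAction.toAddMonoidHom M γ)
      ((D : ProjLine →₀ ℤ) P) (Xi m P)).symm
  rw [hL, hsplit, hconst, hmain, add_zero]

end ManinSec

lemma smulDiv_Dinf (g : GL (Fin 2) ℚ) :
    (smulDiv g Dinf : ProjLine →₀ ℤ) =
      Finsupp.single (g • inftyPt) 1 - Finsupp.single (g • zeroPt) 1 := by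
  show Finsupp.mapDomain (fun x => g • x)
      (Finsupp.single inftyPt 1 - Finsupp.single zeroPt 1) = _
  refine (map_sub (Finsupp.mapDomain.addMonoidHom (fun x : ProjLine => g • x))
    (Finsupp.single inftyPt (1 : ℤ)) (Finsupp.single zeroPt (1 : ℤ))).trans ?_
  show Finsupp.mapDomain _ (Finsupp.single inftyPt 1) -
      Finsupp.mapDomain _ (Finsupp.single zeroPt 1) = _
  rw [Finsupp.mapDomain_single, Finsupp.mapDomain_single]

lemma mem_Delta0_single (x y : ProjLine) :
    Finsupp.single x 1 - Finsupp.single y 1 ∈ Delta0 := by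
  rw [Delta0, AddMonoidHom.mem_ker, map_sub]
  simp [degree, Finsupp.liftAddHom_apply_single]

/-- the element `[x] - [∞]` of `Δ₀` -/
def Ex (x : ProjLine) : Delta0 :=
  ⟨Finsupp.single x 1 - Finsupp.single inftyPt 1, mem_Delta0_single x inftyPt⟩

lemma sum_Ex (D : Delta0) : D = (D : ProjLine →₀ ℤ).sum (fun x n => n • Ex x) := by
  apply Subtype.ext
  have h1 : ((((D : ProjLine →₀ ℤ).sum fun x n => n • Ex x) : Delta0) : ProjLine →₀ ℤ) =
      (D : ProjLine →₀ ℤ).sum (fun x n =>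
        n • (Finsupp.single x 1 - Finsupp.single inftyPt 1)) := by
    rw [show (((((D : ProjLine →₀ ℤ).sum fun x n => n • Ex x) : Delta0)) : ProjLine →₀ ℤ)
        = Delta0.subtype ((D : ProjLine →₀ ℤ).sum fun x n => n • Ex x) from rfl,
      map_finsuppSum]
    apply Finsupp.sum_congr
    intro x _
    rw [map_zsmul]
    rfl
  rw [h1]
  have h2 : (D : ProjLine →₀ ℤ).sum (fun x n =>
      n • (Finsupp.single x 1 - Finsupp.single inftyPt 1)) =
      (D : ProjLine →₀ ℤ).sum (fun x n => Finsupp.single x n) -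
      (D : ProjLine →₀ ℤ).sum (fun x n => Finsupp.single inftyPt n) := by
    rw [← Finsupp.sum_sub]
    apply Finsupp.sum_congr
    intro x _
    rw [smul_sub, Finsupp.smul_single, Finsupp.smul_single, smul_eq_mul, mul_one]
  have h3 : (D : ProjLine →₀ ℤ).sum (fun x n => Finsupp.single x n) = (D : ProjLine →₀ ℤ) :=
    Finsupp.sum_single _
  have h4 : (D : ProjLine →₀ ℤ).sum (fun x n => Finsupp.single inftyPt n) = 0 := by
    rw [show ((D : ProjLine →₀ ℤ).sum fun x n => Finsupp.single inftyPt n)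
        = (D : ProjLine →₀ ℤ).sum fun x n => Finsupp.singleAddHom inftyPt n from rfl,
      ← map_finsuppSum, ← degree_eq_sum, AddMonoidHom.mem_ker.mp D.2, map_zero]
  rw [h2, h3, h4, sub_zero]

/-- Let `m ∈ M` be fixed by every invertible diagonal matrix. Then a
`GL₂(ℚ)`-equivariant additive homomorphism `φ : Δ₀ → M` with `φ(D_∞) = m`
exists if and only if `m` satisfies the Manin relations `m + S·m = 0` and
`m + R·m + R²·m = 0`; moreover such a `φ` is unique when it exists. -/
theorem modular_symbol_exists_iff_manin_relations
    {M : Type*} [AddCommGroup M] [DistribMulAction (GL (Fin 2) ℚ) M]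
    (m : M)
    (hm : ∀ γ : GL (Fin 2) ℚ,
      (∃ a d : ℚ, (γ : Matrix (Fin 2) (Fin 2) ℚ) = !![a, 0; 0, d]) → γ • m = m) :
    ((∃ φ : Delta0 →+ M,
        (∀ (γ : GL (Fin 2) ℚ) (D : Delta0), φ (smulDiv γ D) = γ • φ D) ∧
        φ Dinf = m) ↔
      (m + Smat • m = 0 ∧ m + Rmat • m + Rmat ^ 2 • m = 0)) ∧
    (∀ φ₁ φ₂ : Delta0 →+ M,
      (∀ (γ : GL (Fin 2) ℚ) (D : Delta0), φ₁ (smulDiv γ D) = γ • φ₁ D) →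
      φ₁ Dinf = m →
      (∀ (γ : GL (Fin 2) ℚ) (D : Delta0), φ₂ (smulDiv γ D) = γ • φ₂ D) →
      φ₂ Dinf = m → φ₁ = φ₂) := by
  constructor
  · constructor
    · rintro ⟨φ, hequiv, hval⟩
      constructor
      · -- the S-relation
        have h1 : smulDiv Smat Dinf = -Dinf := by
          apply Subtype.ext
          rw [smulDiv_Dinf, Smat_smul_infty, Smat_smul_zero]
          show _ = -(Finsupp.single inftyPt 1 - Finsupp.single zeroPt 1)
          abel
        have h2 := hequiv Smat Dinf
        rw [h1, map_neg, hval] at h2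
        rw [← h2]
        abel
      · -- the R-relation
        have p1 : (Rmat ^ 2) • inftyPt = onePt := by
          rw [pow_two, mul_smul, Rmat_smul_infty, Rmat_smul_zero]
        have p2 : (Rmat ^ 2) • zeroPt = inftyPt := by
          rw [pow_two, mul_smul, Rmat_smul_zero, Rmat_smul_one]
        have h3 : Dinf + smulDiv Rmat Dinf + smulDiv (Rmat ^ 2) Dinf = 0 := by
          apply Subtype.ext
          show (Dinf : ProjLine →₀ ℤ) + (smulDiv Rmat Dinf : ProjLine →₀ ℤ) +
            (smulDiv (Rmat ^ 2) Dinf : ProjLine →₀ ℤ) = 0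
          rw [smulDiv_Dinf, smulDiv_Dinf, Rmat_smul_infty, Rmat_smul_zero, p1, p2]
          show (Finsupp.single inftyPt 1 - Finsupp.single zeroPt 1) + _ + _ = 0
          abel
        have h4 := congrArg φ h3
        rw [map_add, map_add, map_zero, hval, hequiv Rmat Dinf, hequiv (Rmat ^ 2) Dinf,
          hval] at h4
        exact h4
    · rintro ⟨h1, h2⟩
      exact ⟨phi m, phi_equivariant m hm h1 h2, phi_Dinf m h1⟩
  · intro φ₁ φ₂ he1 hv1 he2 hv2
    apply DFunLike.ext
    intro D
    have hps : ∀ x : ProjLine, φ₁ (Ex x) = φ₂ (Ex x) := by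
      intro x
      rcases eq_or_ne x inftyPt with h | h
      · have hzero : Ex x = 0 := by
          apply Subtype.ext
          show Finsupp.single x 1 - Finsupp.single inftyPt 1 = 0
          rw [h, sub_self]
        rw [hzero, map_zero, map_zero]
      · obtain ⟨g, e1, e2⟩ := exists_to_infty x h
        have hEx : smulDiv g Dinf = Ex x := by
          apply Subtype.ext
          rw [smulDiv_Dinf, e1, e2]
          rfl
        rw [← hEx, he1 g, he2 g, hv1, hv2]
    rw [sum_Ex D, map_finsuppSum, map_finsuppSum]
    apply Finsupp.sum_congr
    intro x _
    rw [map_zsmul, map_zsmul, hps x]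
end
end

section
/- Let Γ be a congruence subgroup of SL₂(ℤ) (i.e. Γ(N) ⊆ Γ ⊆ SL₂(ℤ) for some N ≥ 1) and let M be an abelian group, regarded as a trivial Γ-module. Then the map φ ↦ f_φ, where f_φ(Γγ) := φ(γ·D_∞) for γ ∈ SL₂(ℤ), is a well-defined group isomorphism from Symb_Γ(M) = {additive homomorphisms φ : Δ₀ → M with φ(γ·D) = φ(D) for all γ ∈ Γ} onto the group Man_Γ(M) of Manin symbols, i.e. functions f : Γ\SL₂(ℤ) → M satisfying f(x) + f(x·S) = 0 and f(x) + f(x·R) + f(x·R²) = 0 for every right coset x, where x·g denotes the coset Γγg and S = [[0,−1],[1,0]], R = [[0,−1],[1,−1]]. -/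
noncomputable section
open Matrix MatrixGroups

/-- the embedding `SL₂(ℤ) → GL₂(ℚ)` -/
def toGL2Q : Matrix.SpecialLinearGroup (Fin 2) ℤ →* GL (Fin 2) ℚ :=
  Matrix.SpecialLinearGroup.toGL.comp (Matrix.SpecialLinearGroup.map (Int.castRingHom ℚ))

/-- right multiplication `Γγ ↦ Γγg` on the set of right cosets `Γ\SL₂(ℤ)` -/
def cosetMul (Γ : Subgroup (Matrix.SpecialLinearGroup (Fin 2) ℤ))
    (x : Quotient (QuotientGroup.rightRel Γ)) (g : Matrix.SpecialLinearGroup (Fin 2) ℤ) :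
    Quotient (QuotientGroup.rightRel Γ) :=
  Quotient.map' (· * g)
    (fun a b h => by
      rw [QuotientGroup.rightRel_apply] at h ⊢
      simpa [_root_.mul_inv_rev, mul_assoc] using h) x

/-- the matrix `S = [[0,−1],[1,0]]` in `SL₂(ℤ)` -/
def Sz : Matrix.SpecialLinearGroup (Fin 2) ℤ :=
  ⟨!![0, -1; 1, 0], by norm_num [Matrix.det_fin_two_of]⟩

/-- the matrix `R = [[0,−1],[1,−1]]` in `SL₂(ℤ)` -/
def Rz : Matrix.SpecialLinearGroup (Fin 2) ℤ :=
  ⟨!![0, -1; 1, -1], by norm_num [Matrix.det_fin_two_of]⟩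

variable (Γ : Subgroup (Matrix.SpecialLinearGroup (Fin 2) ℤ))
variable (M : Type*) [AddCommGroup M]

/-- `Symb_Γ(M)`: the group of `M`-valued modular symbols for `Γ`, where `M`
is a trivial `Γ`-module: additive homomorphisms `φ : Δ₀ → M` with
`φ(γ·D) = φ(D)` for all `γ ∈ Γ`. -/
def SymbGroup : AddSubgroup (Delta0 →+ M) where
  carrier := {φ | ∀ γ ∈ Γ, ∀ D : Delta0, φ (smulDiv (toGL2Q γ) D) = φ D}
  zero_mem' := by intro γ hγ D; simp
  add_mem' := by
    intro a b ha hb γ hγ D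
    simp [ha γ hγ D, hb γ hγ D]
  neg_mem' := by
    intro a ha γ hγ D
    simp [ha γ hγ D]

private lemma sum3_eq_zero {p q r s t u : M}
    (h1 : p + r + t = 0) (h2 : q + s + u = 0) :
    (p + q) + (r + s) + (t + u) = 0 := by
  calc (p + q) + (r + s) + (t + u) = (p + r + t) + (q + s + u) := by abel
    _ = 0 := by rw [h1, h2, add_zero]

/-- `Man_Γ(M)`: the group of `M`-valued Manin symbols for `Γ`: functions
`f : Γ\SL₂(ℤ) → M` with `f(x) + f(x·S) = 0` and
`f(x) + f(x·R) + f(x·R²) = 0` for every right coset `x`. -/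
def ManGroup : AddSubgroup (Quotient (QuotientGroup.rightRel Γ) → M) where
  carrier := {f | ∀ x,
    f x + f (cosetMul Γ x Sz) = 0 ∧
    f x + f (cosetMul Γ x Rz) + f (cosetMul Γ x (Rz ^ 2)) = 0}
  zero_mem' := by intro x; simp
  add_mem' := by
    intro a b ha hb x
    obtain ⟨ha1, ha2⟩ := ha x
    obtain ⟨hb1, hb2⟩ := hb x
    refine ⟨?_, ?_⟩
    · simp only [Pi.add_apply]
      rw [add_add_add_comm, ha1, hb1, add_zero]
    · simp only [Pi.add_apply]
      exact sum3_eq_zero M ha2 hb2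
  neg_mem' := by
    intro a ha x
    obtain ⟨ha1, ha2⟩ := ha x
    refine ⟨?_, ?_⟩
    · simp only [Pi.neg_apply]
      rw [← neg_add, ha1, neg_zero]
    · simp only [Pi.neg_apply]
      rw [← neg_add, ← neg_add, ha2, neg_zero]

namespace ManinAux

local notation "SL2" => Matrix.SpecialLinearGroup (Fin 2) ℤ

lemma vecQ_ne_zero {p q : ℤ} (h : p ≠ 0 ∨ q ≠ 0) : (![(p:ℚ), (q:ℚ)] : Fin 2 → ℚ) ≠ 0 := by
  intro hv
  have h0 := congrFun hv 0
  have h1 := congrFun hv 1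
  simp at h0 h1
  rcases h with h | h
  · exact h (by exact_mod_cast h0)
  · exact h (by exact_mod_cast h1)

/-- the point `[p : q]` of `ℙ¹(ℚ)` for an integer vector -/
def ptZ (p q : ℤ) (h : p ≠ 0 ∨ q ≠ 0) : ProjLine :=
  Projectivization.mk ℚ ![(p:ℚ), (q:ℚ)] (vecQ_ne_zero h)

lemma ptZ_congr {p q p' q' : ℤ} (hp : p = p') (hq : q = q') (h : p ≠ 0 ∨ q ≠ 0)
    (h' : p' ≠ 0 ∨ q' ≠ 0) : ptZ p q h = ptZ p' q' h' := by subst hp; subst hq; rfl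

lemma ptZ_neg (p q : ℤ) (h : p ≠ 0 ∨ q ≠ 0) (h' : -p ≠ 0 ∨ -q ≠ 0) :
    ptZ (-p) (-q) h' = ptZ p q h := by
  rw [ptZ, ptZ, Projectivization.mk_eq_mk_iff']
  refine ⟨-1, ?_⟩
  funext i
  fin_cases i <;> simp

lemma inftyPt_eq : inftyPt = ptZ 1 0 (Or.inl one_ne_zero) := by
  rw [inftyPt, ptZ, Projectivization.mk_eq_mk_iff']
  exact ⟨1, by funext i; fin_cases i <;> simp⟩

lemma zeroPt_eq : zeroPt = ptZ 0 1 (Or.inr one_ne_zero) := by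
  rw [zeroPt, ptZ, Projectivization.mk_eq_mk_iff']
  exact ⟨1, by funext i; fin_cases i <;> simp⟩

lemma det_entries (g : SL2) : g.1 0 0 * g.1 1 1 - g.1 0 1 * g.1 1 0 = 1 := by
  have := g.2; rwa [Matrix.det_fin_two] at this

lemma mul_entries (g h : SL2) (i j : Fin 2) :
    (g * h).1 i j = g.1 i 0 * h.1 0 j + g.1 i 1 * h.1 1 j := by
  rw [Matrix.SpecialLinearGroup.coe_mul, Matrix.mul_apply, Fin.sum_univ_two]

lemma image_ne (g : SL2) {p q : ℤ} (h : p ≠ 0 ∨ q ≠ 0) :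
    g.1 0 0 * p + g.1 0 1 * q ≠ 0 ∨ g.1 1 0 * p + g.1 1 1 * q ≠ 0 := by
  have hd := det_entries g
  by_contra hc
  push_neg at hc
  obtain ⟨h1, h2⟩ := hc
  rcases h with h | h
  · apply h
    have : g.1 1 1 * (g.1 0 0 * p + g.1 0 1 * q) - g.1 0 1 * (g.1 1 0 * p + g.1 1 1 * q) = p := by
      linear_combination p * hd
    rw [h1, h2] at this; simpa using this.symm
  · apply h
    have : -g.1 1 0 * (g.1 0 0 * p + g.1 0 1 * q) + g.1 0 0 * (g.1 1 0 * p + g.1 1 1 * q) = q := by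
      linear_combination q * hd
    rw [h1, h2] at this; simpa using this.symm

lemma smul_ptZ (g : SL2) (p q : ℤ) (h : p ≠ 0 ∨ q ≠ 0) :
    toGL2Q g • ptZ p q h
      = ptZ (g.1 0 0 * p + g.1 0 1 * q) (g.1 1 0 * p + g.1 1 1 * q) (image_ne g h) := by
  show Projectivization.map _ (mulVecLin_injective (toGL2Q g)) _ = _
  rw [ptZ, Projectivization.map_mk]
  rw [ptZ]
  congr 1
  have hco : ((toGL2Q g : GL (Fin 2) ℚ) : Matrix (Fin 2) (Fin 2) ℚ)
      = (g.1).map (Int.cast : ℤ → ℚ) := rfl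
  rw [hco]
  funext i
  fin_cases i <;>
    simp [Matrix.mulVecLin_apply, Matrix.mulVec, dotProduct, Fin.sum_univ_two,
      Matrix.map_apply] <;> push_cast <;> ring

lemma col_ne (g : SL2) (j : Fin 2) : g.1 0 j ≠ 0 ∨ g.1 1 j ≠ 0 := by
  have hd := det_entries g
  by_contra hc
  push_neg at hc
  obtain ⟨h1, h2⟩ := hc
  fin_cases j
  · rw [show g.1 0 0 = 0 from h1, show g.1 1 0 = 0 from h2] at hd
    simp at hd
  · rw [show g.1 0 1 = 0 from h1, show g.1 1 1 = 0 from h2] at hd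
    simp at hd

lemma smul_inftyPt (g : SL2) :
    toGL2Q g • inftyPt = ptZ (g.1 0 0) (g.1 1 0) (col_ne g 0) := by
  rw [inftyPt_eq, smul_ptZ]
  exact ptZ_congr (by ring) (by ring) _ _

lemma smul_zeroPt (g : SL2) :
    toGL2Q g • zeroPt = ptZ (g.1 0 1) (g.1 1 1) (col_ne g 1) := by
  rw [zeroPt_eq, smul_ptZ]
  exact ptZ_congr (by ring) (by ring) _ _

lemma ptZ_infty (p : ℤ) (hp : p ≠ 0) (h : p ≠ 0 ∨ (0:ℤ) ≠ 0) : ptZ p 0 h = inftyPt := by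
  rw [inftyPt_eq, ptZ, ptZ, Projectivization.mk_eq_mk_iff']
  refine ⟨(p : ℚ), ?_⟩
  funext i
  fin_cases i <;> simp

lemma gen_pt (x : ProjLine) : ∃ (p q : ℤ) (h : p ≠ 0 ∨ q ≠ 0),
    IsCoprime p q ∧ 0 ≤ q ∧ x = ptZ p q h := by
  induction x using Projectivization.ind with
  | h v hv =>
  by_cases h1 : v 1 = 0
  · have h0 : v 0 ≠ 0 := by
      intro h0; apply hv; funext i; fin_cases i <;> simp [h0, h1]
    refine ⟨1, 0, Or.inl one_ne_zero, isCoprime_one_left, le_refl _, ?_⟩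
    rw [ptZ, Projectivization.mk_eq_mk_iff']
    refine ⟨v 0, ?_⟩
    funext i
    fin_cases i <;> simp [h1]
  · set r : ℚ := v 0 / v 1 with hr
    have hco : IsCoprime r.num (r.den : ℤ) := by
      rw [Int.isCoprime_iff_gcd_eq_one]
      exact r.reduced
    refine ⟨r.num, (r.den : ℤ), Or.inr (by exact_mod_cast r.den_nz), hco, by positivity, ?_⟩
    rw [ptZ, Projectivization.mk_eq_mk_iff']
    have hden : ((r.den : ℚ)) ≠ 0 := by exact_mod_cast r.den_nz
    refine ⟨v 1 / (r.den : ℚ), ?_⟩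
    funext i
    fin_cases i
    · show v 1 / (r.den : ℚ) * ((r.num : ℤ) : ℚ) = v 0
      push_cast
      rw [div_mul_eq_mul_div, mul_div_assoc, Rat.num_div_den, hr, mul_comm,
        div_mul_cancel₀ _ h1]
    · show v 1 / (r.den : ℚ) * ((r.den : ℕ) : ℚ) = v 1
      rw [div_mul_cancel₀ _ hden]


/-- `s`: the canonical inverse of `p` modulo `q`, in `[0, q)` -/
def sInv (q : ℕ) (p : ℤ) : ℕ := ZMod.val ((p : ZMod q)⁻¹)

lemma sInv_lt (q : ℕ) (hq : q ≠ 0) (p : ℤ) : sInv q p < q := by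
  haveI : NeZero q := ⟨hq⟩
  exact ZMod.val_lt _

def rOf (q : ℕ) (p : ℤ) : ℤ := (p * sInv q p - 1) / q

/-- build an element of `SL₂(ℤ)` from four entries, junk value `1` if determinant isn't 1 -/
def mkSL (p r q s : ℤ) : SL2 :=
  if h : p * s - r * q = 1 then ⟨!![p, r; q, s], by rw [Matrix.det_fin_two_of]; linarith⟩ else 1

lemma mkSL_coe {p r q s : ℤ} (h : p * s - r * q = 1) : (mkSL p r q s).1 = !![p, r; q, s] := by
  simp [mkSL, h]

variable {Γ : Subgroup SL2} {M : Type*} [AddCommGroup M]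

/-- the Manin transform: value of the modular symbol attached to `f` on the path
from the cusp `p/q` to `∞`, by induction on the denominator `q` -/
def psiP (f : Quotient (QuotientGroup.rightRel Γ) → M) : ℕ → ℤ → M
  | 0, _ => 0
  | (q+1), p => psiP f (sInv (q+1) p) (rOf (q+1) p) +
      f (Quotient.mk (QuotientGroup.rightRel Γ)
        (mkSL p (rOf (q+1) p) ((q:ℤ)+1) (sInv (q+1) p)))
  termination_by q _ => q
  decreasing_by exact Nat.lt_of_lt_of_le (sInv_lt (q+1) (Nat.succ_ne_zero q) p) (le_refl _)

/-- the key unimodular step: for `q > 0` and `p` coprime to `q`, there is `g ∈ SL₂(ℤ)`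
with first column `(p, q)`, second column a cusp with smaller denominator, computing
one step of the recursion for `psiP`. -/
lemma psiP_step (f : Quotient (QuotientGroup.rightRel Γ) → M) (p q : ℤ)
    (hco : IsCoprime p q) (hq : 0 < q) :
    ∃ g : SL2, g.1 0 0 = p ∧ g.1 1 0 = q ∧ 0 ≤ g.1 1 1 ∧ g.1 1 1 < q ∧
      IsCoprime (g.1 0 1) (g.1 1 1) ∧
      psiP f q.toNat p = psiP f (g.1 1 1).toNat (g.1 0 1) +
        f (Quotient.mk (QuotientGroup.rightRel Γ) g) := by
  obtain ⟨n, hn⟩ : ∃ n : ℕ, q.toNat = n + 1 :=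
    ⟨q.toNat - 1, by omega⟩
  have hqn : ((q.toNat : ℤ)) = q := Int.toNat_of_nonneg hq.le
  set s : ℕ := sInv q.toNat p with hs
  set r : ℤ := rOf q.toNat p with hrdef
  -- p * s ≡ 1 mod q
  haveI : NeZero q.toNat := ⟨by omega⟩
  have hqz : ((q : ZMod q.toNat)) = 0 := by
    rw [← hqn]
    exact_mod_cast ZMod.natCast_self q.toNat
  have hunit : IsUnit ((p : ℤ) : ZMod q.toNat) := by
    obtain ⟨u, v, huv⟩ := hco
    have : ((u : ZMod q.toNat)) * ((p : ZMod q.toNat)) = 1 := by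
      have := congrArg (fun z : ℤ => ((z : ZMod q.toNat))) huv
      push_cast at this
      rw [hqz] at this
      simpa using this
    exact IsUnit.of_mul_eq_one _ (by rw [mul_comm] at this; exact this)
  have hps : ((p : ZMod q.toNat)) * ((s : ℕ) : ZMod q.toNat) = 1 := by
    rw [hs, sInv, ZMod.natCast_rightInverse _]
    exact ZMod.mul_inv_of_unit _ hunit
  have hdvd : (q : ℤ) ∣ (p * (s : ℤ) - 1) := by
    rw [← hqn]
    rw [← ZMod.intCast_zmod_eq_zero_iff_dvd]
    push_cast
    rw [hps]  -- may need adjusting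
    ring
  have hr : r * q = p * (s : ℤ) - 1 := by
    rw [hrdef, rOf, ← hs, hqn]
    exact Int.ediv_mul_cancel hdvd
  have hdet : p * (s : ℤ) - r * q = 1 := by rw [hr]; ring
  have hslt : (s : ℤ) < q := by
    have := sInv_lt q.toNat (by omega) p
    omega
  refine ⟨mkSL p r q s, ?_, ?_, ?_, ?_, ?_, ?_⟩
  · rw [mkSL_coe hdet]; simp
  · rw [mkSL_coe hdet]; simp
  · rw [mkSL_coe hdet]
    have : ((s:ℤ)) ≥ 0 := Int.natCast_nonneg s
    simpa using this
  · rw [mkSL_coe hdet]; simpa using hslt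
  · rw [mkSL_coe hdet]
    have e1 : (!![p, r; q, (s:ℤ)] 1 1) = (s:ℤ) := by simp
    have e2 : (!![p, r; q, (s:ℤ)] 0 1) = r := by simp
    rw [e1, e2]
    exact ⟨-q, p, by linarith⟩
  · rw [mkSL_coe hdet]
    have e1 : (!![p, r; q, (s:ℤ)] 1 1) = (s:ℤ) := by simp
    have e2 : (!![p, r; q, (s:ℤ)] 0 1) = r := by simp
    rw [e1, e2, Int.toNat_natCast]
    conv_lhs => rw [hn, psiP]
    have h1 : sInv (n+1) p = s := by rw [hs, hn]
    have h2 : rOf (n+1) p = r := by rw [hrdef, hn]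
    have h3 : ((n:ℤ) + 1) = q := by
      rw [← hqn, hn]; push_cast; ring
    rw [h1, h2, h3]

/-- `psiF f` : the function `ψ` on `ℙ¹(ℚ)`, defined via `psiP` on the canonical reduced
fraction representing a point -/
def psiF (f : Quotient (QuotientGroup.rightRel Γ) → M) : ProjLine → M :=
  Projectivization.lift
    (fun v => if h : v.1 1 = 0 then 0 else
      psiP f ((v.1 0 / v.1 1).den) ((v.1 0 / v.1 1).num))
    (by
      rintro ⟨v, hv⟩ ⟨w, hw⟩ t rfl
      dsimp only
      have ht : t ≠ 0 := by
        rintro rfl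
        exact hv (by simp)
      by_cases h : w 1 = 0
      · simp [h]
      · have h' : t * w 1 ≠ 0 := mul_ne_zero ht h
        have hsmul0 : (t • w) 0 = t * w 0 := rfl
        have hsmul1 : (t • w) 1 = t * w 1 := rfl
        rw [dif_neg (by rw [hsmul1]; exact h'), dif_neg h, hsmul0, hsmul1,
          mul_div_mul_left _ _ ht])

lemma psiF_infty (f : Quotient (QuotientGroup.rightRel Γ) → M) : psiF f inftyPt = 0 := by
  rw [inftyPt, psiF, Projectivization.lift_mk]
  norm_num

lemma psiF_ptZ (f : Quotient (QuotientGroup.rightRel Γ) → M) (p q : ℤ)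
    (hco : IsCoprime p q) (hq : 0 < q) (h : p ≠ 0 ∨ q ≠ 0) :
    psiF f (ptZ p q h) = psiP f q.toNat p := by
  rw [ptZ, psiF, Projectivization.lift_mk]
  have hq0 : ((q : ℚ)) ≠ 0 := by exact_mod_cast hq.ne'
  rw [dif_neg (by simpa using hq0)]
  have hcop : Nat.Coprime p.natAbs q.natAbs := Int.isCoprime_iff_gcd_eq_one.mp hco
  simp only [Subtype.coe_mk, Matrix.cons_val_zero, Matrix.cons_val_one, Matrix.head_cons]
  have hnum : ((p:ℚ)/(q:ℚ)).num = p := Rat.num_div_eq_of_coprime hq hcop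
  have hden : (((p:ℚ)/(q:ℚ)).den : ℤ) = q := Rat.den_div_eq_of_coprime hq hcop
  rw [hnum]
  congr 1
  omega

/-- `valP f p q` : the value of `ψ` at the point `[p : q]`, as a total function -/
def valP (f : Quotient (QuotientGroup.rightRel Γ) → M) (p q : ℤ) : M :=
  if h : p ≠ 0 ∨ q ≠ 0 then psiF f (ptZ p q h) else 0

lemma valP_eq_psiF (f : Quotient (QuotientGroup.rightRel Γ) → M) (p q : ℤ)
    (h : p ≠ 0 ∨ q ≠ 0) : valP f p q = psiF f (ptZ p q h) := dif_pos h

lemma valP_neg (f : Quotient (QuotientGroup.rightRel Γ) → M) (p q : ℤ) :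
    valP f (-p) (-q) = valP f p q := by
  by_cases h : p ≠ 0 ∨ q ≠ 0
  · have h' : -p ≠ 0 ∨ -q ≠ 0 := by omega
    rw [valP_eq_psiF f p q h, valP_eq_psiF f _ _ h', ptZ_neg p q h h']
  · have h' : ¬(-p ≠ 0 ∨ -q ≠ 0) := by omega
    rw [valP, valP, dif_neg h, dif_neg h']

lemma valP_eq_psiP (f : Quotient (QuotientGroup.rightRel Γ) → M) (p q : ℤ)
    (hco : IsCoprime p q) (hq : 0 ≤ q) : valP f p q = psiP f q.toNat p := by
  rcases lt_or_eq_of_le hq with hq' | hq'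
  · have h : p ≠ 0 ∨ q ≠ 0 := Or.inr hq'.ne'
    rw [valP_eq_psiF f p q h, psiF_ptZ f p q hco hq']
  · subst hq'
    have hp : IsUnit p := (isCoprime_zero_right).mp hco
    have hp0 : p ≠ 0 := hp.ne_zero
    rw [valP_eq_psiF f p 0 (Or.inl hp0), ptZ_infty p hp0, psiF_infty,
      Int.toNat_zero, psiP]

lemma psiF_eq_valP_infty (f : Quotient (QuotientGroup.rightRel Γ) → M) (g : SL2) :
    psiF f (toGL2Q g • inftyPt) = valP f (g.1 0 0) (g.1 1 0) := by
  rw [smul_inftyPt, valP_eq_psiF f _ _ (col_ne g 0)]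

lemma psiF_eq_valP_zero (f : Quotient (QuotientGroup.rightRel Γ) → M) (g : SL2) :
    psiF f (toGL2Q g • zeroPt) = valP f (g.1 0 1) (g.1 1 1) := by
  rw [smul_zeroPt, valP_eq_psiF f _ _ (col_ne g 1)]

/-- `T = [[1,1],[0,1]]` -/
def Tz : SL2 := ⟨!![1, 1; 0, 1], by norm_num [Matrix.det_fin_two_of]⟩

/-- `T⁻¹ = [[1,-1],[0,1]]` -/
def Tz' : SL2 := ⟨!![1, -1; 0, 1], by norm_num [Matrix.det_fin_two_of]⟩

/-- `R² = [[-1,1],[-1,0]]` -/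
def Rz2 : SL2 := ⟨!![-1, 1; -1, 0], by norm_num [Matrix.det_fin_two_of]⟩

lemma Rz_sq : Rz ^ 2 = Rz2 := by
  apply Subtype.ext
  rw [pow_two]
  apply Matrix.ext
  intro i j
  rw [mul_entries]
  fin_cases i <;> fin_cases j <;> simp [Rz, Rz2]

lemma Rz2_mul_Sz : Rz2 * Sz = Tz := by
  apply Subtype.ext
  apply Matrix.ext
  intro i j
  rw [mul_entries]
  fin_cases i <;> fin_cases j <;> simp [Rz2, Sz, Tz]

lemma Tz'_mul_Tz : Tz' * Tz = 1 := by
  apply Subtype.ext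
  apply Matrix.ext
  intro i j
  rw [mul_entries]
  fin_cases i <;> fin_cases j <;>
    simp [Tz', Tz, Matrix.SpecialLinearGroup.coe_one, Matrix.one_apply]

lemma e_Sz0 (g : SL2) (i : Fin 2) : (g * Sz).1 i 0 = g.1 i 1 := by
  rw [mul_entries]; simp [Sz]
lemma e_Sz1 (g : SL2) (i : Fin 2) : (g * Sz).1 i 1 = -g.1 i 0 := by
  rw [mul_entries]; simp [Sz]
lemma e_Rz0 (g : SL2) (i : Fin 2) : (g * Rz).1 i 0 = g.1 i 1 := by
  rw [mul_entries]; simp [Rz]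
lemma e_Rz1 (g : SL2) (i : Fin 2) : (g * Rz).1 i 1 = -g.1 i 0 - g.1 i 1 := by
  rw [mul_entries]; simp [Rz]; ring
lemma e_Rz20 (g : SL2) (i : Fin 2) : (g * Rz2).1 i 0 = -g.1 i 0 - g.1 i 1 := by
  rw [mul_entries]; simp [Rz2]; ring
lemma e_Rz21 (g : SL2) (i : Fin 2) : (g * Rz2).1 i 1 = g.1 i 0 := by
  rw [mul_entries]; simp [Rz2]
lemma e_Tz'0 (g : SL2) (i : Fin 2) : (g * Tz').1 i 0 = g.1 i 0 := by
  rw [mul_entries]; simp [Tz']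
lemma e_Tz'1 (g : SL2) (i : Fin 2) : (g * Tz').1 i 1 = g.1 i 1 - g.1 i 0 := by
  rw [mul_entries]; simp [Tz']; ring

variable (f : Quotient (QuotientGroup.rightRel Γ) → M)

/-- the defect of the cocycle property for `ψ` at `g` -/
def PhiV (g : SL2) : M :=
  valP f (g.1 0 0) (g.1 1 0) - valP f (g.1 0 1) (g.1 1 1) -
    f (Quotient.mk (QuotientGroup.rightRel Γ) g)

section relations

variable (hfS : ∀ g : SL2, f (Quotient.mk (QuotientGroup.rightRel Γ) g) +
    f (Quotient.mk (QuotientGroup.rightRel Γ) (g * Sz)) = 0)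
variable (hfR : ∀ g : SL2, f (Quotient.mk (QuotientGroup.rightRel Γ) g) +
    f (Quotient.mk (QuotientGroup.rightRel Γ) (g * Rz)) +
    f (Quotient.mk (QuotientGroup.rightRel Γ) (g * Rz2)) = 0)

include hfS in
lemma phi_S (g : SL2) : PhiV f (g * Sz) = -PhiV f g := by
  have hS : f (Quotient.mk (QuotientGroup.rightRel Γ) (g * Sz)) =
      -f (Quotient.mk (QuotientGroup.rightRel Γ) g) :=
    eq_neg_of_add_eq_zero_right (hfS g)
  rw [PhiV, PhiV, e_Sz0, e_Sz0, e_Sz1, e_Sz1, valP_neg, hS]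
  abel

include hfR in
lemma phi_R (g : SL2) : PhiV f g + PhiV f (g * Rz) + PhiV f (g * Rz2) = 0 := by
  have hsum := hfR g
  rw [PhiV, PhiV, PhiV, e_Rz0, e_Rz0, e_Rz1, e_Rz1, e_Rz20, e_Rz20, e_Rz21, e_Rz21]
  have : valP f (g.1 0 0) (g.1 1 0) - valP f (g.1 0 1) (g.1 1 1) -
        f (Quotient.mk (QuotientGroup.rightRel Γ) g) +
      (valP f (g.1 0 1) (g.1 1 1) - valP f (-g.1 0 0 - g.1 0 1) (-g.1 1 0 - g.1 1 1) -
        f (Quotient.mk (QuotientGroup.rightRel Γ) (g * Rz))) +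
      (valP f (-g.1 0 0 - g.1 0 1) (-g.1 1 0 - g.1 1 1) - valP f (g.1 0 0) (g.1 1 0) -
        f (Quotient.mk (QuotientGroup.rightRel Γ) (g * Rz2))) =
      -(f (Quotient.mk (QuotientGroup.rightRel Γ) g) +
        f (Quotient.mk (QuotientGroup.rightRel Γ) (g * Rz)) +
        f (Quotient.mk (QuotientGroup.rightRel Γ) (g * Rz2))) := by abel
  rw [this, hsum, neg_zero]

include hfS hfR in
lemma phi_T (g : SL2) : PhiV f (g * Tz) = PhiV f g + PhiV f (g * Rz) := by
  have h1 : g * Tz = (g * Rz2) * Sz := by rw [mul_assoc, Rz2_mul_Sz]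
  have h2 := phi_R f hfR g
  have h3 : PhiV f (g * Rz2) = -(PhiV f g + PhiV f (g * Rz)) :=
    eq_neg_of_add_eq_zero_right h2
  rw [h1, phi_S f hfS, h3, neg_neg]

lemma dvd_small_zero (q x : ℤ) (h : q ∣ x) (h1 : -q < x) (h2 : x < q) : x = 0 := by
  have hq : 0 < q := by linarith
  rcases h with ⟨k, rfl⟩
  rcases lt_trichotomy k 0 with hk | hk | hk
  · exfalso; nlinarith
  · simp [hk]
  · exfalso; nlinarith

lemma base_A (g : SL2) (h0 : 0 ≤ g.1 1 1) (h1 : g.1 1 1 < g.1 1 0) : PhiV f g = 0 := by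
  have hdet := det_entries g
  have hq : 0 < g.1 1 0 := lt_of_le_of_lt h0 h1
  have hco : IsCoprime (g.1 0 0) (g.1 1 0) := ⟨g.1 1 1, -g.1 0 1, by linarith⟩
  obtain ⟨g', e00, e10, e11a, e11b, eco, heq⟩ := psiP_step f (g.1 0 0) (g.1 1 0) hco hq
  have hdet' := det_entries g'
  rw [e00, e10] at hdet'
  have hsd : g'.1 1 1 = g.1 1 1 := by
    have hdvd : g.1 1 0 ∣ g.1 0 0 * (g'.1 1 1 - g.1 1 1) :=
      ⟨g'.1 0 1 - g.1 0 1, by linarith⟩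
    have hdvd2 : g.1 1 0 ∣ (g'.1 1 1 - g.1 1 1) := hco.symm.dvd_of_dvd_mul_left hdvd
    have := dvd_small_zero (g.1 1 0) _ hdvd2 (by linarith) (by linarith)
    linarith
  have hsb : g'.1 0 1 = g.1 0 1 := by
    have hz : (g'.1 0 1 - g.1 0 1) * g.1 1 0 = 0 := by
      rw [hsd] at hdet'
      linarith
    rcases mul_eq_zero.mp hz with h | h
    · linarith
    · exact absurd h hq.ne'
  have hgg : g' = g := by
    apply Subtype.ext
    rw [Matrix.eta_fin_two g'.1, Matrix.eta_fin_two g.1, e00, e10, hsd, hsb]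
  rw [hgg] at heq
  have hv1 : valP f (g.1 0 0) (g.1 1 0) = psiP f (g.1 1 0).toNat (g.1 0 0) :=
    valP_eq_psiP f _ _ hco hq.le
  have hv2 : valP f (g.1 0 1) (g.1 1 1) = psiP f (g.1 1 1).toNat (g.1 0 1) :=
    valP_eq_psiP f _ _ ⟨-g.1 1 0, g.1 0 0, by linarith⟩ h0
  rw [PhiV, hv1, hv2, heq]
  abel

include hfS in
lemma base_T1 (g : SL2) (hc : g.1 1 0 = 0) (hd : g.1 1 1 = 1) : PhiV f g = 0 := by
  have hdet := det_entries g
  rw [hc, hd] at hdet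
  have ha : g.1 0 0 = 1 := by linarith
  obtain ⟨g', e00, e10, e11a, e11b, eco, heq⟩ :=
    psiP_step f (g.1 0 1) 1 isCoprime_one_right one_pos
  have hd0 : g'.1 1 1 = 0 := by omega
  have hdet' := det_entries g'
  rw [e00, e10, hd0] at hdet'
  have hb1 : g'.1 0 1 = -1 := by linarith
  have hg' : g' = g * Sz := by
    apply Subtype.ext
    rw [Matrix.eta_fin_two g'.1, Matrix.eta_fin_two (g * Sz).1,
      e_Sz0, e_Sz0, e_Sz1, e_Sz1, e00, e10, hd0, hb1, ha, hc, hd, neg_zero]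
  have hv1 : valP f (g.1 0 0) (g.1 1 0) = 0 := by
    rw [ha, hc, valP_eq_psiP f 1 0 isCoprime_one_left le_rfl, Int.toNat_zero, psiP]
  have hv2 : valP f (g.1 0 1) (g.1 1 1) =
      f (Quotient.mk (QuotientGroup.rightRel Γ) (g * Sz)) := by
    rw [hd, valP_eq_psiP f _ 1 isCoprime_one_right zero_le_one, heq, hd0, hb1, hg']
    rw [Int.toNat_zero, psiP]
    abel
  have hS : f (Quotient.mk (QuotientGroup.rightRel Γ) (g * Sz)) =
      -f (Quotient.mk (QuotientGroup.rightRel Γ) g) :=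
    eq_neg_of_add_eq_zero_right (hfS g)
  rw [PhiV, hv1, hv2, hS]
  abel

include hfS in
lemma base_T (g : SL2) (hc : g.1 1 0 = 0) : PhiV f g = 0 := by
  have hdet := det_entries g
  rw [hc] at hdet
  have hdu : g.1 0 0 = 1 ∧ g.1 1 1 = 1 ∨ g.1 0 0 = -1 ∧ g.1 1 1 = -1 :=
    Int.mul_eq_one_iff_eq_one_or_neg_one.mp (by linarith)
  rcases hdu with ⟨_, hd⟩ | ⟨_, hd⟩
  · exact base_T1 f hfS g hc hd
  · have hiter : PhiV f (g * Sz * Sz) = PhiV f g := by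
      rw [phi_S f hfS, phi_S f hfS, neg_neg]
    rw [← hiter]
    refine base_T1 f hfS _ ?_ ?_
    · simp only [e_Sz0, e_Sz1, neg_neg]; omega
    · simp only [e_Sz0, e_Sz1, neg_neg]; omega

include hfS in
lemma phi_A2 (g : SL2) (h1 : 0 ≤ g.1 1 0) (h2 : g.1 1 0 < -g.1 1 1) : PhiV f g = 0 := by
  have h3 : PhiV f (g * Sz * Sz * Sz) = 0 := by
    refine base_A f _ ?_ ?_
    · simp only [e_Sz0, e_Sz1, neg_neg]
      omega
    · simp only [e_Sz0, e_Sz1, neg_neg]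
      omega
  rw [phi_S f hfS, phi_S f hfS, phi_S f hfS] at h3
  simpa using h3

include hfS hfR in
lemma phi_P : ∀ n : ℕ, ∀ g : SL2, 1 ≤ g.1 1 0 → 0 ≤ g.1 1 1 →
    (g.1 1 1).toNat ≤ n → PhiV f g = 0 := by
  intro n
  induction n with
  | zero =>
    intro g h1 h2 h3
    exact base_A f g h2 (by omega)
  | succ n ih =>
    intro g h1 h2 h3
    by_cases hlt : g.1 1 1 < g.1 1 0
    · exact base_A f g h2 hlt
    · push_neg at hlt
      have hg : g = (g * Tz') * Tz := by rw [mul_assoc, Tz'_mul_Tz, mul_one]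
      rw [hg, phi_T f hfS hfR]
      have e1 : PhiV f (g * Tz') = 0 := by
        refine ih (g * Tz') ?_ ?_ ?_
        · rw [e_Tz'0]; exact h1
        · rw [e_Tz'1]; omega
        · rw [e_Tz'1]; omega
      have e2 : PhiV f ((g * Tz') * Rz) = 0 := by
        refine phi_A2 f hfS _ ?_ ?_
        · rw [e_Rz0, e_Tz'1]; omega
        · rw [e_Rz0, e_Rz1, e_Tz'0, e_Tz'1]; omega
      rw [e1, e2, add_zero]

include hfS hfR in
lemma phi_pos (g : SL2) (h : 1 ≤ g.1 1 0) : PhiV f g = 0 := by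
  rcases le_or_gt 0 (g.1 1 1) with hd | hd
  · exact phi_P f hfS hfR (g.1 1 1).toNat g h hd le_rfl
  · have h3 : PhiV f (g * Sz * Sz * Sz) = 0 := by
      refine phi_P f hfS hfR ((g * Sz * Sz * Sz).1 1 1).toNat _ ?_ ?_ le_rfl
      · simp only [e_Sz0, e_Sz1, neg_neg]; omega
      · simp only [e_Sz0, e_Sz1, neg_neg]; omega
    rw [phi_S f hfS, phi_S f hfS, phi_S f hfS] at h3
    simpa using h3

include hfS hfR in
lemma phi_all (g : SL2) : PhiV f g = 0 := by
  rcases lt_trichotomy (g.1 1 0) 0 with hc | hc | hc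
  · have hiter : PhiV f (g * Sz * Sz) = PhiV f g := by
      rw [phi_S f hfS, phi_S f hfS, neg_neg]
    rw [← hiter]
    refine phi_pos f hfS hfR _ ?_
    simp only [e_Sz0, e_Sz1, neg_neg]
    omega
  · exact base_T f hfS g hc
  · exact phi_pos f hfS hfR g hc

include hfS hfR in
lemma cocycle (g : SL2) :
    psiF f (toGL2Q g • inftyPt) = psiF f (toGL2Q g • zeroPt) +
      f (Quotient.mk (QuotientGroup.rightRel Γ) g) := by
  have h := phi_all f hfS hfR g
  rw [PhiV, sub_sub, sub_eq_zero] at h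
  rw [psiF_eq_valP_infty, psiF_eq_valP_zero, h]

end relations

/-- the degree-zero divisor `[x] - [y]` -/
def DivOf (x y : ProjLine) : Delta0 :=
  ⟨Finsupp.single x 1 - Finsupp.single y 1, by
    show _ ∈ degree.ker
    rw [AddMonoidHom.mem_ker, map_sub]
    simp [degree, Finsupp.liftAddHom_apply_single]⟩

lemma Dinf_eq : Dinf = DivOf inftyPt zeroPt := rfl

lemma smulDiv_DivOf (γ : GL (Fin 2) ℚ) (x y : ProjLine) :
    smulDiv γ (DivOf x y) = DivOf (γ • x) (γ • y) := by
  apply Subtype.ext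
  show Finsupp.mapDomain (fun z : ProjLine => γ • z) (Finsupp.single x 1 - Finsupp.single y 1)
    = Finsupp.single (γ • x) 1 - Finsupp.single (γ • y) 1
  have hrw : ∀ D : ProjLine →₀ ℤ, Finsupp.mapDomain (fun z : ProjLine => γ • z) D
      = Finsupp.mapDomain.addMonoidHom (fun z : ProjLine => γ • z) D := fun _ => rfl
  rw [hrw, map_sub, ← hrw, ← hrw, Finsupp.mapDomain_single, Finsupp.mapDomain_single]

lemma smulDiv_mul (g h : GL (Fin 2) ℚ) (D : Delta0) :
    smulDiv (g * h) D = smulDiv g (smulDiv h D) := by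
  apply Subtype.ext
  show Finsupp.mapDomain _ _ = Finsupp.mapDomain _ (Finsupp.mapDomain _ _)
  rw [← Finsupp.mapDomain_comp]
  congr 1
  funext z
  exact mul_smul g h z

lemma smulDiv_add (γ : GL (Fin 2) ℚ) (D E : Delta0) :
    smulDiv γ (D + E) = smulDiv γ D + smulDiv γ E := by
  apply Subtype.ext
  exact Finsupp.mapDomain_add

/-- the point `1 = [1:1]` -/
lemma Sz_smul_infty : toGL2Q Sz • inftyPt = zeroPt := by
  rw [smul_inftyPt, zeroPt_eq]
  exact ptZ_congr (by simp [Sz]) (by simp [Sz]) _ _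

lemma Sz_smul_zero : toGL2Q Sz • zeroPt = inftyPt := by
  rw [smul_zeroPt, inftyPt_eq]
  have h1 : Sz.1 0 1 = -1 := by simp [Sz]
  have h2 : Sz.1 1 1 = 0 := by simp [Sz]
  rw [show ptZ (Sz.1 0 1) (Sz.1 1 1) (col_ne Sz 1) = ptZ (-1) (-0) (by omega) from
    ptZ_congr (by simp [Sz]) (by simp [Sz]) _ _]
  rw [ptZ_neg 1 0 (Or.inl one_ne_zero) (by omega)]

lemma rel_S_div : Dinf + smulDiv (toGL2Q Sz) Dinf = 0 := by
  rw [Dinf_eq, smulDiv_DivOf, Sz_smul_infty, Sz_smul_zero]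
  apply Subtype.ext
  show (Finsupp.single inftyPt 1 - Finsupp.single zeroPt 1) +
    (Finsupp.single zeroPt 1 - Finsupp.single inftyPt 1) = 0
  abel

def onePt : ProjLine := ptZ 1 1 (Or.inl one_ne_zero)

lemma Rz_smul_infty : toGL2Q Rz • inftyPt = zeroPt := by
  rw [smul_inftyPt, zeroPt_eq]
  exact ptZ_congr (by simp [Rz]) (by simp [Rz]) _ _

lemma Rz_smul_zero : toGL2Q Rz • zeroPt = onePt := by
  rw [smul_zeroPt, onePt]
  rw [show ptZ (Rz.1 0 1) (Rz.1 1 1) (col_ne Rz 1) = ptZ (-1) (-1) (by omega) from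
    ptZ_congr (by simp [Rz]) (by simp [Rz]) _ _]
  exact ptZ_neg 1 1 (Or.inl one_ne_zero) (by omega)

lemma Rz2_smul_infty : toGL2Q Rz2 • inftyPt = onePt := by
  rw [smul_inftyPt, onePt]
  rw [show ptZ (Rz2.1 0 0) (Rz2.1 1 0) (col_ne Rz2 0) = ptZ (-1) (-1) (by omega) from
    ptZ_congr (by simp [Rz2]) (by simp [Rz2]) _ _]
  exact ptZ_neg 1 1 (Or.inl one_ne_zero) (by omega)

lemma Rz2_smul_zero : toGL2Q Rz2 • zeroPt = inftyPt := by
  rw [smul_zeroPt, inftyPt_eq]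
  rw [show ptZ (Rz2.1 0 1) (Rz2.1 1 1) (col_ne Rz2 1) = ptZ 1 0 (Or.inl one_ne_zero) from
    ptZ_congr (by simp [Rz2]) (by simp [Rz2]) _ _]

lemma rel_R_div : Dinf + smulDiv (toGL2Q Rz) Dinf + smulDiv (toGL2Q (Rz ^ 2)) Dinf = 0 := by
  rw [Rz_sq, Dinf_eq, smulDiv_DivOf, smulDiv_DivOf, Rz_smul_infty, Rz_smul_zero,
    Rz2_smul_infty, Rz2_smul_zero]
  apply Subtype.ext
  show (Finsupp.single inftyPt 1 - Finsupp.single zeroPt 1) +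
    (Finsupp.single zeroPt 1 - Finsupp.single onePt 1) +
    (Finsupp.single onePt 1 - Finsupp.single inftyPt 1) = 0
  abel

lemma degree_single (x : ProjLine) (n : ℤ) : degree (Finsupp.single x n) = n := by
  simp [degree, Finsupp.liftAddHom_apply_single]

/-- renormalization `D ↦ D - deg(D)·[∞]` as a hom into `Δ₀` -/
def normHom : (ProjLine →₀ ℤ) →+ Delta0 where
  toFun D := ⟨D - degree D • Finsupp.single inftyPt 1, by
    show _ ∈ degree.ker
    rw [AddMonoidHom.mem_ker, map_sub, map_zsmul, degree_single, smul_eq_mul, mul_one,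
      sub_self]⟩
  map_zero' := Subtype.ext (by simp)
  map_add' D E := Subtype.ext (by
    show (D + E) - degree (D + E) • Finsupp.single inftyPt 1 = _
    rw [map_add, add_smul]
    show _ = (D - degree D • Finsupp.single inftyPt 1) + (E - degree E • Finsupp.single inftyPt 1)
    abel)

lemma normHom_of_mem (D : Delta0) : normHom D.1 = D := by
  apply Subtype.ext
  have h0 : degree D.1 = 0 := AddMonoidHom.mem_ker.mp D.2
  show D.1 - degree D.1 • Finsupp.single inftyPt 1 = D.1
  rw [h0, zero_smul, sub_zero]

lemma normHom_single (x : ProjLine) (n : ℤ) :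
    normHom (Finsupp.single x n) = n • DivOf x inftyPt := by
  apply Subtype.ext
  show Finsupp.single x n - degree (Finsupp.single x n) • Finsupp.single inftyPt 1
    = n • (Finsupp.single x 1 - Finsupp.single inftyPt 1)
  rw [degree_single, smul_sub, Finsupp.smul_single, Finsupp.smul_single, smul_eq_mul, mul_one]

variable {M : Type*} [AddCommGroup M]

/-- lift a pointwise function on `ℙ¹(ℚ)` to divisors -/
def liftPt (ω : ProjLine → M) : (ProjLine →₀ ℤ) →+ M :=
  Finsupp.liftAddHom (fun x => zmultiplesHom M (ω x))

lemma liftPt_single (ω : ProjLine → M) (x : ProjLine) (n : ℤ) :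
    liftPt ω (Finsupp.single x n) = n • ω x := by
  rw [liftPt, Finsupp.liftAddHom_apply_single]; rfl

lemma hom_eq_liftPt (φ : Delta0 →+ M) (D : Delta0) :
    φ D = liftPt (fun x => φ (DivOf x inftyPt)) D.1 := by
  have hext : φ.comp normHom = liftPt (fun x => φ (DivOf x inftyPt)) := by
    apply Finsupp.addHom_ext
    intro x n
    rw [AddMonoidHom.comp_apply, normHom_single, map_zsmul, liftPt_single]
  calc φ D = φ (normHom D.1) := by rw [normHom_of_mem]
    _ = (φ.comp normHom) D.1 := rfl
    _ = liftPt (fun x => φ (DivOf x inftyPt)) D.1 := by rw [hext]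

variable {Γ : Subgroup (Matrix.SpecialLinearGroup (Fin 2) ℤ)}

lemma mk_mul_left_mem {γ : SL2} (hγ : γ ∈ Γ) (g : SL2) :
    Quotient.mk (QuotientGroup.rightRel Γ) (γ * g) = Quotient.mk (QuotientGroup.rightRel Γ) g := by
  apply Quotient.sound'
  rw [QuotientGroup.rightRel_apply]
  have : g * (γ * g)⁻¹ = γ⁻¹ := by group
  rw [this]
  exact inv_mem hγ

lemma DivOf_self (x : ProjLine) : DivOf x x = 0 := by
  apply Subtype.ext
  show Finsupp.single x 1 - Finsupp.single x 1 = 0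
  simp

lemma vanish_aux (φ : Delta0 →+ M)
    (hv : ∀ g : SL2, φ (smulDiv (toGL2Q g) Dinf) = 0) :
    ∀ n : ℕ, ∀ p q : ℤ, ∀ h : p ≠ 0 ∨ q ≠ 0, IsCoprime p q → 0 ≤ q → q.toNat ≤ n →
      φ (DivOf (ptZ p q h) inftyPt) = 0 := by
  intro n
  induction n with
  | zero =>
    intro p q h hco hq hn
    have hq0 : q = 0 := by omega
    subst hq0
    have hp : p ≠ 0 := by tauto
    rw [ptZ_infty p hp, DivOf_self, map_zero]
  | succ n ih =>
    intro p q h hco hq hn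
    rcases eq_or_lt_of_le hq with hq0 | hq0
    · have hq0' : q = 0 := hq0.symm
      subst hq0'
      have hp : p ≠ 0 := by tauto
      rw [ptZ_infty p hp, DivOf_self, map_zero]
    · obtain ⟨g, e00, e10, e11a, e11b, eco, -⟩ :=
        psiP_step (Γ := (⊥ : Subgroup (Matrix.SpecialLinearGroup (Fin 2) ℤ))) (M := ℤ) (fun _ => 0) p q hco hq0
      have hx : ptZ p q h = toGL2Q g • inftyPt := by
        rw [smul_inftyPt]
        exact ptZ_congr e00.symm e10.symm h _
      have hz : toGL2Q g • zeroPt = ptZ (g.1 0 1) (g.1 1 1) (col_ne g 1) := smul_zeroPt g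
      have hsplit : DivOf (ptZ p q h) inftyPt
          = smulDiv (toGL2Q g) Dinf + DivOf (toGL2Q g • zeroPt) inftyPt := by
        rw [Dinf_eq, smulDiv_DivOf, ← hx]
        apply Subtype.ext
        show Finsupp.single (ptZ p q h) 1 - Finsupp.single inftyPt 1
          = (Finsupp.single (ptZ p q h) 1 - Finsupp.single (toGL2Q g • zeroPt) 1) +
            (Finsupp.single (toGL2Q g • zeroPt) 1 - Finsupp.single inftyPt 1)
        abel
      rw [hsplit, map_add, hv g, zero_add, hz]
      exact ih (g.1 0 1) (g.1 1 1) (col_ne g 1) eco e11a (by omega)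

lemma vanish_on_DivOf (φ : Delta0 →+ M)
    (hv : ∀ g : SL2, φ (smulDiv (toGL2Q g) Dinf) = 0) (x : ProjLine) :
    φ (DivOf x inftyPt) = 0 := by
  obtain ⟨p, q, h, hco, hq, rfl⟩ := gen_pt x
  exact vanish_aux φ hv q.toNat p q h hco hq le_rfl

section relations2

variable (f : Quotient (QuotientGroup.rightRel Γ) → M)
variable (hfS : ∀ g : SL2, f (Quotient.mk (QuotientGroup.rightRel Γ) g) +
    f (Quotient.mk (QuotientGroup.rightRel Γ) (g * Sz)) = 0)
variable (hfR : ∀ g : SL2, f (Quotient.mk (QuotientGroup.rightRel Γ) g) +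
    f (Quotient.mk (QuotientGroup.rightRel Γ) (g * Rz)) +
    f (Quotient.mk (QuotientGroup.rightRel Γ) (g * Rz2)) = 0)

include hfS hfR in
lemma psiF_invariant_aux (γ : SL2) (hγ : γ ∈ Γ) :
    ∀ n : ℕ, ∀ p q : ℤ, ∀ h : p ≠ 0 ∨ q ≠ 0, IsCoprime p q → 0 ≤ q → q.toNat ≤ n →
      psiF f (toGL2Q γ • ptZ p q h) = psiF f (toGL2Q γ • inftyPt) + psiF f (ptZ p q h) := by
  intro n
  induction n with
  | zero =>
    intro p q h hco hq hn
    have hq0 : q = 0 := by omega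
    subst hq0
    have hp : p ≠ 0 := by tauto
    rw [ptZ_infty p hp, psiF_infty, add_zero]
  | succ n ih =>
    intro p q h hco hq hn
    rcases eq_or_lt_of_le hq with hq0 | hq0
    · have hq0' : q = 0 := hq0.symm
      subst hq0'
      have hp : p ≠ 0 := by tauto
      rw [ptZ_infty p hp, psiF_infty, add_zero]
    · obtain ⟨g, e00, e10, e11a, e11b, eco, -⟩ :=
        psiP_step (Γ := (⊥ : Subgroup (Matrix.SpecialLinearGroup (Fin 2) ℤ))) (M := ℤ) (fun _ => 0) p q hco hq0
      have hx : ptZ p q h = toGL2Q g • inftyPt := by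
        rw [smul_inftyPt]
        exact ptZ_congr e00.symm e10.symm h _
      have hz : toGL2Q g • zeroPt = ptZ (g.1 0 1) (g.1 1 1) (col_ne g 1) := smul_zeroPt g
      have hmul : ∀ (δ : SL2) (y : ProjLine),
          toGL2Q (γ * δ) • y = toGL2Q γ • (toGL2Q δ • y) := by
        intro δ y
        rw [_root_.map_mul, mul_smul]
      calc psiF f (toGL2Q γ • ptZ p q h)
          = psiF f (toGL2Q (γ * g) • inftyPt) := by rw [hx, hmul]
        _ = psiF f (toGL2Q (γ * g) • zeroPt) +
            f (Quotient.mk (QuotientGroup.rightRel Γ) (γ * g)) := cocycle f hfS hfR (γ * g)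
        _ = psiF f (toGL2Q γ • (toGL2Q g • zeroPt)) +
            f (Quotient.mk (QuotientGroup.rightRel Γ) g) := by
            rw [hmul, mk_mul_left_mem hγ]
        _ = (psiF f (toGL2Q γ • inftyPt) + psiF f (toGL2Q g • zeroPt)) +
            f (Quotient.mk (QuotientGroup.rightRel Γ) g) := by
            rw [hz]
            rw [ih (g.1 0 1) (g.1 1 1) (col_ne g 1) eco e11a (by omega)]
        _ = psiF f (toGL2Q γ • inftyPt) + psiF f (ptZ p q h) := by
            rw [hx, cocycle f hfS hfR g]
            abel

include hfS hfR in
lemma psiF_invariant (γ : SL2) (hγ : γ ∈ Γ) (x : ProjLine) :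
    psiF f (toGL2Q γ • x) = psiF f (toGL2Q γ • inftyPt) + psiF f x := by
  obtain ⟨p, q, h, hco, hq, rfl⟩ := gen_pt x
  exact psiF_invariant_aux f hfS hfR γ hγ q.toNat p q h hco hq le_rfl

end relations2

section assembly

variable (Γ : Subgroup (Matrix.SpecialLinearGroup (Fin 2) ℤ)) (M : Type*) [AddCommGroup M]

lemma cosetMul_mk (g h : SL2) :
    cosetMul Γ (Quotient.mk (QuotientGroup.rightRel Γ) g) h
      = Quotient.mk (QuotientGroup.rightRel Γ) (g * h) := rfl

lemma smulDiv_zero' (γ : GL (Fin 2) ℚ) : smulDiv γ (0 : Delta0) = 0 := by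
  apply Subtype.ext
  show Finsupp.mapDomain (fun z : ProjLine => γ • z) ((0 : Delta0) : ProjLine →₀ ℤ)
    = ((0 : Delta0) : ProjLine →₀ ℤ)
  rw [ZeroMemClass.coe_zero, Finsupp.mapDomain_zero]

/-- the Manin symbol attached to a modular symbol -/
def toManFun (φ : SymbGroup Γ M) : Quotient (QuotientGroup.rightRel Γ) → M :=
  fun x => Quotient.liftOn' x (fun g => φ.1 (smulDiv (toGL2Q g) Dinf))
    (by
      intro a b hab
      rw [QuotientGroup.rightRel_apply] at hab
      have hb : b = (b * a⁻¹) * a := by group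
      rw [hb, _root_.map_mul, smulDiv_mul, φ.2 (b * a⁻¹) hab])

lemma toManFun_mk (φ : SymbGroup Γ M) (g : SL2) :
    toManFun Γ M φ (Quotient.mk (QuotientGroup.rightRel Γ) g)
      = φ.1 (smulDiv (toGL2Q g) Dinf) := rfl

lemma toManFun_mem (φ : SymbGroup Γ M) : toManFun Γ M φ ∈ ManGroup Γ M := by
  intro x
  induction x using Quotient.ind with
  | _ g => ?_
  constructor
  · rw [cosetMul_mk, toManFun_mk, toManFun_mk, _root_.map_mul, smulDiv_mul, ← map_add,
      ← smulDiv_add, rel_S_div, smulDiv_zero', map_zero]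
  · rw [cosetMul_mk, cosetMul_mk, toManFun_mk, toManFun_mk, toManFun_mk,
      _root_.map_mul, _root_.map_mul, smulDiv_mul, smulDiv_mul, ← map_add, ← map_add,
      ← smulDiv_add, ← smulDiv_add, rel_R_div, smulDiv_zero', map_zero]

/-- the homomorphism from modular symbols to Manin symbols -/
def toManHom : SymbGroup Γ M →+ ManGroup Γ M :=
  AddMonoidHom.mk' (fun φ => ⟨toManFun Γ M φ, toManFun_mem Γ M φ⟩)
    (by
      intro φ χ
      apply Subtype.ext
      funext x
      induction x using Quotient.ind with
      | _ g => ?_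
      show toManFun Γ M (φ + χ) (Quotient.mk (QuotientGroup.rightRel Γ) g)
        = toManFun Γ M φ (Quotient.mk (QuotientGroup.rightRel Γ) g)
          + toManFun Γ M χ (Quotient.mk (QuotientGroup.rightRel Γ) g)
      rw [toManFun_mk, toManFun_mk, toManFun_mk]
      rfl)

lemma toMan_inj : Function.Injective (toManHom Γ M) := by
  rw [injective_iff_map_eq_zero]
  intro φ hφ
  have hv : ∀ g : SL2, φ.1 (smulDiv (toGL2Q g) Dinf) = 0 := by
    intro g
    have h2 := congrArg (fun F : ManGroup Γ M => F.1 (Quotient.mk (QuotientGroup.rightRel Γ) g)) hφ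
    exact h2
  apply Subtype.ext
  show φ.1 = 0
  apply AddMonoidHom.ext
  intro D
  rw [hom_eq_liftPt φ.1 D]
  have hz : (fun x => φ.1 (DivOf x inftyPt)) = fun _ => (0:M) :=
    funext (fun x => vanish_on_DivOf φ.1 hv x)
  rw [hz]
  have hl : liftPt (fun _ : ProjLine => (0:M)) = 0 := by
    apply Finsupp.addHom_ext
    intro x n
    simp [liftPt_single]
  rw [hl]
  rfl

lemma toMan_surj : Function.Surjective (toManHom Γ M) := by
  rintro ⟨f, hf⟩
  have hfS : ∀ g : SL2, f (Quotient.mk (QuotientGroup.rightRel Γ) g) +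
      f (Quotient.mk (QuotientGroup.rightRel Γ) (g * Sz)) = 0 := by
    intro g
    have h := (hf (Quotient.mk (QuotientGroup.rightRel Γ) g)).1
    rwa [cosetMul_mk] at h
  have hfR : ∀ g : SL2, f (Quotient.mk (QuotientGroup.rightRel Γ) g) +
      f (Quotient.mk (QuotientGroup.rightRel Γ) (g * Rz)) +
      f (Quotient.mk (QuotientGroup.rightRel Γ) (g * Rz2)) = 0 := by
    intro g
    have h := (hf (Quotient.mk (QuotientGroup.rightRel Γ) g)).2
    rwa [cosetMul_mk, cosetMul_mk, Rz_sq] at h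
  let φ0 : Delta0 →+ M := (liftPt (psiF f)).comp Delta0.subtype
  have hφmem : φ0 ∈ SymbGroup Γ M := by
    intro γ hγ D
    have h1 : (liftPt (psiF f)).comp (Finsupp.mapDomain.addMonoidHom
          (fun z : ProjLine => toGL2Q γ • z))
        = liftPt (psiF f) + (zmultiplesHom M (psiF f (toGL2Q γ • inftyPt))).comp degree := by
      apply Finsupp.addHom_ext
      intro x n
      simp only [AddMonoidHom.comp_apply, AddMonoidHom.add_apply]
      rw [show Finsupp.mapDomain.addMonoidHom (fun z : ProjLine => toGL2Q γ • z)
          (Finsupp.single x n)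
        = Finsupp.mapDomain (fun z : ProjLine => toGL2Q γ • z) (Finsupp.single x n) from rfl]
      rw [Finsupp.mapDomain_single, liftPt_single, liftPt_single, degree_single,
        zmultiplesHom_apply, psiF_invariant f hfS hfR γ hγ x, smul_add]
      abel
    have hdeg : degree D.1 = 0 := AddMonoidHom.mem_ker.mp D.2
    show liftPt (psiF f) ((smulDiv (toGL2Q γ) D).1) = liftPt (psiF f) D.1
    have h2 : liftPt (psiF f) ((smulDiv (toGL2Q γ) D).1)
        = ((liftPt (psiF f)).comp (Finsupp.mapDomain.addMonoidHom
            (fun z : ProjLine => toGL2Q γ • z))) D.1 := rfl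
    rw [h2, h1]
    show liftPt (psiF f) D.1 + degree D.1 • psiF f (toGL2Q γ • inftyPt) = liftPt (psiF f) D.1
    rw [hdeg, zero_smul, add_zero]
  refine ⟨⟨φ0, hφmem⟩, ?_⟩
  apply Subtype.ext
  funext x
  induction x using Quotient.ind with
  | _ g => ?_
  show toManFun Γ M ⟨φ0, hφmem⟩ (Quotient.mk (QuotientGroup.rightRel Γ) g)
    = f (Quotient.mk (QuotientGroup.rightRel Γ) g)
  rw [toManFun_mk]
  show liftPt (psiF f) ((smulDiv (toGL2Q g) Dinf).1) = f (Quotient.mk (QuotientGroup.rightRel Γ) g)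
  rw [show (smulDiv (toGL2Q g) Dinf) = DivOf (toGL2Q g • inftyPt) (toGL2Q g • zeroPt) by
    rw [Dinf_eq, smulDiv_DivOf]]
  show liftPt (psiF f) (Finsupp.single (toGL2Q g • inftyPt) 1
    - Finsupp.single (toGL2Q g • zeroPt) 1) = _
  rw [map_sub, liftPt_single, liftPt_single, one_smul, one_smul, cocycle f hfS hfR g]
  abel

end assembly

end ManinAux
/-- For a congruence subgroup `Γ ≤ SL₂(ℤ)` and a trivial `Γ`-module `M`, the map
`φ ↦ f_φ`, `f_φ(Γγ) = φ(γ·D_∞)`, is a group isomorphism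
`Symb_Γ(M) ≅ Man_Γ(M)`. -/
theorem symb_equiv_manin
    (hΓ : ∃ N : ℕ, 0 < N ∧ CongruenceSubgroup.Gamma N ≤ Γ) :
    ∃ e : SymbGroup Γ M ≃+ ManGroup Γ M,
      ∀ (φ : SymbGroup Γ M) (γ : Matrix.SpecialLinearGroup (Fin 2) ℤ),
        (e φ).1 (Quotient.mk (QuotientGroup.rightRel Γ) γ)
          = φ.1 (smulDiv (toGL2Q γ) Dinf) := by
  refine ⟨AddEquiv.ofBijective (ManinAux.toManHom Γ M)
    ⟨ManinAux.toMan_inj Γ M, ManinAux.toMan_surj Γ M⟩, fun φ γ => rfl⟩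
end
end
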